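/- arXiv:2011.13712 — 11 statements merged into one kernel-verified Lean document; each statement's English description precedes it below -/
import Mathlib

section
/- For every α ∈ [0,1), every a ∈ ℂ, every γ ∈ ℝ and every energy E > 0, the transmission and reflection coefficients of the type-II_a transmission protocol satisfy T(α,a,γ,E) + R(α,a,γ,E) = 1 (conservation of the scattered flux). -/
open Filter Topology

/-- The denominator `D(α,a,γ,E)` of the scattering amplitudes for the type-`II_a`
transmission protocol across the Grushin singularity. -/
noncomputable def Dcoef (α : ℝ) (a : ℂ) (γ E : ℝ) : ℂ :=
  ((E ^ ((1 + α) / 2) * Real.Gamma ((1 - α) / 2) * (1 + ‖a‖ ^ 2) : ℝ) : ℂ)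
    + Complex.I * (γ : ℂ) * (((2 : ℝ) ^ (1 + α) : ℝ) : ℂ)
      * Complex.exp (Complex.I * (Real.pi : ℂ) * (α : ℂ) / 2)
      * ((Real.Gamma ((3 + α) / 2) : ℝ) : ℂ)

/-- The transmission coefficient `T(α,a,γ,E)`. -/
noncomputable def Tcoef (α : ℝ) (a : ℂ) (γ E : ℝ) : ℝ :=
  ‖((E ^ ((1 + α) / 2) * Real.Gamma ((1 - α) / 2) : ℝ) : ℂ)
      * (1 + Complex.exp (Complex.I * (Real.pi : ℂ) * (α : ℂ)))
      * (starRingEnd ℂ a) / Dcoef α a γ E‖ ^ 2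

/-- The reflection coefficient `R(α,a,γ,E)`. -/
noncomputable def Rcoef (α : ℝ) (a : ℂ) (γ E : ℝ) : ℝ :=
  ‖(((E ^ ((1 + α) / 2) * Real.Gamma ((1 - α) / 2) : ℝ) : ℂ)
      * (1 - ((‖a‖ ^ 2 : ℝ) : ℂ) * Complex.exp (Complex.I * (Real.pi : ℂ) * (α : ℂ)))
      + Complex.I * (γ : ℂ) * (((2 : ℝ) ^ (1 + α) : ℝ) : ℂ)
        * Complex.exp (Complex.I * (Real.pi : ℂ) * (α : ℂ) / 2)
        * ((Real.Gamma ((3 + α) / 2) : ℝ) : ℂ)) / Dcoef α a γ E‖ ^ 2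

private lemma flux_key (g c : ℝ) (w a : ℂ) (hw : Complex.normSq w = 1) :
    Complex.normSq ((g:ℂ) * (1 + w^2) * (starRingEnd ℂ a))
      + Complex.normSq ((g:ℂ) * (1 - (Complex.normSq a : ℂ) * w^2) + Complex.I * c * w)
      = Complex.normSq (((g * (1 + Complex.normSq a) : ℝ) : ℂ) + Complex.I * c * w) := by
  simp only [pow_two, Complex.normSq_apply, Complex.add_re, Complex.add_im, Complex.mul_re,
    Complex.mul_im, Complex.one_re, Complex.one_im, Complex.sub_re, Complex.sub_im,
    Complex.ofReal_re, Complex.ofReal_im, Complex.I_re, Complex.I_im, Complex.conj_re,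
    Complex.conj_im] at *
  linear_combination (g^2*(a.re^2+a.im^2)*(1+a.re^2+a.im^2)*(w.re^2+w.im^2+1)
    - 2*c*g*(a.re^2+a.im^2)*w.im) * hw

/-- conservation of the scattered flux `T + R = 1` for the type-`II_a`
transmission protocol. -/
theorem flux_conservation (α : ℝ) (hα : α ∈ Set.Ico (0 : ℝ) 1) (a : ℂ) (γ : ℝ)
    (E : ℝ) (hE : 0 < E) :
    Tcoef α a γ E + Rcoef α a γ E = 1 := by
  obtain ⟨hα0, hα1⟩ := hα
  have hpi := Real.pi_pos
  set g : ℝ := E ^ ((1 + α) / 2) * Real.Gamma ((1 - α) / 2) with hgdef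
  set c : ℝ := γ * (2 : ℝ) ^ (1 + α) * Real.Gamma ((3 + α) / 2) with hcdef
  set w : ℂ := Complex.exp (Complex.I * (Real.pi : ℂ) * (α : ℂ) / 2) with hwdef
  have hg : 0 < g :=
    mul_pos (Real.rpow_pos_of_pos hE _) (Real.Gamma_pos_of_pos (by linarith))
  have harg : Complex.I * (Real.pi : ℂ) * (α : ℂ) / 2
      = ((Real.pi * α / 2 : ℝ) : ℂ) * Complex.I := by push_cast; ring
  have hw1 : Complex.normSq w = 1 := by
    rw [Complex.normSq_eq_norm_sq, hwdef, harg, Complex.norm_exp]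
    simp
  have hwre : w.re = Real.cos (Real.pi * α / 2) := by
    rw [hwdef, harg, Complex.exp_ofReal_mul_I_re]
  have hcos : 0 < Real.cos (Real.pi * α / 2) := by
    apply Real.cos_pos_of_mem_Ioo
    constructor
    · nlinarith
    · nlinarith
  have hw2 : Complex.exp (Complex.I * (Real.pi : ℂ) * (α : ℂ)) = w ^ 2 := by
    rw [hwdef, pow_two, ← Complex.exp_add]
    ring_nf
  have hc' : Complex.I * (γ:ℂ) * (((2:ℝ) ^ (1 + α) : ℝ) : ℂ) * w
      * ((Real.Gamma ((3 + α) / 2) : ℝ) : ℂ) = Complex.I * (c : ℂ) * w := by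
    rw [hcdef]; push_cast; ring
  have hDeq : Dcoef α a γ E = ((g * (1 + Complex.normSq a) : ℝ) : ℂ) + Complex.I * c * w := by
    rw [Dcoef, Complex.sq_norm, ← hwdef, hc', ← hgdef]
  have hDne : Dcoef α a γ E ≠ 0 := by
    rw [hDeq]
    intro h
    rw [Complex.ext_iff] at h
    simp only [Complex.add_re, Complex.add_im, Complex.mul_re, Complex.mul_im,
      Complex.ofReal_re, Complex.ofReal_im, Complex.I_re, Complex.I_im,
      Complex.zero_re, Complex.zero_im] at h
    obtain ⟨h1, h2⟩ := h
    have hn := Complex.normSq_nonneg a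
    have hc0 : c = 0 := by
      rcases mul_eq_zero.1 (by nlinarith [h2] : c * w.re = 0) with hc | hre
      · exact hc
      · rw [hwre] at hre; linarith
    rw [hc0] at h1
    nlinarith
  have hT : Tcoef α a γ E
      = Complex.normSq ((g:ℂ) * (1 + w^2) * (starRingEnd ℂ a)) / Complex.normSq (Dcoef α a γ E) := by
    rw [Tcoef, norm_div, div_pow, Complex.sq_norm, Complex.sq_norm, hw2, ← hgdef]
  have hR : Rcoef α a γ E
      = Complex.normSq ((g:ℂ) * (1 - (Complex.normSq a : ℂ) * w^2) + Complex.I * c * w)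
        / Complex.normSq (Dcoef α a γ E) := by
    rw [Rcoef, norm_div, div_pow, Complex.sq_norm, Complex.sq_norm, hw2, Complex.sq_norm,
      ← hwdef, hc', ← hgdef]
  rw [hT, hR, ← add_div, flux_key g c w a hw1, ← hDeq, div_self]
  simpa using hDne
end

section
/- Let α ∈ [0,1), E > 0 and ν := (1+α)/2, and define u(x) := √x · K_ν(x√E) for x > 0. Then u is twice differentiable on (0,∞) and satisfies the eigenvalue equation −u''(x) + (α(2+α)/(4x²))·u(x) = −E·u(x) for every x > 0 (i.e., u is a generalised eigenfunction at energy −E of the zero-mode fibre operator −d²/dx² + α(2+α)/(4x²)). -/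
open Filter Topology MeasureTheory

/-- The modified Bessel function of the second kind `K_ν(x)`, for `x > 0`, defined by
the integral representation `K_ν(x) = ∫₀^∞ exp(−x cosh t) cosh(ν t) dt`. -/
noncomputable def besselK (ν x : ℝ) : ℝ :=
  ∫ t in Set.Ioi (0 : ℝ), Real.exp (-x * Real.cosh t) * Real.cosh (ν * t)

namespace BesselAux
open Set

noncomputable def B (ν : ℝ) (k : ℕ) (x : ℝ) : ℝ :=
  ∫ t in Set.Ioi (0 : ℝ),
    (-Real.cosh t) ^ k * (Real.exp (-x * Real.cosh t) * Real.cosh (ν * t))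

lemma besselK_eq (ν x : ℝ) : besselK ν x = B ν 0 x := by
  simp [besselK, B]

lemma key (a b t : ℝ) (hb : 0 < b) (ht : 0 ≤ t) :
    a * t - b * Real.exp t ≤ a ^ 2 / b := by
  have h1 : 1 + t / 2 ≤ Real.exp (t / 2) := by
    have := Real.add_one_le_exp (t / 2); linarith
  have h2 : Real.exp (t / 2) ^ 2 = Real.exp t := by
    rw [sq, ← Real.exp_add]; ring_nf
  have h3 : (1 + t / 2) ^ 2 ≤ Real.exp t := by
    rw [← h2]
    exact pow_le_pow_left₀ (by linarith) h1 2
  rw [le_div_iff₀ hb]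
  have h3bb : b * b * (1 + t / 2) ^ 2 ≤ b * b * Real.exp t :=
    mul_le_mul_of_nonneg_left h3 (mul_nonneg hb.le hb.le)
  nlinarith [sq_nonneg (b * t / 2 - a), mul_nonneg (mul_nonneg hb.le hb.le) ht,
    mul_nonneg hb.le hb.le]

lemma cosh_le_exp {t : ℝ} (ht : 0 ≤ t) : Real.cosh t ≤ Real.exp t := by
  rw [Real.cosh_eq]
  have : Real.exp (-t) ≤ Real.exp t := Real.exp_le_exp.2 (by linarith)
  linarith

lemma exp_le_two_cosh (t : ℝ) : Real.exp t ≤ 2 * Real.cosh t := by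
  rw [Real.cosh_eq]
  have := (Real.exp_pos (-t)).le
  linarith

lemma abs_sinh_le_cosh (t : ℝ) : |Real.sinh t| ≤ Real.cosh t := by
  have h := Real.cosh_sq t
  have h2 := Real.cosh_pos t
  nlinarith [abs_nonneg (Real.sinh t), sq_abs (Real.sinh t)]

/-- Pointwise exponential bound for the integrands. -/
lemma pointwise_bound (ν c : ℝ) (k : ℕ) (hc : 0 < c) {t : ℝ} (ht : 0 ≤ t) :
    Real.cosh t ^ k * (Real.exp (-c * Real.cosh t) * Real.cosh (ν * t)) ≤
      Real.exp (((k : ℝ) + |ν| + 1) ^ 2 / (c / 2)) * Real.exp (-t) := by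
  have h1 : Real.cosh t ^ k ≤ Real.exp ((k : ℝ) * t) := by
    calc Real.cosh t ^ k ≤ Real.exp t ^ k := pow_le_pow_left₀ (Real.cosh_pos t).le (cosh_le_exp ht) k
    _ = Real.exp ((k : ℝ) * t) := by rw [← Real.exp_nat_mul]
  have h2 : Real.cosh (ν * t) ≤ Real.exp (|ν| * t) := by
    calc Real.cosh (ν * t) = Real.cosh |ν * t| := (Real.cosh_abs _).symm
    _ ≤ Real.exp |ν * t| := cosh_le_exp (abs_nonneg _)
    _ = Real.exp (|ν| * t) := by rw [abs_mul, abs_of_nonneg ht]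
  have h3 : Real.exp (-c * Real.cosh t) ≤ Real.exp (-(c / 2) * Real.exp t) := by
    apply Real.exp_le_exp.2
    have := exp_le_two_cosh t
    nlinarith
  have hkey := key ((k : ℝ) + |ν| + 1) (c / 2) t (half_pos hc) ht
  calc Real.cosh t ^ k * (Real.exp (-c * Real.cosh t) * Real.cosh (ν * t))
      ≤ Real.exp ((k : ℝ) * t) * (Real.exp (-(c / 2) * Real.exp t) * Real.exp (|ν| * t)) := by
        apply mul_le_mul h1 (mul_le_mul h3 h2 (Real.cosh_pos _).le (Real.exp_pos _).le)
          (mul_nonneg (Real.exp_pos _).le (Real.cosh_pos _).le) (Real.exp_pos _).le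
    _ = Real.exp ((k : ℝ) * t + |ν| * t - (c / 2) * Real.exp t) := by
        rw [← Real.exp_add, ← Real.exp_add]; ring_nf
    _ ≤ Real.exp (((k : ℝ) + |ν| + 1) ^ 2 / (c / 2) - t) := by
        apply Real.exp_le_exp.2; nlinarith
    _ = Real.exp (((k : ℝ) + |ν| + 1) ^ 2 / (c / 2)) * Real.exp (-t) := by
        rw [← Real.exp_add]; ring_nf

lemma integrand_nonneg (ν c : ℝ) (k : ℕ) (t : ℝ) :
    0 ≤ Real.cosh t ^ k * (Real.exp (-c * Real.cosh t) * Real.cosh (ν * t)) :=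
  mul_nonneg (pow_nonneg (Real.cosh_pos t).le k)
    (mul_nonneg (Real.exp_pos _).le (Real.cosh_pos _).le)

lemma integrable_aux (ν c : ℝ) (k : ℕ) (hc : 0 < c) :
    IntegrableOn
      (fun t => Real.cosh t ^ k * (Real.exp (-c * Real.cosh t) * Real.cosh (ν * t)))
      (Set.Ioi (0 : ℝ)) := by
  have hcont : Continuous fun t : ℝ =>
      Real.cosh t ^ k * (Real.exp (-c * Real.cosh t) * Real.cosh (ν * t)) := by
    fun_prop
  have hM : IntegrableOn
      (fun t : ℝ => Real.exp (((k : ℝ) + |ν| + 1) ^ 2 / (c / 2)) * Real.exp (-(1 : ℝ) * t))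
      (Set.Ioi (0 : ℝ)) :=
    (exp_neg_integrableOn_Ioi 0 one_pos).const_mul _
  refine hM.mono' hcont.aestronglyMeasurable ?_
  filter_upwards [ae_restrict_mem measurableSet_Ioi] with t ht
  rw [Real.norm_eq_abs, abs_of_nonneg (integrand_nonneg ν c k t)]
  simpa using pointwise_bound ν c k hc (le_of_lt ht)

lemma integrable_B (ν c : ℝ) (k : ℕ) (hc : 0 < c) :
    IntegrableOn
      (fun t => (-Real.cosh t) ^ k * (Real.exp (-c * Real.cosh t) * Real.cosh (ν * t)))
      (Set.Ioi (0 : ℝ)) := by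
  have h := (integrable_aux ν c k hc).const_mul ((-1 : ℝ) ^ k)
  refine h.congr ?_
  filter_upwards with t
  rw [neg_pow]
  ring

lemma hasDerivAt_B (ν : ℝ) (k : ℕ) {x : ℝ} (hx : 0 < x) :
    HasDerivAt (B ν k) (B ν (k + 1) x) x := by
  have h := hasDerivAt_integral_of_dominated_loc_of_deriv_le (μ := volume.restrict (Set.Ioi (0:ℝ)))
    (F := fun y t => (-Real.cosh t) ^ k * (Real.exp (-y * Real.cosh t) * Real.cosh (ν * t)))
    (F' := fun y t => (-Real.cosh t) ^ (k + 1) * (Real.exp (-y * Real.cosh t) * Real.cosh (ν * t)))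
    (x₀ := x)
    (bound := fun t => Real.cosh t ^ (k + 1) * (Real.exp (-(x / 2) * Real.cosh t) * Real.cosh (ν * t)))
    (s := Metric.ball x (x / 2)) (Metric.ball_mem_nhds x (half_pos hx))
    (Eventually.of_forall fun y => (by fun_prop : Continuous fun t : ℝ =>
      (-Real.cosh t) ^ k * (Real.exp (-y * Real.cosh t) * Real.cosh (ν * t))).aestronglyMeasurable)
    (integrable_B ν x k hx)
    ((by fun_prop : Continuous fun t : ℝ =>
      (-Real.cosh t) ^ (k + 1) * (Real.exp (-x * Real.cosh t) * Real.cosh (ν * t))).aestronglyMeasurable)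
    ?_ (integrable_aux ν (x / 2) (k + 1) (half_pos hx)) ?_
  · exact h.2
  · filter_upwards [ae_restrict_mem measurableSet_Ioi] with t ht
    intro y hy
    have hy2 : x / 2 ≤ y := by
      have := abs_lt.1 (by simpa [Real.dist_eq] using hy)
      linarith [this.1]
    rw [Real.norm_eq_abs, abs_mul, abs_pow, abs_neg,
      abs_of_nonneg (Real.cosh_pos t).le,
      abs_of_nonneg (mul_nonneg (Real.exp_pos _).le (Real.cosh_pos _).le)]
    have : Real.exp (-y * Real.cosh t) ≤ Real.exp (-(x / 2) * Real.cosh t) := by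
      apply Real.exp_le_exp.2
      have := (Real.cosh_pos t).le
      nlinarith
    have h0 := (Real.cosh_pos (ν * t)).le
    have h1 : (0:ℝ) ≤ Real.cosh t ^ (k+1) := pow_nonneg (Real.cosh_pos t).le _
    exact mul_le_mul_of_nonneg_left (mul_le_mul_of_nonneg_right this h0) h1
  · filter_upwards [ae_restrict_mem measurableSet_Ioi] with t _
    intro y _
    have h1 : HasDerivAt (fun y : ℝ => -y * Real.cosh t) (-Real.cosh t) y := by
      simpa using (hasDerivAt_id y).neg.mul_const (Real.cosh t)
    have h2 := (h1.exp.mul_const (Real.cosh (ν * t))).const_mul ((-Real.cosh t) ^ k)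
    exact h2.congr_deriv (by ring)


lemma B_ode (ν : ℝ) {y : ℝ} (hy : 0 < y) :
    y ^ 2 * B ν 2 y + y * B ν 1 y - (y ^ 2 + ν ^ 2) * B ν 0 y = 0 := by
  set W : ℝ → ℝ := fun t =>
    -y * Real.sinh t * Real.exp (-y * Real.cosh t) * Real.cosh (ν * t) -
      Real.exp (-y * Real.cosh t) * (ν * Real.sinh (ν * t)) with hWdef
  set f' : ℝ → ℝ := fun t =>
    (y ^ 2 * (-Real.cosh t) ^ 2 + y * (-Real.cosh t) - (y ^ 2 + ν ^ 2)) *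
      (Real.exp (-y * Real.cosh t) * Real.cosh (ν * t)) with hf'def
  have hW : ∀ t : ℝ, HasDerivAt W (f' t) t := by
    intro t
    have hlin : HasDerivAt (fun t : ℝ => ν * t) ν t := by
      simpa using (hasDerivAt_id t).const_mul ν
    have hcos : HasDerivAt (fun t : ℝ => Real.cosh (ν * t)) (Real.sinh (ν * t) * ν) t := hlin.cosh
    have hsin : HasDerivAt (fun t : ℝ => Real.sinh (ν * t)) (Real.cosh (ν * t) * ν) t := hlin.sinh
    have hinner : HasDerivAt (fun t : ℝ => -y * Real.cosh t) (-y * Real.sinh t) t := by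
      simpa using (Real.hasDerivAt_cosh t).const_mul (-y)
    have hg : HasDerivAt (fun t : ℝ => Real.exp (-y * Real.cosh t))
        (Real.exp (-y * Real.cosh t) * (-y * Real.sinh t)) t := hinner.exp
    have ha : HasDerivAt (fun t : ℝ => -y * Real.sinh t) (-y * Real.cosh t) t := by
      simpa using (Real.hasDerivAt_sinh t).const_mul (-y)
    have term1 := (ha.mul hg).mul hcos
    have term2 := hg.mul (hsin.const_mul ν)
    have := term1.sub term2
    refine this.congr_deriv ?_
    have hs2 := Real.sinh_sq t
    simp only [hf'def, Pi.mul_apply]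
    linear_combination ((y ^ 2) * Real.exp (-y * Real.cosh t) * Real.cosh (ν * t)) * hs2
  have hWtop : Tendsto W atTop (𝓝 0) := by
    refine squeeze_zero_norm' (a := fun t =>
      (y * Real.exp ((((1:ℕ) : ℝ) + |ν| + 1) ^ 2 / (y / 2)) +
        |ν| * Real.exp ((((0:ℕ) : ℝ) + |ν| + 1) ^ 2 / (y / 2))) * Real.exp (-t)) ?_ ?_
    · filter_upwards [eventually_ge_atTop (0 : ℝ)] with t ht
      have hb1 := pointwise_bound ν y 1 hy ht
      have hb0 := pointwise_bound ν y 0 hy ht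
      simp only [pow_one, pow_zero, one_mul] at hb1 hb0
      have e1 : |(-y * Real.sinh t * Real.exp (-y * Real.cosh t) * Real.cosh (ν * t))| ≤
          y * (Real.cosh t * (Real.exp (-y * Real.cosh t) * Real.cosh (ν * t))) := by
        rw [abs_mul, abs_mul, abs_mul, abs_neg, abs_of_nonneg hy.le,
          abs_of_nonneg (Real.exp_pos _).le, abs_of_nonneg (Real.cosh_pos _).le]
        have := abs_sinh_le_cosh t
        have h1 := (Real.exp_pos (-y * Real.cosh t)).le
        have h2 := (Real.cosh_pos (ν * t)).le
        nlinarith [mul_le_mul_of_nonneg_right (mul_le_mul_of_nonneg_left this hy.le) (mul_nonneg h1 h2)]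
      have e2 : |Real.exp (-y * Real.cosh t) * (ν * Real.sinh (ν * t))| ≤
          |ν| * (Real.exp (-y * Real.cosh t) * Real.cosh (ν * t)) := by
        rw [abs_mul, abs_mul, abs_of_nonneg (Real.exp_pos _).le]
        have := abs_sinh_le_cosh (ν * t)
        have h1 := (Real.exp_pos (-y * Real.cosh t)).le
        nlinarith [mul_le_mul_of_nonneg_left this (mul_nonneg (abs_nonneg ν) h1)]
      calc ‖W t‖ ≤ |(-y * Real.sinh t * Real.exp (-y * Real.cosh t) * Real.cosh (ν * t))| +
            |Real.exp (-y * Real.cosh t) * (ν * Real.sinh (ν * t))| := by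
              simp only [hWdef, Real.norm_eq_abs]
              exact abs_sub _ _
        _ ≤ y * (Real.cosh t * (Real.exp (-y * Real.cosh t) * Real.cosh (ν * t))) +
            |ν| * (Real.exp (-y * Real.cosh t) * Real.cosh (ν * t)) := add_le_add e1 e2
        _ ≤ y * (Real.exp ((((1:ℕ) : ℝ) + |ν| + 1) ^ 2 / (y / 2)) * Real.exp (-t)) +
            |ν| * (Real.exp ((((0:ℕ) : ℝ) + |ν| + 1) ^ 2 / (y / 2)) * Real.exp (-t)) := by
              exact add_le_add (mul_le_mul_of_nonneg_left hb1 hy.le)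
                (mul_le_mul_of_nonneg_left hb0 (abs_nonneg ν))
        _ = _ := by ring
    · simpa using (Real.tendsto_exp_neg_atTop_nhds_zero).const_mul
        (y * Real.exp ((((1:ℕ) : ℝ) + |ν| + 1) ^ 2 / (y / 2)) +
          |ν| * Real.exp ((((0:ℕ) : ℝ) + |ν| + 1) ^ 2 / (y / 2)))
  have hint : IntegrableOn f' (Set.Ioi (0 : ℝ)) := by
    have h2 := (integrable_B ν y 2 hy).const_mul (y ^ 2)
    have h1 := (integrable_B ν y 1 hy).const_mul y
    have h0 := (integrable_B ν y 0 hy).const_mul (y ^ 2 + ν ^ 2)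
    refine ((h2.add h1).sub h0).congr ?_
    filter_upwards with t
    simp only [Pi.add_apply, Pi.sub_apply, hf'def]
    ring
  have hI := integral_Ioi_of_hasDerivAt_of_tendsto
    (f := W) (f' := f') (a := 0) ((hW 0).continuousAt.continuousWithinAt)
    (fun t _ => hW t) hint hWtop
  have hW0 : W 0 = 0 := by simp [hWdef]
  rw [hW0, sub_zero] at hI
  have heq : y ^ 2 * B ν 2 y + y * B ν 1 y - (y ^ 2 + ν ^ 2) * B ν 0 y
      = ∫ t in Set.Ioi (0 : ℝ), f' t := by
    have hAB : Integrable (fun t : ℝ =>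
        y ^ 2 * ((-Real.cosh t) ^ 2 * (Real.exp (-y * Real.cosh t) * Real.cosh (ν * t))) +
          y * ((-Real.cosh t) ^ 1 * (Real.exp (-y * Real.cosh t) * Real.cosh (ν * t))))
        (volume.restrict (Set.Ioi 0)) :=
      ((integrable_B ν y 2 hy).const_mul (y ^ 2)).add ((integrable_B ν y 1 hy).const_mul y)
    simp only [B]
    rw [← integral_const_mul, ← integral_const_mul, ← integral_const_mul, ← integral_add
      ((integrable_B ν y 2 hy).const_mul (y ^ 2)) ((integrable_B ν y 1 hy).const_mul y),
      ← integral_sub hAB ((integrable_B ν y 0 hy).const_mul (y ^ 2 + ν ^ 2))]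
    apply integral_congr_ae
    filter_upwards with t
    simp only [hf'def]
    ring
  rw [heq, hI]

end BesselAux

open BesselAux Set in
/-- `u(x) = √x · K_{(1+α)/2}(x√E)` is a generalised eigenfunction at
energy `−E` of the zero-mode fibre operator `−d²/dx² + α(2+α)/(4x²)` on `(0,∞)`. -/
theorem besselK_solves_zero_mode_ODE (α E : ℝ) (hα : α ∈ Set.Ico (0 : ℝ) 1)
    (hE : 0 < E) :
    let ν : ℝ := (1 + α) / 2
    let u : ℝ → ℝ := fun x => Real.sqrt x * besselK ν (x * Real.sqrt E)
    ∀ x > (0 : ℝ), DifferentiableAt ℝ u x ∧ DifferentiableAt ℝ (deriv u) x ∧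
      -(deriv (deriv u) x) + (α * (2 + α) / (4 * x ^ 2)) * u x = -E * u x := by
  intro ν u x hx
  have hu : u = fun y => Real.sqrt y * B ν 0 (y * Real.sqrt E) := by
    funext y; simp [u, besselK_eq]
  set e : ℝ := Real.sqrt E with he_def
  have he : 0 < e := Real.sqrt_pos.2 hE
  have he2 : e ^ 2 = E := Real.sq_sqrt hE.le
  -- derivative of z ↦ B ν k (z * e)
  have hBk : ∀ (k : ℕ) {z : ℝ}, 0 < z →
      HasDerivAt (fun w => B ν k (w * e)) (B ν (k + 1) (z * e) * e) z := by
    intro k z hz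
    have h := HasDerivAt.comp z (hasDerivAt_B ν k (x := z * e) (mul_pos hz he))
      ((hasDerivAt_id z).mul_const e)
    simpa [Function.comp_def, one_mul] using h
  -- first derivative of u
  set du : ℝ → ℝ := fun z => 1 / (2 * Real.sqrt z) * B ν 0 (z * e) +
    Real.sqrt z * (B ν 1 (z * e) * e) with hdu_def
  have hasD : ∀ z, 0 < z → HasDerivAt u (du z) z := by
    intro z hz
    rw [hu]
    exact (Real.hasDerivAt_sqrt hz.ne').mul (hBk 0 hz)
  have hderiv_eq : deriv u =ᶠ[𝓝 x] du := by
    filter_upwards [Ioi_mem_nhds hx] with z hz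
    exact (hasD z hz).deriv
  -- second derivative
  have hsne : (2 : ℝ) * Real.sqrt x ≠ 0 := by positivity
  have d1 : HasDerivAt (fun z : ℝ => 1 / (2 * Real.sqrt z))
      (-(2 * (1 / (2 * Real.sqrt x))) / (2 * Real.sqrt x) ^ 2) x := by
    have := ((Real.hasDerivAt_sqrt hx.ne').const_mul 2).inv hsne
    simpa [one_div, Pi.inv_def] using this
  have dd : HasDerivAt du
      (-(2 * (1 / (2 * Real.sqrt x))) / (2 * Real.sqrt x) ^ 2 * B ν 0 (x * e) +
        1 / (2 * Real.sqrt x) * (B ν 1 (x * e) * e) +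
       (1 / (2 * Real.sqrt x) * (B ν 1 (x * e) * e) +
        Real.sqrt x * (B ν 2 (x * e) * e * e))) x := by
    rw [hdu_def]
    exact (d1.mul (hBk 0 hx)).add
      ((Real.hasDerivAt_sqrt hx.ne').mul ((hBk 1 hx).mul_const e))
  refine ⟨(hasD x hx).differentiableAt, ?_, ?_⟩
  · exact hderiv_eq.differentiableAt_iff.2 dd.differentiableAt
  · have hd2 : deriv (deriv u) x =
        -(2 * (1 / (2 * Real.sqrt x))) / (2 * Real.sqrt x) ^ 2 * B ν 0 (x * e) +
          1 / (2 * Real.sqrt x) * (B ν 1 (x * e) * e) +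
         (1 / (2 * Real.sqrt x) * (B ν 1 (x * e) * e) +
          Real.sqrt x * (B ν 2 (x * e) * e * e)) := by
      rw [hderiv_eq.deriv_eq]
      exact dd.deriv
    have hODE := B_ode ν (mul_pos hx he)
    have hν : ν = (1 + α) / 2 := rfl
    set s : ℝ := Real.sqrt x with hs_def
    have hs : 0 < s := Real.sqrt_pos.2 hx
    have hs2 : s ^ 2 = x := Real.sq_sqrt hx.le
    set k0 : ℝ := B ν 0 (x * e)
    set k1 : ℝ := B ν 1 (x * e)
    set k2 : ℝ := B ν 2 (x * e)
    rw [hd2, hu]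
    simp only [besselK_eq]
    rw [hν] at hODE
    rw [← hs2] at hODE ⊢
    rw [← he2]
    have hcast : B ((1 + α) / 2) 0 (s ^ 2 * e) = k0 := by rw [hs2]
    rw [hcast, Real.sqrt_sq hs.le]
    field_simp
    linear_combination (-(16:ℝ)) * hODE
end

section
/- For every ν > 0, the modified Bessel function of the second kind has the small-argument behaviour lim_{x→0⁺} x^ν · K_ν(x) = 2^{ν−1}·Γ(ν). -/
open Filter Topology MeasureTheory

private lemma besselK_key (ν x : ℝ) (hx : 0 < x) :
    x ^ ν * besselK ν x = ∫ u in Set.Ioi (x / 2),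
      Real.exp (-(u + x ^ 2 / (4 * u))) *
        ((2 * u) ^ ν + x ^ (2 * ν) * (2 * u) ^ (-ν)) / (2 * u) := by
  have hx2 : (0 : ℝ) < x / 2 := by positivity
  set g : ℝ → ℝ := fun u =>
    Real.exp (-(u + x ^ 2 / (4 * u))) * ((2 * u / x) ^ ν + (x / (2 * u)) ^ ν) / (2 * u) with hg
  have himg : (fun t : ℝ => x / 2 * Real.exp t) '' Set.Ioi 0 = Set.Ioi (x / 2) := by
    ext u
    constructor
    · rintro ⟨t, ht, rfl⟩
      have h1 : (1 : ℝ) < Real.exp t := by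
        rw [show (1 : ℝ) = Real.exp 0 by simp]
        exact Real.exp_lt_exp.2 ht
      have : x / 2 * 1 < x / 2 * Real.exp t := by
        exact mul_lt_mul_of_pos_left h1 hx2
      simpa using this
    · intro hu
      have hu' : x / 2 < u := hu
      have h2u : (1 : ℝ) < 2 * u / x := by
        rw [lt_div_iff₀ hx]; linarith
      refine ⟨Real.log (2 * u / x), Real.log_pos h2u, ?_⟩
      show x / 2 * Real.exp (Real.log (2 * u / x)) = u
      rw [Real.exp_log (by linarith)]
      field_simp
  have hderiv : ∀ t ∈ Set.Ioi (0 : ℝ),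
      HasDerivWithinAt (fun t : ℝ => x / 2 * Real.exp t) (x / 2 * Real.exp t) (Set.Ioi 0) t :=
    fun t _ => ((Real.hasDerivAt_exp t).const_mul (x / 2)).hasDerivWithinAt
  have hinj : Set.InjOn (fun t : ℝ => x / 2 * Real.exp t) (Set.Ioi 0) :=
    ((mul_right_injective₀ (by positivity : x / 2 ≠ 0)).comp Real.exp_injective).injOn
  have h1 : besselK ν x = ∫ u in Set.Ioi (x / 2), g u := by
    rw [besselK, ← himg,
      MeasureTheory.integral_image_eq_integral_abs_deriv_smul measurableSet_Ioi hderiv hinj g]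
    refine setIntegral_congr_fun measurableSet_Ioi fun t ht => ?_
    have hE : (0 : ℝ) < Real.exp t := Real.exp_pos t
    have hu : (0 : ℝ) < x / 2 * Real.exp t := by positivity
    have e1 : 2 * (x / 2 * Real.exp t) / x = Real.exp t := by field_simp
    have e2 : x / (2 * (x / 2 * Real.exp t)) = Real.exp (-t) := by
      rw [Real.exp_neg]; field_simp
    have e4 : x / 2 * Real.exp t + x ^ 2 / (4 * (x / 2 * Real.exp t)) = x * Real.cosh t := by
      rw [Real.cosh_eq, Real.exp_neg]
      field_simp
      ring
    have e5 : Real.exp t ^ ν = Real.exp (ν * t) := by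
      rw [mul_comm, Real.exp_mul]
    have e6 : Real.exp (-t) ^ ν = Real.exp (-(ν * t)) := by
      rw [show -(ν * t) = -t * ν by ring, Real.exp_mul]
    simp only [hg, smul_eq_mul, e1, e2, e4, e5, e6, abs_of_pos hu]
    rw [Real.cosh_eq (ν * t)]
    field_simp
  rw [h1, ← MeasureTheory.integral_const_mul]
  refine setIntegral_congr_fun measurableSet_Ioi fun u hu => ?_
  have hu' : (0 : ℝ) < u := lt_trans hx2 hu
  have h2u : (0 : ℝ) < 2 * u := by positivity
  have hxν : (0 : ℝ) < x ^ ν := Real.rpow_pos_of_pos hx ν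
  have hA : x ^ ν * ((2 * u / x) ^ ν + (x / (2 * u)) ^ ν)
      = (2 * u) ^ ν + x ^ (2 * ν) * (2 * u) ^ (-ν) := by
    have d1 : (2 * u / x) ^ ν = (2 * u) ^ ν / x ^ ν := Real.div_rpow h2u.le hx.le ν
    have d2 : (x / (2 * u)) ^ ν = x ^ ν / (2 * u) ^ ν := Real.div_rpow hx.le h2u.le ν
    have d3 : x ^ (2 * ν) = x ^ ν * x ^ ν := by
      rw [← Real.rpow_add hx]; ring_nf
    have d4 : (2 * u) ^ (-ν) = ((2 * u) ^ ν)⁻¹ := Real.rpow_neg h2u.le ν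
    have h2uν : (0 : ℝ) < (2 * u) ^ ν := Real.rpow_pos_of_pos h2u ν
    rw [d1, d2, d3, d4]
    field_simp
  simp only [hg]
  rw [← hA]
  ring

/-- small-argument behaviour of `K_ν`:
`x^ν K_ν(x) → 2^{ν−1} Γ(ν)` as `x → 0⁺`, for every `ν > 0`. -/
theorem besselK_small_argument (ν : ℝ) (hν : 0 < ν) :
    Tendsto (fun x : ℝ => x ^ ν * besselK ν x) (𝓝[>] 0)
      (𝓝 ((2 : ℝ) ^ (ν - 1) * Real.Gamma ν)) := by
  set φ : ℝ → ℝ → ℝ := fun x u =>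
    Real.exp (-(u + x ^ 2 / (4 * u))) * ((2 * u) ^ ν + x ^ (2 * ν) * (2 * u) ^ (-ν)) / (2 * u)
    with hφ
  set F : ℝ → ℝ → ℝ := fun x => (Set.Ioi (x / 2)).indicator (φ x) with hF
  have hBint : Integrable (fun u : ℝ => (2 : ℝ) ^ ν * (Real.exp (-u) * u ^ (ν - 1)))
      (volume.restrict (Set.Ioi (0 : ℝ))) :=
    (Real.GammaIntegral_convergent hν).const_mul _
  have hmeas : ∀ x : ℝ, AEStronglyMeasurable (F x) (volume.restrict (Set.Ioi (0 : ℝ))) := by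
    intro x
    refine (Measurable.indicator ?_ measurableSet_Ioi).aestronglyMeasurable
    fun_prop
  have hbound : ∀ᶠ x in 𝓝[>] (0 : ℝ), ∀ᵐ u ∂volume.restrict (Set.Ioi (0 : ℝ)),
      ‖F x u‖ ≤ (2 : ℝ) ^ ν * (Real.exp (-u) * u ^ (ν - 1)) := by
    filter_upwards [self_mem_nhdsWithin] with x hx
    have hx' : (0 : ℝ) < x := hx
    filter_upwards [ae_restrict_mem measurableSet_Ioi] with u hu
    have hu' : (0 : ℝ) < u := hu
    have h2u : (0 : ℝ) < 2 * u := by positivity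
    have hBnn : (0 : ℝ) ≤ (2 : ℝ) ^ ν * (Real.exp (-u) * u ^ (ν - 1)) := by positivity
    by_cases h : u ∈ Set.Ioi (x / 2)
    · have hxu : x ≤ 2 * u := by
        have : x / 2 < u := h
        linarith
      rw [hF]
      simp only [Set.indicator_of_mem h]
      have hφnn : 0 ≤ φ x u := by
        rw [hφ]
        have := Real.exp_pos (-(u + x ^ 2 / (4 * u)))
        positivity
      rw [Real.norm_eq_abs, abs_of_nonneg hφnn, hφ]
      have hexp : Real.exp (-(u + x ^ 2 / (4 * u))) ≤ Real.exp (-u) := by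
        apply Real.exp_le_exp.2
        have : 0 ≤ x ^ 2 / (4 * u) := by positivity
        linarith
      have hsum : x ^ (2 * ν) * (2 * u) ^ (-ν) ≤ (2 * u) ^ ν := by
        have s1 : x ^ (2 * ν) ≤ (2 * u) ^ (2 * ν) :=
          Real.rpow_le_rpow hx'.le hxu (by positivity)
        have s2 : (2 * u) ^ (2 * ν) * (2 * u) ^ (-ν) = (2 * u) ^ ν := by
          rw [← Real.rpow_add h2u]; ring_nf
        calc x ^ (2 * ν) * (2 * u) ^ (-ν)
            ≤ (2 * u) ^ (2 * ν) * (2 * u) ^ (-ν) := by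
              have : (0:ℝ) ≤ (2 * u) ^ (-ν) := Real.rpow_nonneg h2u.le _
              exact mul_le_mul_of_nonneg_right s1 this
          _ = (2 * u) ^ ν := s2
      calc Real.exp (-(u + x ^ 2 / (4 * u))) *
              ((2 * u) ^ ν + x ^ (2 * ν) * (2 * u) ^ (-ν)) / (2 * u)
          ≤ Real.exp (-u) * ((2 * u) ^ ν + (2 * u) ^ ν) / (2 * u) := by
            gcongr
        _ = (2 : ℝ) ^ ν * (Real.exp (-u) * u ^ (ν - 1)) := by
            have m1 : (2 * u : ℝ) ^ ν = 2 ^ ν * u ^ ν := Real.mul_rpow (by norm_num) hu'.le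
            have m2 : u ^ (ν - 1) = u ^ ν / u := by
              rw [Real.rpow_sub hu', Real.rpow_one]
            rw [m1, m2]
            field_simp
            ring
    · rw [hF]
      simp only [Set.indicator_of_notMem h, norm_zero]
      exact hBnn
  have hlim : ∀ᵐ u ∂volume.restrict (Set.Ioi (0 : ℝ)),
      Tendsto (fun x => F x u) (𝓝[>] (0 : ℝ))
        (𝓝 ((2 : ℝ) ^ (ν - 1) * (Real.exp (-u) * u ^ (ν - 1)))) := by
    filter_upwards [ae_restrict_mem measurableSet_Ioi] with u hu
    have hu' : (0 : ℝ) < u := hu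
    have h2u : (0 : ℝ) < 2 * u := by positivity
    have heq : ∀ᶠ x in 𝓝[>] (0 : ℝ), φ x u = F x u := by
      filter_upwards [Ioo_mem_nhdsGT_of_mem (Set.left_mem_Ico.2 h2u)] with x hx
      have : u ∈ Set.Ioi (x / 2) := by
        simp only [Set.mem_Ioi]
        linarith [hx.2]
      rw [hF]
      simp [Set.indicator_of_mem this]
    have h1 : Tendsto (fun x : ℝ => x ^ (2 * ν)) (𝓝[>] (0 : ℝ)) (𝓝 0) := by
      have h := (Real.continuousAt_rpow_const 0 (2 * ν) (Or.inr (by positivity))).tendsto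
      rw [Real.zero_rpow (by positivity)] at h
      exact h.mono_left nhdsWithin_le_nhds
    have h2 : Tendsto (fun x : ℝ => Real.exp (-(u + x ^ 2 / (4 * u)))) (𝓝[>] (0 : ℝ))
        (𝓝 (Real.exp (-u))) := by
      have hc : Continuous fun x : ℝ => Real.exp (-(u + x ^ 2 / (4 * u))) := by
        fun_prop
      have := hc.tendsto 0
      simp only [zero_pow, ne_eq, OfNat.ofNat_ne_zero, not_false_eq_true, zero_div,
        add_zero] at this
      exact this.mono_left nhdsWithin_le_nhds
    have h3 : Tendsto (fun x => φ x u) (𝓝[>] (0 : ℝ))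
        (𝓝 (Real.exp (-u) * ((2 * u) ^ ν + 0 * (2 * u) ^ (-ν)) / (2 * u))) := by
      exact ((h2.mul ((tendsto_const_nhds).add (h1.mul tendsto_const_nhds)))).div_const (2 * u)
    have hval : Real.exp (-u) * ((2 * u) ^ ν + 0 * (2 * u) ^ (-ν)) / (2 * u)
        = (2 : ℝ) ^ (ν - 1) * (Real.exp (-u) * u ^ (ν - 1)) := by
      rw [zero_mul, add_zero]
      have d1 : (2 * u) ^ (ν - 1) = (2 * u) ^ ν / (2 * u) := by
        rw [Real.rpow_sub h2u, Real.rpow_one]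
      have d2 : (2 * u) ^ (ν - 1) = (2:ℝ) ^ (ν-1) * u ^ (ν-1) :=
        Real.mul_rpow (by norm_num) hu'.le
      rw [mul_div_assoc, ← d1, d2]
      ring
    rw [hval] at h3
    exact h3.congr' heq
  have hDC := MeasureTheory.tendsto_integral_filter_of_dominated_convergence
    (μ := volume.restrict (Set.Ioi (0 : ℝ))) (l := 𝓝[>] (0 : ℝ)) (F := F)
    (f := fun u => (2 : ℝ) ^ (ν - 1) * (Real.exp (-u) * u ^ (ν - 1)))
    (bound := fun u => (2 : ℝ) ^ ν * (Real.exp (-u) * u ^ (ν - 1)))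
    (Eventually.of_forall hmeas) hbound hBint hlim
  have hval : ∫ u in Set.Ioi (0 : ℝ), (2 : ℝ) ^ (ν - 1) * (Real.exp (-u) * u ^ (ν - 1))
      = (2 : ℝ) ^ (ν - 1) * Real.Gamma ν := by
    rw [MeasureTheory.integral_const_mul, Real.Gamma_eq_integral hν]
  rw [hval] at hDC
  refine hDC.congr' ?_
  filter_upwards [self_mem_nhdsWithin] with x hx
  have hx' : (0 : ℝ) < x := hx
  rw [besselK_key ν x hx', hF]
  rw [MeasureTheory.setIntegral_indicator measurableSet_Ioi, Set.Ioi_inter_Ioi,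
    sup_eq_right.2 (by positivity : (0:ℝ) ≤ x / 2)]
end

section
/- For every ν ∈ (0,1), the second-order small-argument behaviour of the modified Bessel function of the second kind holds: lim_{x→0⁺} x^{−ν}·( K_ν(x) − 2^{ν−1}·Γ(ν)·x^{−ν} ) = 2^{−ν−1}·Γ(−ν). -/
open Filter Topology MeasureTheory

namespace BesselKAux

open Real Set

lemma exp_cov (g : ℝ → ℝ) : ∫ w in Set.Ioi (0:ℝ), g w = ∫ s : ℝ, Real.exp s * g (Real.exp s) := by
  have h := integral_image_eq_integral_abs_deriv_smul (f := Real.exp) (f' := Real.exp)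
    (s := Set.univ) MeasurableSet.univ
    (fun x _ => (Real.hasDerivAt_exp x).hasDerivWithinAt) (Real.exp_injective.injOn) g
  simp only [Set.image_univ, Real.range_exp, MeasureTheory.setIntegral_univ, smul_eq_mul,
    abs_of_pos (Real.exp_pos _)] at h
  exact h

lemma exp_cov_int (g : ℝ → ℝ) :
    IntegrableOn g (Set.Ioi (0:ℝ)) ↔ Integrable (fun s => Real.exp s * g (Real.exp s)) := by
  have h := integrableOn_image_iff_integrableOn_abs_deriv_smul (f := Real.exp) (f' := Real.exp)
    (s := Set.univ) MeasurableSet.univ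
    (fun x _ => (Real.hasDerivAt_exp x).hasDerivWithinAt) (Real.exp_injective.injOn) g
  simpa [Set.image_univ, Real.range_exp, smul_eq_mul, abs_of_pos (Real.exp_pos _),
    MeasureTheory.integrableOn_univ] using h

lemma gamma_line {a : ℝ} (ha : 0 < a) :
    ∫ s : ℝ, Real.exp (-Real.exp s) * Real.exp (a * s) = Real.Gamma a := by
  rw [Real.Gamma_eq_integral ha, exp_cov]
  congr 1 with s
  rw [Real.rpow_def_of_pos (Real.exp_pos s), Real.log_exp]
  simp only [← Real.exp_add]
  congr 1; ring

lemma gamma_line_integrable {a : ℝ} (ha : 0 < a) :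
    Integrable (fun s : ℝ => Real.exp (-Real.exp s) * Real.exp (a * s)) := by
  have h := (exp_cov_int (fun w => Real.exp (-w) * w ^ (a-1))).mp
    (Real.GammaIntegral_convergent ha)
  apply h.congr
  filter_upwards [] with s
  rw [Real.rpow_def_of_pos (Real.exp_pos s), Real.log_exp]
  simp only [← Real.exp_add]
  congr 1; ring

lemma integrable_phi {c a : ℝ} (hc : 0 ≤ c) (ha : 0 < a) :
    Integrable (fun s : ℝ => Real.exp (-Real.exp s - c * Real.exp (-s)) * Real.exp (a * s)) := by
  apply (gamma_line_integrable ha).mono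
  · apply Continuous.aestronglyMeasurable
    fun_prop
  · filter_upwards [] with s
    rw [norm_of_nonneg (by positivity), norm_of_nonneg (by positivity)]
    apply mul_le_mul_of_nonneg_right _ (Real.exp_pos _).le
    apply Real.exp_le_exp.mpr
    have : 0 ≤ c * Real.exp (-s) := by positivity
    linarith

lemma one_sub_exp_neg_nonneg {t : ℝ} (ht : 0 ≤ t) : 0 ≤ 1 - Real.exp (-t) := by
  have : Real.exp (-t) ≤ 1 := Real.exp_le_one_iff.mpr (by linarith)
  linarith

lemma one_sub_exp_neg_le_self (t : ℝ) : 1 - Real.exp (-t) ≤ t := by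
  have := Real.add_one_le_exp (-t); linarith

lemma one_sub_exp_neg_le_one (t : ℝ) : 1 - Real.exp (-t) ≤ 1 := by
  have := (Real.exp_pos (-t)).le; linarith

lemma abs_exp_neg_sub_one {t : ℝ} (ht : 0 ≤ t) : |Real.exp (-t) - 1| = 1 - Real.exp (-t) := by
  rw [abs_sub_comm, abs_of_nonneg (one_sub_exp_neg_nonneg ht)]

/-- The dominating function `(1 - e^{-e^r}) e^{-ν r}` is integrable on `ℝ` for `ν ∈ (0,1)`. -/
lemma integrable_g {ν : ℝ} (hν0 : 0 < ν) (hν1 : ν < 1) :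
    Integrable (fun r : ℝ => (1 - Real.exp (-Real.exp r)) * Real.exp (-ν * r)) := by
  have hG : IntegrableOn (fun w : ℝ => (1 - Real.exp (-w)) * w ^ (-ν - 1)) (Set.Ioi 0) := by
    have hmeas : AEStronglyMeasurable (fun w : ℝ => (1 - Real.exp (-w)) * w ^ (-ν - 1))
        (volume.restrict (Set.Ioi (0:ℝ))) := by
      apply Measurable.aestronglyMeasurable
      exact ((measurable_const.sub ((measurable_id.neg).exp)).mul
        (measurable_id.pow_const _))
    have h1 : IntegrableOn (fun w : ℝ => (1 - Real.exp (-w)) * w ^ (-ν - 1)) (Set.Ioc 0 1) := by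
      have hb : IntegrableOn (fun w : ℝ => w ^ (-ν)) (Set.Ioc (0:ℝ) 1) := by
        have := intervalIntegral.intervalIntegrable_rpow' (a := (0:ℝ)) (b := 1)
          (r := -ν) (by linarith)
        rwa [intervalIntegrable_iff_integrableOn_Ioc_of_le (by norm_num)] at this
      apply hb.mono' (hmeas.mono_measure (Measure.restrict_mono Set.Ioc_subset_Ioi_self le_rfl))
      rw [ae_restrict_iff' measurableSet_Ioc]
      filter_upwards [] with w hw
      obtain ⟨hw0, hw1⟩ := hw
      have h3 : (0:ℝ) ≤ w ^ (-ν - 1) := Real.rpow_nonneg hw0.le _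
      rw [norm_of_nonneg (mul_nonneg (one_sub_exp_neg_nonneg hw0.le) h3)]
      calc (1 - Real.exp (-w)) * w ^ (-ν - 1) ≤ w * w ^ (-ν - 1) :=
            mul_le_mul_of_nonneg_right (one_sub_exp_neg_le_self w) h3
        _ = w ^ (-ν) := by
            rw [mul_comm, ← Real.rpow_add_one hw0.ne' (-ν - 1)]; congr 1; ring
    have h2 : IntegrableOn (fun w : ℝ => (1 - Real.exp (-w)) * w ^ (-ν - 1)) (Set.Ioi 1) := by
      have hb : IntegrableOn (fun w : ℝ => w ^ (-ν - 1)) (Set.Ioi (1:ℝ)) :=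
        integrableOn_Ioi_rpow_of_lt (by linarith) one_pos
      apply hb.mono' (hmeas.mono_measure (Measure.restrict_mono (Set.Ioi_subset_Ioi (by norm_num : (0:ℝ) ≤ 1)) le_rfl))
      rw [ae_restrict_iff' measurableSet_Ioi]
      filter_upwards [] with w hw
      have hw0 : (0:ℝ) < w := lt_trans one_pos hw
      have h3 : (0:ℝ) ≤ w ^ (-ν - 1) := Real.rpow_nonneg hw0.le _
      rw [norm_of_nonneg (mul_nonneg (one_sub_exp_neg_nonneg hw0.le) h3)]
      calc (1 - Real.exp (-w)) * w ^ (-ν - 1) ≤ 1 * w ^ (-ν - 1) :=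
            mul_le_mul_of_nonneg_right (one_sub_exp_neg_le_one w) h3
        _ = w ^ (-ν - 1) := one_mul _
    have := h1.union h2
    rwa [Set.Ioc_union_Ioi_eq_Ioi (by norm_num : (0:ℝ) ≤ 1)] at this
  have h := (exp_cov_int (fun w => (1 - Real.exp (-w)) * w ^ (-ν - 1))).mp hG
  apply h.congr
  filter_upwards [] with s
  rw [Real.rpow_def_of_pos (Real.exp_pos s), Real.log_exp]
  rw [show Real.exp s * ((1 - Real.exp (-Real.exp s)) * Real.exp (s * (-ν - 1)))
      = (1 - Real.exp (-Real.exp s)) * (Real.exp s * Real.exp (s * (-ν - 1))) by ring,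
    ← Real.exp_add]
  congr 2; ring

/-- Cauchy–Saalschütz: `∫ (e^{-e^r} - 1) e^{-ν r} dr = Γ(-ν)` for `ν ∈ (0,1)`. -/
lemma CS {ν : ℝ} (hν0 : 0 < ν) (hν1 : ν < 1) :
    ∫ r : ℝ, (Real.exp (-Real.exp r) - 1) * Real.exp (-ν * r) = Real.Gamma (-ν) := by
  set u : ℝ → ℝ := fun r => Real.exp (-Real.exp r) - 1 with hu_def
  set u' : ℝ → ℝ := fun r => -Real.exp r * Real.exp (-Real.exp r) with hu'_def
  set v : ℝ → ℝ := fun r => Real.exp (-ν * r) / (-ν) with hv_def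
  set v' : ℝ → ℝ := fun r => Real.exp (-ν * r) with hv'_def
  have hν : ν ≠ 0 := hν0.ne'
  have hu : ∀ r, HasDerivAt u (u' r) r := by
    intro r
    have h1 : HasDerivAt (fun r : ℝ => -Real.exp r) (-Real.exp r) r := (Real.hasDerivAt_exp r).neg
    have h2 := (Real.hasDerivAt_exp (-Real.exp r)).comp r h1
    simpa [hu_def, hu'_def, mul_comm] using h2.sub_const 1
  have hv : ∀ r, HasDerivAt v (v' r) r := by
    intro r
    have h1 : HasDerivAt (fun r : ℝ => -ν * r) (-ν) r := by
      simpa using (hasDerivAt_id r).const_mul (-ν)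
    have h2 := ((Real.hasDerivAt_exp (-ν * r)).comp r h1).div_const (-ν)
    have e : v' r = Real.exp (-ν * r) * -ν / -ν :=
      (mul_div_cancel_right₀ _ (neg_ne_zero.mpr hν)).symm
    rw [e]; exact h2
  have huv' : Integrable (u * v') := by
    apply (integrable_g hν0 hν1).neg.congr
    filter_upwards [] with r
    simp only [hu_def, hv'_def, Pi.mul_apply, Pi.neg_apply]
    ring
  have hu'v : Integrable (u' * v) := by
    apply ((gamma_line_integrable (a := 1 - ν) (by linarith)).const_mul (1/ν)).congr
    filter_upwards [] with r
    simp only [hu'_def, hv_def, Pi.mul_apply]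
    rw [show (1 - ν) * r = r + -ν * r by ring, Real.exp_add]
    field_simp
  have h_bot : Tendsto (u * v) atBot (𝓝 0) := by
    apply squeeze_zero_norm (a := fun r => Real.exp ((1 - ν) * r) / ν)
    · intro r
      simp only [hu_def, hv_def, Pi.mul_apply, norm_mul, norm_div, Real.norm_eq_abs]
      rw [abs_of_pos (Real.exp_pos _), abs_of_neg (by linarith : -ν < 0), neg_neg,
        ← mul_div_assoc]
      have h2 : |Real.exp (-Real.exp r) - 1| ≤ Real.exp r := by
        rw [abs_exp_neg_sub_one (Real.exp_pos r).le]
        exact one_sub_exp_neg_le_self _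
      gcongr ?_ / ν
      calc |Real.exp (-Real.exp r) - 1| * Real.exp (-ν * r)
          ≤ Real.exp r * Real.exp (-ν * r) :=
            mul_le_mul_of_nonneg_right h2 (Real.exp_pos _).le
        _ = Real.exp ((1 - ν) * r) := by rw [← Real.exp_add]; congr 1; ring
    · have h1 : Tendsto (fun r : ℝ => (1 - ν) * r) atBot atBot :=
        tendsto_id.const_mul_atBot (by linarith)
      have := (Real.tendsto_exp_atBot.comp h1).div_const ν
      simpa using this
  have h_top : Tendsto (u * v) atTop (𝓝 0) := by
    apply squeeze_zero_norm (a := fun r => Real.exp (-ν * r) / ν)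
    · intro r
      simp only [hu_def, hv_def, Pi.mul_apply, norm_mul, norm_div, Real.norm_eq_abs]
      rw [abs_of_pos (Real.exp_pos _), abs_of_neg (by linarith : -ν < 0), neg_neg,
        ← mul_div_assoc]
      have h2 : |Real.exp (-Real.exp r) - 1| ≤ 1 := by
        rw [abs_exp_neg_sub_one (Real.exp_pos r).le]
        exact one_sub_exp_neg_le_one _
      gcongr ?_ / ν
      calc |Real.exp (-Real.exp r) - 1| * Real.exp (-ν * r)
          ≤ 1 * Real.exp (-ν * r) :=
            mul_le_mul_of_nonneg_right h2 (Real.exp_pos _).le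
        _ = Real.exp (-ν * r) := one_mul _
    · have h1 : Tendsto (fun r : ℝ => -ν * r) atTop atBot :=
        (tendsto_const_mul_atBot_of_neg (by linarith)).mpr tendsto_id
      have := (Real.tendsto_exp_atBot.comp h1).div_const ν
      simpa using this
  have key := integral_mul_deriv_eq_deriv_mul (fun r _ => hu r) (fun r _ => hv r) huv' hu'v h_bot h_top
  have hiuv : ∫ r : ℝ, u' r * v r = Real.Gamma (1 - ν) / ν := by
    have : ∀ r : ℝ, u' r * v r = (1/ν) * (Real.exp (-Real.exp r) * Real.exp ((1-ν) * r)) := by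
      intro r
      simp only [hu'_def, hv_def]
      rw [show (1 - ν) * r = r + -ν * r by ring, Real.exp_add]
      field_simp
    rw [show (∫ r : ℝ, u' r * v r)
        = ∫ r : ℝ, (1/ν) * (Real.exp (-Real.exp r) * Real.exp ((1-ν) * r)) by
          congr 1 with r; exact this r]
    rw [integral_const_mul, gamma_line (by linarith : (0:ℝ) < 1 - ν)]
    ring
  have hgam : Real.Gamma (1 - ν) = -ν * Real.Gamma (-ν) := by
    have := Real.Gamma_add_one (s := -ν) (by simpa using hν)
    rw [show -ν + 1 = 1 - ν by ring] at this
    exact this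
  have : ∫ r : ℝ, u r * v' r = Real.Gamma (-ν) := by
    rw [key, hiuv, hgam]
    field_simp
    ring
  rw [← this]

/-- Representation `K_ν(x) = 2^{ν-1} x^{-ν} ∫ e^{-e^s - (x²/4) e^{-s}} e^{ν s} ds` for `x > 0`. -/
lemma besselK_rep {ν x : ℝ} (hx : 0 < x) (hν0 : 0 < ν) :
    besselK ν x = 2 ^ (ν - 1) * x ^ (-ν) *
        ∫ s : ℝ, Real.exp (-Real.exp s - x^2/4 * Real.exp (-s)) * Real.exp (ν * s) := by
  rw [besselK]
  set c : ℝ := x^2/4 with hc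
  set L : ℝ := Real.log (2/x) with hL
  have hexpL : Real.exp L = 2/x := Real.exp_log (by positivity)
  set f : ℝ → ℝ := fun s => Real.exp (-x * Real.cosh s) * Real.exp (ν * s) with hf
  set g : ℝ → ℝ := fun s => Real.exp (-Real.exp s - c * Real.exp (-s)) * Real.exp (ν * s) with hg
  have key : ∀ s, f (s + L) = Real.exp (ν * L) * g s := by
    intro s
    simp only [hf, hg, Real.cosh_eq, Real.exp_add, Real.exp_neg]
    rw [hexpL]
    have hx0 : x ≠ 0 := hx.ne'
    rw [mul_add, Real.exp_add]
    rw [show -x * ((Real.exp s * (2/x) + (Real.exp s * (2/x))⁻¹)/2) =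
        -Real.exp s - c * (Real.exp s)⁻¹ by
      field_simp
      ring]
    ring
  have hgint : Integrable g := integrable_phi (by positivity) hν0
  have hfint : Integrable f := by
    have := (hgint.const_mul (Real.exp (ν * L))).comp_sub_right L
    apply this.congr
    filter_upwards [] with s
    have := key (s - L)
    simp only [sub_add_cancel] at this
    rw [this]
  have hshift : ∫ s, f s = Real.exp (ν * L) * ∫ s, g s := by
    rw [← integral_add_right_eq_self f L]
    simp only [key]
    exact integral_const_mul _ _
  set h : ℝ → ℝ := fun t => Real.exp (-x * Real.cosh t) * Real.cosh (ν * t) with hh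
  have hsym : ∀ t, h t = (f t + f (-t)) / 2 := by
    intro t
    simp only [hf, hh, Real.cosh_eq (ν*t), Real.cosh_neg, mul_neg, Real.exp_neg]
    ring
  have hhint : Integrable h := by
    apply ((hfint.add hfint.comp_neg).div_const 2).congr
    filter_upwards [] with t
    rw [hsym t]
    rfl
  have heven : ∀ t, h (-t) = h t := by
    intro t; simp only [hh, Real.cosh_neg, mul_neg, Real.cosh_neg]
  have hsplit : ∫ t, h t = 2 * ∫ t in Set.Ioi (0:ℝ), h t := by
    rw [← intervalIntegral.integral_Iic_add_Ioi (b := (0:ℝ)) hhint.integrableOn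
      hhint.integrableOn]
    have h2 : ∫ t in Set.Iic (0:ℝ), h t = ∫ t in Set.Ioi (0:ℝ), h t := by
      have h3 := integral_comp_neg_Iic (0:ℝ) h
      simp only [heven, neg_zero] at h3
      exact h3
    rw [h2]; ring
  have hfh : ∫ t, f t = ∫ t, h t := by
    have h1 : ∫ t, f (-t) = ∫ t, f t := integral_neg_eq_self f volume
    have h2 : ∫ t, h t = ((∫ t, f t) + ∫ t, f (-t)) / 2 := by
      rw [← integral_add hfint hfint.comp_neg, ← integral_div]
      congr 1 with t
      exact hsym t
    rw [h2, h1]; ring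
  have hpow : Real.exp (ν * L) = 2 ^ ν * x ^ (-ν) := by
    rw [hL, Real.rpow_def_of_pos (by norm_num : (0:ℝ) < 2),
        Real.rpow_def_of_pos hx, ← Real.exp_add, Real.log_div (by norm_num) hx.ne']
    congr 1; ring
  have hmain : ∫ t in Set.Ioi (0:ℝ), h t = (1/2) * ∫ t, f t := by
    rw [hfh, hsplit]; ring
  rw [show (∫ t in Set.Ioi (0 : ℝ), Real.exp (-x * Real.cosh t) * Real.cosh (ν * t))
      = ∫ t in Set.Ioi (0:ℝ), h t from rfl, hmain, hshift, hpow]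
  rw [show (2:ℝ) ^ (ν-1) = 2^ν / 2 by
    rw [Real.rpow_sub (by norm_num)]; norm_num]
  ring

/-- Reflection / scaling identity. -/
lemma refl_eq {ν c : ℝ} (hc : 0 < c) :
    ∫ s : ℝ, Real.exp (-Real.exp s) * (Real.exp (-c * Real.exp (-s)) - 1) * Real.exp (ν * s)
      = c ^ ν * ∫ r : ℝ, Real.exp (-c * Real.exp (-r)) * (Real.exp (-Real.exp r) - 1) *
          Real.exp (-ν * r) := by
  set M : ℝ := Real.log c with hM
  have hexpM : Real.exp M = c := Real.exp_log hc
  set P : ℝ → ℝ := fun s =>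
    Real.exp (-Real.exp s) * (Real.exp (-c * Real.exp (-s)) - 1) * Real.exp (ν * s) with hP
  have key : ∀ r : ℝ, P (-r + M) = c ^ ν *
      (Real.exp (-c * Real.exp (-r)) * (Real.exp (-Real.exp r) - 1) * Real.exp (-ν * r)) := by
    intro r
    have hc0 : c ≠ 0 := hc.ne'
    simp only [hP]
    rw [show -r + M = M - r by ring, Real.exp_sub, hexpM,
      show -(M - r) = r - M by ring, Real.exp_sub, hexpM]
    rw [show -c * (Real.exp r / c) = -Real.exp r by
      field_simp]
    rw [show ν * (M - r) = ν * M + -ν * r by ring, Real.exp_add]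
    rw [show Real.exp (ν * M) = c ^ ν by
      rw [Real.rpow_def_of_pos hc]; congr 1; ring]
    rw [Real.exp_neg r]
    ring_nf
  have h1 : ∫ r : ℝ, P (-r + M) = ∫ s : ℝ, P s := by
    have h2 : ∫ r : ℝ, P (-r + M) = ∫ r : ℝ, P (r + M) :=
      integral_neg_eq_self (fun u => P (u + M)) volume
    rw [h2, integral_add_right_eq_self P M]
  calc ∫ s : ℝ, P s = ∫ r : ℝ, P (-r + M) := h1.symm
    _ = ∫ r : ℝ, c ^ ν * (Real.exp (-c * Real.exp (-r)) * (Real.exp (-Real.exp r) - 1) *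
          Real.exp (-ν * r)) := by congr 1 with r; exact key r
    _ = c ^ ν * ∫ r : ℝ, Real.exp (-c * Real.exp (-r)) * (Real.exp (-Real.exp r) - 1) *
          Real.exp (-ν * r) := integral_const_mul _ _

/-- Dominated convergence step. -/
lemma tendsto_I {ν : ℝ} (hν0 : 0 < ν) (hν1 : ν < 1) :
    Tendsto (fun x : ℝ => ∫ r : ℝ, Real.exp (-(x^2/4) * Real.exp (-r)) *
        (Real.exp (-Real.exp r) - 1) * Real.exp (-ν * r))
      (𝓝[>] (0:ℝ)) (𝓝 (Real.Gamma (-ν))) := by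
  rw [← CS hν0 hν1]
  have := MeasureTheory.tendsto_integral_filter_of_dominated_convergence
    (μ := (volume : Measure ℝ)) (l := 𝓝[>] (0:ℝ))
    (F := fun (x : ℝ) (r : ℝ) => Real.exp (-(x^2/4) * Real.exp (-r)) *
        (Real.exp (-Real.exp r) - 1) * Real.exp (-ν * r))
    (f := fun r => (Real.exp (-Real.exp r) - 1) * Real.exp (-ν * r))
    (bound := fun r => (1 - Real.exp (-Real.exp r)) * Real.exp (-ν * r))
    ?_ ?_ ?_ ?_
  · exact this
  · filter_upwards [] with x
    apply Continuous.aestronglyMeasurable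
    fun_prop
  · filter_upwards [] with x
    filter_upwards [] with r
    have h1 : Real.exp (-(x^2/4) * Real.exp (-r)) ≤ 1 := by
      apply Real.exp_le_one_iff.mpr
      have : (0:ℝ) ≤ x^2/4 * Real.exp (-r) := by positivity
      linarith
    have h2 : |Real.exp (-Real.exp r) - 1| = 1 - Real.exp (-Real.exp r) :=
      abs_exp_neg_sub_one (Real.exp_pos r).le
    rw [Real.norm_eq_abs, abs_mul, abs_mul, h2, abs_of_pos (Real.exp_pos _),
      abs_of_pos (Real.exp_pos _)]
    apply mul_le_mul_of_nonneg_right _ (Real.exp_pos _).le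
    calc Real.exp (-(x^2/4) * Real.exp (-r)) * (1 - Real.exp (-Real.exp r))
        ≤ 1 * (1 - Real.exp (-Real.exp r)) :=
          mul_le_mul_of_nonneg_right h1 (one_sub_exp_neg_nonneg (Real.exp_pos r).le)
      _ = 1 - Real.exp (-Real.exp r) := one_mul _
  · exact integrable_g hν0 hν1
  · filter_upwards [] with r
    have h1 : Tendsto (fun x : ℝ => Real.exp (-(x^2/4) * Real.exp (-r))) (𝓝[>] (0:ℝ)) (𝓝 1) := by
      have hcont : Continuous (fun x : ℝ => Real.exp (-(x^2/4) * Real.exp (-r))) := by fun_prop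
      have := (hcont.tendsto 0).mono_left
        (nhdsWithin_le_nhds (s := Set.Ioi (0:ℝ)))
      simpa using this
    have := (h1.mul_const (Real.exp (-Real.exp r) - 1)).mul_const (Real.exp (-ν * r))
    simpa [one_mul] using this

end BesselKAux

open BesselKAux

/-- second-order small-argument behaviour of `K_ν` for `ν ∈ (0,1)`:
`x^{−ν}(K_ν(x) − 2^{ν−1}Γ(ν)x^{−ν}) → 2^{−ν−1}Γ(−ν)` as `x → 0⁺`. -/
theorem besselK_small_argument_second_order (ν : ℝ) (hν : ν ∈ Set.Ioo (0 : ℝ) 1) :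
    Tendsto
      (fun x : ℝ => x ^ (-ν) * (besselK ν x - (2 : ℝ) ^ (ν - 1) * Real.Gamma ν * x ^ (-ν)))
      (𝓝[>] 0) (𝓝 ((2 : ℝ) ^ (-ν - 1) * Real.Gamma (-ν))) := by
  obtain ⟨hν0, hν1⟩ := hν
  have hT : Tendsto (fun x : ℝ => (2:ℝ) ^ (-ν - 1) * ∫ r : ℝ,
      Real.exp (-(x^2/4) * Real.exp (-r)) * (Real.exp (-Real.exp r) - 1) * Real.exp (-ν * r))
      (𝓝[>] (0:ℝ)) (𝓝 ((2:ℝ) ^ (-ν - 1) * Real.Gamma (-ν))) :=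
    (tendsto_I hν0 hν1).const_mul _
  apply hT.congr'
  filter_upwards [self_mem_nhdsWithin] with x hx
  have hx : (0:ℝ) < x := hx
  set c : ℝ := x^2/4 with hc
  have hcpos : 0 < c := by positivity
  -- step 2: subtract Gamma
  have hsub : (∫ s : ℝ, Real.exp (-Real.exp s - c * Real.exp (-s)) * Real.exp (ν * s))
      - Real.Gamma ν
      = ∫ s : ℝ, Real.exp (-Real.exp s) * (Real.exp (-c * Real.exp (-s)) - 1) *
          Real.exp (ν * s) := by
    rw [← gamma_line hν0, ← integral_sub (integrable_phi hcpos.le hν0)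
      (gamma_line_integrable hν0)]
    congr 1 with s
    rw [show -Real.exp s - c * Real.exp (-s) = -Real.exp s + -c * Real.exp (-s) by ring,
      Real.exp_add]
    ring
  have hrefl := refl_eq (ν := ν) hcpos
  -- algebra
  rw [besselK_rep hx hν0]
  rw [show 2 ^ (ν - 1) * x ^ (-ν) *
        (∫ s : ℝ, Real.exp (-Real.exp s - x ^ 2 / 4 * Real.exp (-s)) * Real.exp (ν * s)) -
        2 ^ (ν - 1) * Real.Gamma ν * x ^ (-ν)
      = 2 ^ (ν - 1) * x ^ (-ν) *
        ((∫ s : ℝ, Real.exp (-Real.exp s - c * Real.exp (-s)) * Real.exp (ν * s))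
          - Real.Gamma ν) by rw [← hc]; ring]
  rw [hsub, hrefl]
  have hpow1 : x ^ (-ν) * (x ^ (-ν) * c ^ ν) = (2:ℝ) ^ (-(2*ν)) := by
    have h1 : c ^ ν = x ^ (2*ν) * (2:ℝ) ^ (-(2*ν)) := by
      rw [hc, show x^2/4 = (x/2)^2 by ring]
      rw [← Real.rpow_natCast (x/2) 2, ← Real.rpow_mul (by positivity : (0:ℝ) ≤ x/2)]
      rw [Real.div_rpow hx.le (by norm_num : (0:ℝ) ≤ 2)]
      rw [Real.rpow_neg (by norm_num : (0:ℝ) ≤ 2)]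
      norm_num
      rw [mul_comm 2 ν]
      rfl
    rw [h1, ← mul_assoc, ← Real.rpow_add hx, ← mul_assoc, ← Real.rpow_add hx,
      show -ν + -ν + 2*ν = 0 by ring, Real.rpow_zero, one_mul]
  rw [show x ^ (-ν) * (2 ^ (ν - 1) * x ^ (-ν) *
      (c ^ ν * ∫ r : ℝ, Real.exp (-c * Real.exp (-r)) * (Real.exp (-Real.exp r) - 1) *
        Real.exp (-ν * r)))
    = (2:ℝ) ^ (ν - 1) * (x ^ (-ν) * (x ^ (-ν) * c ^ ν)) *
      ∫ r : ℝ, Real.exp (-c * Real.exp (-r)) * (Real.exp (-Real.exp r) - 1) *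
        Real.exp (-ν * r) by ring]
  rw [hpow1, ← Real.rpow_add (by norm_num : (0:ℝ) < 2),
    show ν - 1 + -(2*ν) = -ν - 1 by ring]
end

section
/- For every ν ∈ ℝ, the modified Bessel function of the second kind has the large-argument asymptotics lim_{x→+∞} √(2x/π)·e^{x}·K_ν(x) = 1, i.e. K_ν(x) ~ √(π/(2x))·e^{−x} as x → +∞. -/
open Filter Topology MeasureTheory

namespace BesselAux

open Real Set

/-- The rescaled integrand after the change of variables `t = 2 arsinh (v/√(2x))`. -/
noncomputable def G (ν x v : ℝ) : ℝ :=
  2 / Real.sqrt π *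
    (Real.exp (-v ^ 2) * Real.cosh (ν * (2 * Real.arsinh (v / Real.sqrt (2 * x)))) /
      Real.sqrt (1 + v ^ 2 / (2 * x)))

lemma key_s9 (ν x : ℝ) (hx : 0 < x) :
    Real.sqrt (2 * x / π) * Real.exp x * besselK ν x
      = ∫ v in Ioi (0 : ℝ), G ν x v := by
  set s : ℝ := Real.sqrt (2 * x) with hs
  have hs0 : 0 < s := Real.sqrt_pos.2 (by linarith)
  set f : ℝ → ℝ := fun v => 2 * Real.arsinh (v / s) with hf
  set f' : ℝ → ℝ := fun v => 2 * ((Real.sqrt (1 + (v / s) ^ 2))⁻¹ * (1 / s)) with hf'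
  have hderiv : ∀ v ∈ Ioi (0 : ℝ), HasDerivWithinAt f (f' v) (Ioi 0) v := by
    intro v _
    have h1 : HasDerivAt (fun v : ℝ => v / s) (1 / s) v := by
      simpa using (hasDerivAt_id v).div_const s
    exact (((Real.hasDerivAt_arsinh _).comp v h1).const_mul 2).hasDerivWithinAt
  have hinj : InjOn f (Ioi 0) := by
    intro a _ b _ hab
    have h2 : Real.arsinh (a / s) = Real.arsinh (b / s) := by
      have : 2 * Real.arsinh (a / s) = 2 * Real.arsinh (b / s) := hab
      linarith
    have h3 := Real.arsinh_injective h2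
    field_simp [hs0.ne'] at h3
    exact h3
  have himg : f '' Ioi 0 = Ioi 0 := by
    ext y
    constructor
    · rintro ⟨v, hv, rfl⟩
      have hv' : (0 : ℝ) < v / s := div_pos hv hs0
      have : Real.arsinh 0 < Real.arsinh (v / s) := Real.arsinh_lt_arsinh.2 hv'
      rw [Real.arsinh_zero] at this
      exact mul_pos two_pos this
    · intro hy
      refine ⟨s * Real.sinh (y / 2), mul_pos hs0 (Real.sinh_pos_iff.2 (half_pos hy)), ?_⟩
      have : s * Real.sinh (y / 2) / s = Real.sinh (y / 2) := by
        field_simp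
      rw [hf]; simp only [this, Real.arsinh_sinh]; ring
  have hcov : besselK ν x
      = ∫ v in Ioi (0 : ℝ), |f' v| • (Real.exp (-x * Real.cosh (f v)) * Real.cosh (ν * f v)) := by
    rw [besselK]
    conv_lhs => rw [← himg]
    exact MeasureTheory.integral_image_eq_integral_abs_deriv_smul measurableSet_Ioi hderiv hinj _
  rw [hcov, mul_assoc, ← MeasureTheory.integral_const_mul, ← MeasureTheory.integral_const_mul]
  refine setIntegral_congr_fun measurableSet_Ioi fun v hv => ?_
  have hvs : (v / s) ^ 2 = v ^ 2 / (2 * x) := by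
    rw [div_pow, hs, Real.sq_sqrt (by linarith)]
  have hcosh : Real.cosh (f v) = 1 + v ^ 2 / x := by
    rw [hf]
    simp only
    rw [Real.cosh_two_mul, Real.cosh_arsinh, Real.sinh_arsinh,
      Real.sq_sqrt (by positivity), hvs]
    field_simp
    ring
  have hA : (0:ℝ) < Real.sqrt (1 + (v / s) ^ 2) := Real.sqrt_pos.2 (by positivity)
  have hfpos : 0 < f' v := by
    rw [hf']
    positivity
  rw [smul_eq_mul, abs_of_pos hfpos, hcosh]
  have hexp : Real.exp (-x * (1 + v ^ 2 / x)) = Real.exp (-x) * Real.exp (-v ^ 2) := by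
    rw [← Real.exp_add]
    congr 1
    field_simp
    ring
  rw [hexp, G, hf', hf]
  simp only
  rw [← hvs]
  simp only [← hs]
  have hsp : Real.sqrt (2 * x / π) = s / Real.sqrt π := by
    rw [hs, Real.sqrt_div (by linarith)]
  rw [hsp]
  have hπ : (0:ℝ) < Real.sqrt π := Real.sqrt_pos.2 Real.pi_pos
  have he : Real.exp x * Real.exp (-x) = 1 := by
    rw [← Real.exp_add]; simp
  field_simp
  ring_nf
  linear_combination
      he

lemma cosh_le_exp_abs (t : ℝ) : Real.cosh t ≤ Real.exp |t| := by
  rw [Real.cosh_eq]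
  have h1 : Real.exp t ≤ Real.exp |t| := Real.exp_le_exp.2 (le_abs_self t)
  have h2 : Real.exp (-t) ≤ Real.exp |t| := Real.exp_le_exp.2 (neg_le_abs t)
  linarith

lemma sqrt_two_mul_atTop : Tendsto (fun x : ℝ => Real.sqrt (2 * x)) atTop atTop := by
  apply Filter.tendsto_atTop_atTop.2
  intro b
  refine ⟨(max b 0) ^ 2 / 2, fun a ha => ?_⟩
  calc b ≤ max b 0 := le_max_left _ _
    _ = Real.sqrt ((max b 0) ^ 2) := (Real.sqrt_sq (le_max_right _ _)).symm
    _ ≤ Real.sqrt (2 * a) := Real.sqrt_le_sqrt (by linarith)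

lemma two_mul_atTop : Tendsto (fun x : ℝ => 2 * x) atTop atTop := by
  apply Filter.tendsto_atTop_atTop.2
  intro b
  exact ⟨b / 2, fun a ha => by linarith⟩

lemma G_tendsto (ν : ℝ) :
    Tendsto (fun x : ℝ => ∫ v in Ioi (0 : ℝ), G ν x v) atTop (𝓝 1) := by
  set c : ℝ := Real.sqrt 2 * |ν| with hc
  have hc0 : 0 ≤ c := by positivity
  have hπ : (0:ℝ) < Real.sqrt π := Real.sqrt_pos.2 Real.pi_pos
  set bound : ℝ → ℝ :=
    fun v => 2 / Real.sqrt π * Real.exp (c ^ 2 / 4) * Real.exp (-(v - c / 2) ^ 2) with hbd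
  have hint : ∫ v in Ioi (0 : ℝ), 2 / Real.sqrt π * Real.exp (-v ^ 2) = 1 := by
    rw [MeasureTheory.integral_const_mul]
    simp only [show ∀ v : ℝ, -v ^ 2 = -1 * v ^ 2 from fun v => by ring]
    rw [integral_gaussian_Ioi]
    rw [div_one]
    field_simp
  have hDCT : Tendsto (fun x : ℝ => ∫ v in Ioi (0 : ℝ), G ν x v) atTop
      (𝓝 (∫ v in Ioi (0 : ℝ), 2 / Real.sqrt π * Real.exp (-v ^ 2))) := by
    apply MeasureTheory.tendsto_integral_filter_of_dominated_convergence bound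
    · filter_upwards [eventually_gt_atTop (0:ℝ)] with x hx
      have hden : ∀ v : ℝ, Real.sqrt (1 + v ^ 2 / (2 * x)) ≠ 0 :=
        fun v => (Real.sqrt_pos.2 (by positivity)).ne'
      have c1 : Continuous fun v : ℝ => Real.exp (-v ^ 2) := by continuity
      have c2 : Continuous fun v : ℝ =>
          Real.cosh (ν * (2 * Real.arsinh (v / Real.sqrt (2 * x)))) := by
        exact Real.continuous_cosh.comp (continuous_const.mul (continuous_const.mul
          (Real.continuous_arsinh.comp (continuous_id.div_const _))))
      have c3 : Continuous fun v : ℝ => Real.sqrt (1 + v ^ 2 / (2 * x)) := by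
        apply Real.continuous_sqrt.comp
        continuity
      exact (continuous_const.mul ((c1.mul c2).div c3 hden)).aestronglyMeasurable
    · filter_upwards [eventually_ge_atTop (1:ℝ)] with x hx1
      rw [MeasureTheory.ae_restrict_iff' measurableSet_Ioi]
      refine MeasureTheory.ae_of_all _ fun v hv => ?_
      have hx : (0:ℝ) < x := lt_of_lt_of_le one_pos hx1
      have hv0 : (0:ℝ) < v := hv
      have hs0 : (0:ℝ) < Real.sqrt (2 * x) := Real.sqrt_pos.2 (by linarith)
      set u : ℝ := v / Real.sqrt (2 * x) with hu
      have hu0 : 0 ≤ u := by positivity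
      have har : Real.arsinh u ≤ u := by
        calc Real.arsinh u ≤ Real.arsinh (Real.sinh u) :=
              Real.arsinh_le_arsinh.2 (Real.self_le_sinh_iff.2 hu0)
          _ = u := Real.arsinh_sinh u
      have hs2 : Real.sqrt 2 ≤ Real.sqrt (2 * x) := Real.sqrt_le_sqrt (by linarith)
      have h2s : (0:ℝ) < Real.sqrt 2 := by positivity
      have huv : u ≤ v / Real.sqrt 2 :=
        div_le_div_of_nonneg_left hv0.le h2s hs2
      have hfle : 2 * Real.arsinh u ≤ Real.sqrt 2 * v := by
        have h1 : 2 * (v / Real.sqrt 2) = Real.sqrt 2 * v := by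
          rw [mul_div_assoc', div_eq_iff h2s.ne']
          nlinarith [Real.mul_self_sqrt (show (0:ℝ) ≤ 2 by norm_num)]
        nlinarith [har, huv, h1]
      have hf0 : 0 ≤ 2 * Real.arsinh u := by
        have := Real.arsinh_nonneg_iff.2 hu0
        linarith
      have hcosh : Real.cosh (ν * (2 * Real.arsinh u)) ≤ Real.exp (c * v) := by
        refine (cosh_le_exp_abs _).trans (Real.exp_le_exp.2 ?_)
        rw [abs_mul, abs_of_nonneg hf0, hc]
        calc |ν| * (2 * Real.arsinh u) ≤ |ν| * (Real.sqrt 2 * v) :=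
              mul_le_mul_of_nonneg_left hfle (abs_nonneg ν)
          _ = Real.sqrt 2 * |ν| * v := by ring
      have hden1 : (1:ℝ) ≤ Real.sqrt (1 + v ^ 2 / (2 * x)) := by
        have h0 : (0:ℝ) ≤ v ^ 2 / (2 * x) := by positivity
        have h := Real.sqrt_le_sqrt (show (1:ℝ) ≤ 1 + v ^ 2 / (2 * x) by linarith)
        rwa [Real.sqrt_one] at h
      have hG0 : 0 ≤ G ν x v := by
        rw [G]
        have := Real.cosh_pos (x := ν * (2 * Real.arsinh (v / Real.sqrt (2 * x))))
        positivity
      rw [Real.norm_eq_abs, abs_of_nonneg hG0, G, hbd]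
      have step1 : Real.exp (-v ^ 2) * Real.cosh (ν * (2 * Real.arsinh u)) /
            Real.sqrt (1 + v ^ 2 / (2 * x))
          ≤ Real.exp (-v ^ 2) * Real.cosh (ν * (2 * Real.arsinh u)) := by
        apply div_le_self ?_ hden1
        have := Real.cosh_pos (x := ν * (2 * Real.arsinh u))
        positivity
      have step2 : Real.exp (-v ^ 2) * Real.cosh (ν * (2 * Real.arsinh u))
          ≤ Real.exp (-v ^ 2) * Real.exp (c * v) :=
        mul_le_mul_of_nonneg_left hcosh (Real.exp_nonneg _)
      have step3 : Real.exp (-v ^ 2) * Real.exp (c * v)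
          = Real.exp (c ^ 2 / 4) * Real.exp (-(v - c / 2) ^ 2) := by
        rw [← Real.exp_add, ← Real.exp_add]
        congr 1
        ring
      have h2π : (0:ℝ) ≤ 2 / Real.sqrt π := by positivity
      calc 2 / Real.sqrt π * (Real.exp (-v ^ 2) *
              Real.cosh (ν * (2 * Real.arsinh (v / Real.sqrt (2 * x)))) /
              Real.sqrt (1 + v ^ 2 / (2 * x)))
          ≤ 2 / Real.sqrt π * (Real.exp (-v ^ 2) * Real.exp (c * v)) := by
            refine mul_le_mul_of_nonneg_left ?_ h2π
            exact (step1.trans step2)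
        _ = 2 / Real.sqrt π * Real.exp (c ^ 2 / 4) * Real.exp (-(v - c / 2) ^ 2) := by
            rw [step3]; ring
    · have h1 : Integrable (fun v : ℝ => Real.exp (-(v - c / 2) ^ 2)) := by
        have h := integrable_exp_neg_mul_sq (one_pos (α := ℝ))
        have h2 := h.comp_sub_right (c / 2)
        simpa [neg_one_mul] using h2
      exact (h1.const_mul _).restrict
    · refine MeasureTheory.ae_of_all _ fun v => ?_
      have h1 : Tendsto (fun x : ℝ => v / Real.sqrt (2 * x)) atTop (𝓝 0) :=
        Tendsto.div_atTop tendsto_const_nhds sqrt_two_mul_atTop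
      have h2 : Tendsto (fun x : ℝ => v ^ 2 / (2 * x)) atTop (𝓝 0) :=
        Tendsto.div_atTop tendsto_const_nhds two_mul_atTop
      have hφ : Continuous fun u : ℝ => Real.cosh (ν * (2 * Real.arsinh u)) :=
        Real.continuous_cosh.comp (continuous_const.mul
          (continuous_const.mul Real.continuous_arsinh))
      have hψ : Continuous fun u : ℝ => Real.sqrt (1 + u) :=
        Real.continuous_sqrt.comp (continuous_const.add continuous_id)
      have hcg : Tendsto (fun x : ℝ =>
          Real.cosh (ν * (2 * Real.arsinh (v / Real.sqrt (2 * x))))) atTop (𝓝 1) := by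
        have := (hφ.tendsto 0).comp h1
        simpa [Function.comp_def] using this
      have hdg : Tendsto (fun x : ℝ => Real.sqrt (1 + v ^ 2 / (2 * x))) atTop (𝓝 1) := by
        have := (hψ.tendsto 0).comp h2
        simpa [Function.comp_def] using this
      have := (tendsto_const_nhds (x := Real.exp (-v ^ 2)) (f := atTop (α := ℝ))).mul hcg
      have hfin := tendsto_const_nhds (x := 2 / Real.sqrt π) (f := atTop (α := ℝ)) |>.mul
        ((this.div hdg one_ne_zero))
      simpa [G] using hfin
  rw [hint] at hDCT
  exact hDCT

end BesselAux

/-- large-argument asymptotics of `K_ν`: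
`K_ν(x) ~ √(π/(2x)) e^{−x}` as `x → +∞`, i.e. `√(2x/π) e^x K_ν(x) → 1`. -/
theorem besselK_large_argument (ν : ℝ) :
    Tendsto (fun x : ℝ => Real.sqrt (2 * x / Real.pi) * Real.exp x * besselK ν x)
      atTop (𝓝 1) := by
  refine (BesselAux.G_tendsto ν).congr' ?_
  filter_upwards [eventually_gt_atTop (0:ℝ)] with x hx
  exact (BesselAux.key_s9 ν x hx).symm
end

section
/- Let α ∈ [0,1), E > 0 and ν := (1+α)/2. Then the function u(x) := √x · K_ν(x√E) is square-integrable on (0,∞); equivalently, the function x ↦ x·(K_ν(x√E))² is integrable on (0,∞). -/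
open Filter Topology MeasureTheory

open Real Set in
lemma aux_cosh_lower {t : ℝ} (ht : 0 ≤ t) : 1 + t ^ 2 / 2 ≤ Real.cosh t := by
  have hs : t / 2 ≤ Real.sinh (t / 2) := by
    rcases eq_or_lt_of_le ht with h | h
    · simp [← h]
    · exact (Real.self_lt_sinh_iff.2 (by linarith)).le
  have h1 : Real.cosh t = Real.cosh (t / 2) ^ 2 + Real.sinh (t / 2) ^ 2 := by
    rw [← Real.cosh_two_mul]; ring_nf
  have h2 := Real.cosh_sq (t / 2)
  nlinarith [hs, ht]

open Real Set in
lemma aux_cosh_lower' (t : ℝ) : Real.exp t / 2 ≤ Real.cosh t := by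
  rw [Real.cosh_eq]
  have := Real.exp_pos (-t)
  linarith

open Real Set in
lemma aux_cosh_le_exp {s : ℝ} (hs : 0 ≤ s) : Real.cosh s ≤ Real.exp s := by
  rw [Real.cosh_eq]
  have : Real.exp (-s) ≤ Real.exp s := Real.exp_le_exp.2 (by linarith)
  linarith

open Real Set in
lemma aux_bound1 {x ν t : ℝ} (hx : 0 < x) (ht : 0 ≤ t) (hν0 : 0 ≤ ν) (hν1 : ν ≤ 1) :
    Real.exp (-x * Real.cosh t) * Real.cosh (ν * t) ≤
      Real.exp (2 / x) * Real.exp (-x) * Real.exp (-t) := by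
  have h1 : Real.cosh (ν * t) ≤ Real.exp t := by
    calc Real.cosh (ν * t) ≤ Real.exp (ν * t) := aux_cosh_le_exp (by positivity)
    _ ≤ Real.exp t := Real.exp_le_exp.2 (by nlinarith)
  have h2 : Real.exp (-x * Real.cosh t) * Real.cosh (ν * t) ≤
      Real.exp (-x * Real.cosh t) * Real.exp t := by
    exact mul_le_mul_of_nonneg_left h1 (Real.exp_pos _).le
  refine h2.trans ?_
  rw [← Real.exp_add, ← Real.exp_add, ← Real.exp_add]
  apply Real.exp_le_exp.2
  have h3 := aux_cosh_lower ht
  have h4 : -x * Real.cosh t ≤ -x * (1 + t ^ 2 / 2) := by nlinarith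
  have key : 2 * t - x * t ^ 2 / 2 ≤ 2 / x := by
    rw [le_div_iff₀ hx]
    nlinarith [sq_nonneg (x * t - 2)]
  nlinarith

open Real Set in
lemma aux_bound2 {x ν ν' t : ℝ} (hx : 0 < x) (ht : 0 ≤ t) (hν0 : 0 ≤ ν)
    (hνν' : ν ≤ ν') (hν'1 : ν' ≤ 1) :
    Real.exp (-x * Real.cosh t) * Real.cosh (ν * t) ≤
      (2 / x) ^ ν' * Real.exp (-(ν' - ν) * t) := by
  have hν'0 : 0 ≤ ν' := hν0.trans hνν'
  set s : ℝ := x * Real.exp t / 2 with hs_def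
  have hs : 0 < s := by positivity
  have hsx : s ≤ x * Real.cosh t := by
    have := aux_cosh_lower' t
    rw [hs_def]
    nlinarith
  have h2 : s ^ ν' ≤ Real.exp s := by
    rcases le_total s 1 with h | h
    · exact (Real.rpow_le_one hs.le h hν'0).trans (Real.one_le_exp hs.le)
    · calc s ^ ν' ≤ s ^ (1 : ℝ) := Real.rpow_le_rpow_of_exponent_le h hν'1
      _ = s := Real.rpow_one s
      _ ≤ Real.exp s := by linarith [Real.add_one_le_exp s]
  have h3 : Real.exp (-(x * Real.cosh t)) ≤ s ^ (-ν') := by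
    calc Real.exp (-(x * Real.cosh t)) ≤ Real.exp (-s) := Real.exp_le_exp.2 (by linarith)
    _ ≤ s ^ (-ν') := by
        rw [Real.exp_neg, Real.rpow_neg hs.le]
        exact inv_anti₀ (Real.rpow_pos_of_pos hs ν') h2
  have h4 : s ^ (-ν') = (2 / x) ^ ν' * Real.exp (-(ν' * t)) := by
    have hxe : s = (x / 2) * Real.exp t := by rw [hs_def]; ring
    rw [hxe, Real.mul_rpow (by positivity) (Real.exp_pos t).le,
      ← Real.exp_mul]
    have hhalf : (x / 2 : ℝ) ^ (-ν') = (2 / x) ^ ν' := by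
      rw [Real.rpow_neg (by positivity), ← Real.inv_rpow (by positivity)]
      norm_num
    rw [hhalf]
    ring_nf
  have h5 : Real.cosh (ν * t) ≤ Real.exp (ν * t) := aux_cosh_le_exp (by positivity)
  calc Real.exp (-x * Real.cosh t) * Real.cosh (ν * t)
      ≤ s ^ (-ν') * Real.exp (ν * t) := by
        rw [neg_mul]
        exact mul_le_mul h3 h5 (Real.cosh_pos _).le (Real.rpow_pos_of_pos hs _).le
    _ = (2 / x) ^ ν' * Real.exp (-(ν' - ν) * t) := by
        rw [h4, mul_assoc, ← Real.exp_add]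
        ring_nf

open Real Set in
lemma besselK_nonneg (ν x : ℝ) : 0 ≤ besselK ν x :=
  MeasureTheory.setIntegral_nonneg measurableSet_Ioi fun t _ => by positivity

open Real Set in
lemma besselK_integrand_integrable {x ν : ℝ} (hx : 0 < x) (hν0 : 0 ≤ ν) (hν1 : ν ≤ 1) :
    IntegrableOn (fun t => Real.exp (-x * Real.cosh t) * Real.cosh (ν * t)) (Ioi 0) := by
  have hg : IntegrableOn (fun t : ℝ =>
      Real.exp (2 / x) * Real.exp (-x) * Real.exp (-t)) (Ioi 0) := by
    have h := (exp_neg_integrableOn_Ioi 0 (zero_lt_one (α := ℝ))).const_mul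
      (Real.exp (2 / x) * Real.exp (-x))
    simpa [neg_one_mul, IntegrableOn] using h
  refine hg.mono' ?_ ?_
  · exact (Continuous.aestronglyMeasurable (by fun_prop))
  · filter_upwards [ae_restrict_mem measurableSet_Ioi] with t ht
    rw [Real.norm_eq_abs, abs_of_nonneg (by positivity)]
    exact aux_bound1 hx (le_of_lt ht) hν0 hν1

open Real Set in
lemma integral_exp_neg_mul_Ioi_zero {b : ℝ} (hb : 0 < b) :
    ∫ t in Ioi (0 : ℝ), Real.exp (-(b * t)) = b⁻¹ := by
  have h := integral_comp_mul_left_Ioi (fun u => Real.exp (-u)) 0 hb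
  simp only [mul_zero, smul_eq_mul, integral_exp_neg_Ioi, neg_zero, Real.exp_zero,
    mul_one] at h
  exact h

open Real Set in
lemma besselK_le_exp {x ν : ℝ} (hx : 0 < x) (hν0 : 0 ≤ ν) (hν1 : ν ≤ 1) :
    besselK ν x ≤ Real.exp (2 / x) * Real.exp (-x) := by
  have hg : IntegrableOn (fun t : ℝ =>
      Real.exp (2 / x) * Real.exp (-x) * Real.exp (-t)) (Ioi 0) := by
    have h := (exp_neg_integrableOn_Ioi 0 (zero_lt_one (α := ℝ))).const_mul
      (Real.exp (2 / x) * Real.exp (-x))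
    simpa [neg_one_mul, IntegrableOn] using h
  have h := MeasureTheory.integral_mono_of_nonneg
    (f := fun t => Real.exp (-x * Real.cosh t) * Real.cosh (ν * t))
    (g := fun t : ℝ => Real.exp (2 / x) * Real.exp (-x) * Real.exp (-t))
    (μ := volume.restrict (Ioi 0))
    (by filter_upwards with t; positivity)
    hg
    (by filter_upwards [ae_restrict_mem measurableSet_Ioi] with t ht
        exact aux_bound1 hx (le_of_lt ht) hν0 hν1)
  refine h.trans_eq ?_
  rw [MeasureTheory.integral_const_mul]
  simp [integral_exp_neg_Ioi_zero, integral_exp_Iic_zero]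

open Real Set in
lemma besselK_le_rpow {x ν ν' : ℝ} (hx : 0 < x) (hν0 : 0 ≤ ν)
    (hνν' : ν < ν') (hν'1 : ν' ≤ 1) :
    besselK ν x ≤ (2 / x) ^ ν' * (ν' - ν)⁻¹ := by
  have hb : 0 < ν' - ν := by linarith
  have hg : IntegrableOn (fun t : ℝ =>
      (2 / x) ^ ν' * Real.exp (-(ν' - ν) * t)) (Ioi 0) := by
    exact (exp_neg_integrableOn_Ioi 0 hb).const_mul _
  have h := MeasureTheory.integral_mono_of_nonneg
    (f := fun t => Real.exp (-x * Real.cosh t) * Real.cosh (ν * t))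
    (g := fun t : ℝ => (2 / x) ^ ν' * Real.exp (-(ν' - ν) * t))
    (μ := volume.restrict (Ioi 0))
    (by filter_upwards with t; positivity)
    hg
    (by filter_upwards [ae_restrict_mem measurableSet_Ioi] with t ht
        exact aux_bound2 hx (le_of_lt ht) hν0 hνν'.le hν'1)
  refine h.trans_eq ?_
  rw [MeasureTheory.integral_const_mul]
  simp_rw [neg_mul]
  rw [integral_exp_neg_mul_Ioi_zero hb]

open Real Set in
lemma besselK_stronglyMeasurable (ν : ℝ) : StronglyMeasurable (fun x => besselK ν x) := by
  apply MeasureTheory.StronglyMeasurable.integral_prod_right'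
    (f := fun p : ℝ × ℝ => Real.exp (-p.1 * Real.cosh p.2) * Real.cosh (ν * p.2))
  exact Continuous.stronglyMeasurable (by fun_prop)

/-- the generalised eigenfunction `u(x) = √x K_{(1+α)/2}(x√E)` is
square-integrable on `(0,∞)`; equivalently `x ↦ x (K_{(1+α)/2}(x√E))²` is
integrable on `(0,∞)`. -/
theorem besselK_eigenfunction_square_integrable (α E : ℝ)
    (hα : α ∈ Set.Ico (0 : ℝ) 1) (hE : 0 < E) :
    IntegrableOn
      (fun x : ℝ => (Real.sqrt x * besselK ((1 + α) / 2) (x * Real.sqrt E)) ^ 2)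
      (Set.Ioi 0) ∧
    IntegrableOn
      (fun x : ℝ => x * besselK ((1 + α) / 2) (x * Real.sqrt E) ^ 2)
      (Set.Ioi 0) := by
  obtain ⟨hα0, hα1⟩ := hα
  set ν : ℝ := (1 + α) / 2 with hν_def
  set ν' : ℝ := (3 + α) / 4 with hν'_def
  have hν0 : 0 ≤ ν := by rw [hν_def]; linarith
  have hν1 : ν ≤ 1 := by rw [hν_def]; linarith
  have hνν' : ν < ν' := by rw [hν_def, hν'_def]; linarith
  have hν'1 : ν' ≤ 1 := by rw [hν'_def]; linarith
  have hν'lt : ν' < 1 := by rw [hν'_def]; linarith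
  have hν'0 : 0 ≤ ν' := hν0.trans hνν'.le
  have hsE : 0 < Real.sqrt E := Real.sqrt_pos.2 hE
  set K : ℝ → ℝ := fun y => besselK ν (y * Real.sqrt E) with hK_def
  have hK0 : ∀ y, 0 ≤ K y := fun y => besselK_nonneg _ _
  have hKm : Measurable K :=
    (besselK_stronglyMeasurable ν).measurable.comp (measurable_id.mul_const _)
  have hmeas : AEStronglyMeasurable (fun y : ℝ => y * K y ^ 2)
      (volume.restrict (Set.Ioi (0:ℝ))) :=
    ((measurable_id.mul (hKm.pow_const 2)).aestronglyMeasurable).restrict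
  have h2 : IntegrableOn (fun y : ℝ => y * K y ^ 2) (Set.Ioi 0) := by
    rw [← Set.Ioo_union_Ici_eq_Ioi (zero_lt_one (α := ℝ))]
    apply MeasureTheory.IntegrableOn.union
    · -- near 0
      set D : ℝ := (2 / Real.sqrt E) ^ ν' * (ν' - ν)⁻¹ with hD_def
      have hD0 : 0 ≤ D :=
        mul_nonneg (Real.rpow_nonneg (by positivity) _) (inv_nonneg.2 (by linarith))
      have hg : IntegrableOn (fun y : ℝ => D ^ 2 * y ^ (1 - 2 * ν')) (Set.Ioo (0:ℝ) 1) := by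
        refine Integrable.const_mul ?_ _
        exact (intervalIntegral.integrableOn_Ioo_rpow_iff zero_lt_one).2 (by linarith)
      refine hg.mono' (hmeas.mono_set Set.Ioo_subset_Ioi_self) ?_
      filter_upwards [ae_restrict_mem measurableSet_Ioo] with y hy
      obtain ⟨hy0, _⟩ := hy
      rw [Real.norm_eq_abs, abs_of_nonneg (mul_nonneg hy0.le (pow_nonneg (hK0 y) 2))]
      have hKle : K y ≤ D * y ^ (-ν') := by
        have h := besselK_le_rpow (x := y * Real.sqrt E) (by positivity) hν0 hνν' hν'1
        refine h.trans_eq ?_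
        have he : (2 : ℝ) / (y * Real.sqrt E) = (2 / Real.sqrt E) * y⁻¹ := by
          field_simp
        rw [he, Real.mul_rpow (by positivity) (by positivity),
          Real.inv_rpow hy0.le, ← Real.rpow_neg hy0.le, hD_def]
        ring
      calc y * K y ^ 2 ≤ y * (D * y ^ (-ν')) ^ 2 := by
            apply mul_le_mul_of_nonneg_left _ hy0.le
            exact pow_le_pow_left₀ (hK0 y) hKle 2
        _ = D ^ 2 * y ^ (1 - 2 * ν') := by
            have h1 : (y ^ (-ν')) ^ (2:ℕ) = y ^ (-ν' * 2) := by
              rw [← Real.rpow_natCast (y ^ (-ν')) 2, ← Real.rpow_mul hy0.le]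
              norm_num
            have h2 : y * y ^ (-ν' * 2) = y ^ (1 - 2 * ν') := by
              rw [show (1 : ℝ) - 2 * ν' = 1 + -ν' * 2 by ring, Real.rpow_add hy0,
                Real.rpow_one]
            rw [mul_pow, h1, ← mul_assoc, mul_comm y (D ^ 2), mul_assoc, h2]
    · -- tail
      rw [integrableOn_Ici_iff_integrableOn_Ioi]
      set C : ℝ := Real.exp (2 / Real.sqrt E) ^ 2 * (Real.sqrt E)⁻¹ with hC_def
      have hg : IntegrableOn (fun y : ℝ => C * Real.exp (-(Real.sqrt E * y))) (Set.Ioi 1) := by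
        have h := (exp_neg_integrableOn_Ioi 1 hsE).const_mul C
        simpa [IntegrableOn] using h
      refine hg.mono' (hmeas.mono_set (Set.Ioi_subset_Ioi zero_le_one)) ?_
      filter_upwards [ae_restrict_mem measurableSet_Ioi] with y hy
      have hy1 : (1:ℝ) < y := hy
      have hy0 : (0:ℝ) < y := by linarith
      rw [Real.norm_eq_abs, abs_of_nonneg (mul_nonneg hy0.le (pow_nonneg (hK0 y) 2))]
      have hKle : K y ≤ Real.exp (2 / Real.sqrt E) * Real.exp (-(y * Real.sqrt E)) := by
        have h := besselK_le_exp (x := y * Real.sqrt E) (by positivity) hν0 hν1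
        refine h.trans ?_
        apply mul_le_mul_of_nonneg_right _ (Real.exp_pos _).le
        apply Real.exp_le_exp.2
        apply div_le_div_of_nonneg_left (by norm_num) hsE
        nlinarith
      have key : y * Real.exp (-(y * Real.sqrt E)) ≤ (Real.sqrt E)⁻¹ := by
        have ha : y * Real.sqrt E ≤ Real.exp (y * Real.sqrt E) := by
          linarith [Real.add_one_le_exp (y * Real.sqrt E)]
        rw [Real.exp_neg]
        rw [mul_inv_le_iff₀' (Real.exp_pos _)]
        calc y = (Real.sqrt E)⁻¹ * (y * Real.sqrt E) := by field_simp
          _ ≤ (Real.sqrt E)⁻¹ * Real.exp (y * Real.sqrt E) := by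
              exact mul_le_mul_of_nonneg_left ha (by positivity)
          _ = Real.exp (y * Real.sqrt E) * (Real.sqrt E)⁻¹ := mul_comm _ _
      calc y * K y ^ 2
          ≤ y * (Real.exp (2 / Real.sqrt E) * Real.exp (-(y * Real.sqrt E))) ^ 2 := by
            apply mul_le_mul_of_nonneg_left _ hy0.le
            exact pow_le_pow_left₀ (hK0 y) hKle 2
        _ = Real.exp (2 / Real.sqrt E) ^ 2 *
            ((y * Real.exp (-(y * Real.sqrt E))) * Real.exp (-(y * Real.sqrt E))) := by ring
        _ ≤ Real.exp (2 / Real.sqrt E) ^ 2 *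
            ((Real.sqrt E)⁻¹ * Real.exp (-(y * Real.sqrt E))) := by
            apply mul_le_mul_of_nonneg_left _ (by positivity)
            exact mul_le_mul_of_nonneg_right key (Real.exp_pos _).le
        _ = C * Real.exp (-(Real.sqrt E * y)) := by rw [hC_def, mul_comm y (Real.sqrt E)]; ring
  refine ⟨h2.congr_fun ?_ measurableSet_Ioi, h2⟩
  intro y hy
  have hy0 : (0:ℝ) < y := hy
  simp only [mul_pow, Real.sq_sqrt hy0.le]
  rfl
end

section
/- Let α ∈ [0,1), let γ < 0, set ν := (1+α)/2 and E := ( 2^{1+α}·Γ(ν)·γ / Γ(−ν) )^{2/(1+α)}. Then E > 0, and the function u(x) := √x · K_ν(x√E) has boundary values u₀ := lim_{x→0⁺} x^{α/2}·u(x) and u₁ := lim_{x→0⁺} x^{−(1+α/2)}·(u(x) − u₀·x^{−α/2}) which exist, with u₀ ≠ 0 and u₁ = γ·u₀; that is, u satisfies the boundary condition of self-adjointness g₁ = γ·g₀ characterising the extension A^{[γ]}_{α,R}(0), so −E is its ground-state energy. -/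
open Filter Topology MeasureTheory

open Real Set

lemma besselAux_contOn (b c p : ℝ) :
    ContinuousOn (fun u : ℝ => Real.exp (-(b*u) - c/u) * u ^ p) (Set.Ioi 0) :=
  (((continuousOn_const.mul continuousOn_id).neg.sub
    (continuousOn_const.div continuousOn_id fun u hu => ne_of_gt hu)).rexp).mul
    (continuousOn_id.rpow_const fun u hu => Or.inl (ne_of_gt hu))

lemma besselAux_integrableOn {b c : ℝ} (hb : 0 < b) (hc : 0 < c) (p : ℝ) :
    IntegrableOn (fun u : ℝ => Real.exp (-(b*u) - c/u) * u ^ p) (Set.Ioi 0) := by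
  have hmeas : Measurable (fun u : ℝ => Real.exp (-(b*u) - c/u) * u ^ p) := by
    fun_prop
  rw [← Set.Ioc_union_Ioi_eq_Ioi zero_le_one, integrableOn_union]
  constructor
  · apply Measure.integrableOn_of_bounded (M := Real.exp (p^2/c)) measure_Ioc_lt_top.ne
      hmeas.aestronglyMeasurable
    filter_upwards [ae_restrict_mem measurableSet_Ioc] with u hu
    have hu0 : 0 < u := hu.1
    have hup : u ^ p = Real.exp (p * Real.log u) := by
      rw [Real.rpow_def_of_pos hu0, mul_comm]
    rw [Real.norm_eq_abs, abs_of_nonneg (by positivity), hup, ← Real.exp_add, Real.exp_le_exp]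
    have h1 : p * Real.log u ≤ 2 * |p| * Real.sqrt (1/u) := by
      have hlog : Real.log (1/u) ≤ 2 * Real.sqrt (1/u) := by
        have h2 : Real.log (1/u) = 2 * Real.log (Real.sqrt (1/u)) := by
          rw [Real.log_sqrt (by positivity)]; ring
        have := Real.log_le_sub_one_of_pos (x := Real.sqrt (1/u)) (by positivity)
        nlinarith [Real.sqrt_nonneg (1/u)]
      have : p * Real.log u ≤ |p| * Real.log (1/u) := by
        rw [Real.log_div one_ne_zero (ne_of_gt hu0), Real.log_one]
        have := abs_nonneg p
        have habs : -(|p| * Real.log u) ≤ -(p * Real.log u) ∨ True := Or.inr trivial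
        rcases le_or_gt (Real.log u) 0 with h | h
        · nlinarith [le_abs_self p, neg_abs_le p]
        · have : Real.log u ≤ 0 := Real.log_nonpos (le_of_lt hu0) (by exact_mod_cast hu.2)
          nlinarith [le_abs_self p, neg_abs_le p]
      nlinarith [Real.sqrt_nonneg (1/u), abs_nonneg p, hlog]
    have h2 : 2 * |p| * Real.sqrt (1/u) - c * (1/u) ≤ p^2/c := by
      set s := Real.sqrt (1/u) with hs
      have hs2 : s^2 = 1/u := Real.sq_sqrt (by positivity)
      have hsn : 0 ≤ s := Real.sqrt_nonneg _
      have key : 0 ≤ (c * s - |p|)^2 := sq_nonneg _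
      have : c * (2 * |p| * s - c * s^2) ≤ p^2 := by nlinarith [sq_abs p]
      rw [← hs2, le_div_iff₀ hc]
      nlinarith
    have hbu : 0 ≤ b * u := by positivity
    have hcu : c / u = c * (1/u) := by ring
    nlinarith [h1, h2]
  · apply integrable_of_isBigO_exp_neg (half_pos hb)
      ((besselAux_contOn b c p).mono (fun u (hu : u ∈ Ici 1) => Set.mem_Ioi.mpr (lt_of_lt_of_le one_pos (Set.mem_Ici.mp hu))))
    rw [Asymptotics.isBigO_iff]
    refine ⟨1, ?_⟩
    have htt := tendsto_rpow_mul_exp_neg_mul_atTop_nhds_zero p (b/2) (half_pos hb)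
    filter_upwards [htt.eventually (eventually_le_nhds one_pos) , eventually_ge_atTop (1:ℝ)]
      with u h1 h1u
    have hu0 : (0:ℝ) < u := lt_of_lt_of_le one_pos h1u
    rw [Real.norm_eq_abs, Real.norm_eq_abs, abs_of_nonneg (by positivity),
      abs_of_nonneg (Real.exp_pos _).le, one_mul]
    have : Real.exp (-(b*u) - c/u) ≤ Real.exp (-(b/2*u)) * Real.exp (-(b/2*u)) := by
      rw [← Real.exp_add, Real.exp_le_exp]
      have : 0 ≤ c/u := by positivity
      nlinarith
    calc Real.exp (-(b*u) - c/u) * u ^ p ≤ Real.exp (-(b/2*u)) * Real.exp (-(b/2*u)) * u ^ p := by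
          apply mul_le_mul_of_nonneg_right this (by positivity)
      _ = (u ^ p * Real.exp (-(b/2)*u)) * Real.exp (-(b/2*u)) := by ring_nf
      _ ≤ 1 * Real.exp (-(b/2*u)) := by
          apply mul_le_mul_of_nonneg_right h1 (Real.exp_pos _).le
      _ = Real.exp (-(b/2)*u) := by rw [one_mul]; ring_nf

lemma besselKernel_integrableOn (ν : ℝ) {z : ℝ} (hz : 0 < z) :
    IntegrableOn (fun t : ℝ => Real.exp (-z * Real.cosh t) * Real.cosh (ν * t)) (Set.Ici 0) := by
  rw [integrableOn_Ici_iff_integrableOn_Ioi]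
  apply integrable_of_isBigO_exp_neg one_pos
    (Continuous.continuousOn (by continuity))
  rw [Asymptotics.isBigO_iff]
  refine ⟨1, ?_⟩
  filter_upwards [eventually_ge_atTop (1:ℝ), eventually_ge_atTop (8*(1+|ν|)/z)] with t ht1 ht8
  have ht0 : (0:ℝ) ≤ t := le_trans zero_le_one ht1
  have hexpt : t^2/4 ≤ Real.exp t := by
    have h1 : Real.exp t = Real.exp (t/2) * Real.exp (t/2) := by
      rw [← Real.exp_add]; ring_nf
    have h2 : t/2 + 1 ≤ Real.exp (t/2) := Real.add_one_le_exp _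
    nlinarith [Real.exp_pos (t/2)]
  have hcosh : t^2/8 ≤ Real.cosh t := by
    rw [Real.cosh_eq]
    nlinarith [Real.exp_pos (-t)]
  have hch2 : Real.cosh (ν*t) ≤ Real.exp (|ν| * t) := by
    rw [Real.cosh_eq]
    have e1 : Real.exp (ν*t) ≤ Real.exp (|ν| * t) :=
      Real.exp_le_exp.mpr (by nlinarith [le_abs_self ν])
    have e2 : Real.exp (-(ν*t)) ≤ Real.exp (|ν| * t) :=
      Real.exp_le_exp.mpr (by nlinarith [neg_abs_le ν])
    linarith
  have hzt : 8*(1+|ν|) ≤ z * t := by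
    rw [div_le_iff₀ hz] at ht8; linarith [ht8]
  rw [Real.norm_eq_abs, Real.norm_eq_abs, one_mul,
    abs_of_nonneg (by positivity : (0:ℝ) ≤ Real.exp (-z * Real.cosh t) * Real.cosh (ν*t)),
    abs_of_nonneg (Real.exp_pos _).le]
  calc Real.exp (-z * Real.cosh t) * Real.cosh (ν*t)
      ≤ Real.exp (-(z * (t^2/8))) * Real.exp (|ν| * t) := by
        apply mul_le_mul _ hch2 (by positivity) (Real.exp_pos _).le
        apply Real.exp_le_exp.mpr
        nlinarith [hcosh]
    _ = Real.exp (|ν| * t - z*(t^2/8)) := by rw [← Real.exp_add]; ring_nf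
    _ ≤ Real.exp (-1*t) := by
        apply Real.exp_le_exp.mpr
        nlinarith [abs_nonneg ν]

lemma besselG_contOn (ν z : ℝ) :
    ContinuousOn (fun u : ℝ =>
      Real.exp (-(z/2*u) - (z/2)/u) * ((u ^ (ν-1) + u ^ (-ν-1))/2)) (Set.Ioi 0) := by
  apply ContinuousOn.mul
  · exact (((continuousOn_const.mul continuousOn_id).neg.sub
      (continuousOn_const.div continuousOn_id fun u hu => ne_of_gt hu)).rexp)
  · exact ((continuousOn_id.rpow_const fun u hu => Or.inl (ne_of_gt hu)).add
      (continuousOn_id.rpow_const fun u hu => Or.inl (ne_of_gt hu))).div_const 2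

lemma besselG_key (ν z : ℝ) (t : ℝ) :
    Real.exp (-z * Real.cosh t) * Real.cosh (ν * t)
      = Real.exp (-(z/2*Real.exp t) - (z/2)/Real.exp t)
          * (((Real.exp t) ^ (ν-1) + (Real.exp t) ^ (-ν-1))/2) * Real.exp t := by
  have he := Real.exp_pos t
  have h1 : (Real.exp t) ^ (ν-1) = Real.exp (t*(ν-1)) := by
    rw [Real.rpow_def_of_pos he, Real.log_exp]
  have h2 : (Real.exp t) ^ (-ν-1) = Real.exp (t*(-ν-1)) := by
    rw [Real.rpow_def_of_pos he, Real.log_exp]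
  have h3 : (z/2)/Real.exp t = z/2 * Real.exp (-t) := by
    rw [Real.exp_neg]; ring
  have h4 : Real.exp (t*(ν-1)) * Real.exp t = Real.exp (ν*t) := by
    rw [← Real.exp_add]; ring_nf
  have h5 : Real.exp (t*(-ν-1)) * Real.exp t = Real.exp (-(ν*t)) := by
    rw [← Real.exp_add]; ring_nf
  have h6 : -z * Real.cosh t = -(z/2*Real.exp t) - z/2 * Real.exp (-t) := by
    rw [Real.cosh_eq]; ring
  rw [h6, Real.cosh_eq (ν*t), h1, h2, h3, ← h4, ← h5]
  ring

lemma exp_image_Ioi : Real.exp '' Set.Ioi 0 = Set.Ioi 1 := by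
  ext x
  constructor
  · rintro ⟨t, ht, rfl⟩
    exact Real.one_lt_exp_iff.mpr ht
  · intro hx
    exact ⟨Real.log x, Real.log_pos hx, Real.exp_log (lt_trans one_pos hx)⟩

lemma exp_image_Ici : Real.exp '' Set.Ici 0 = Set.Ici 1 := by
  ext x
  constructor
  · rintro ⟨t, ht, rfl⟩
    simpa using Real.exp_le_exp.mpr ht
  · intro hx
    exact ⟨Real.log x, Real.log_nonneg hx, Real.exp_log (lt_of_lt_of_le one_pos hx)⟩

lemma besselH_integrableOn (ν : ℝ) {z : ℝ} (hz : 0 < z) :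
    IntegrableOn (fun u : ℝ =>
      Real.exp (-(z/2*u) - (z/2)/u) * ((u ^ (ν-1) + u ^ (-ν-1))/2)) (Set.Ioi 0) := by
  have h : (fun u : ℝ => Real.exp (-(z/2*u) - (z/2)/u) * ((u ^ (ν-1) + u ^ (-ν-1))/2))
      = fun u => (Real.exp (-(z/2*u) - (z/2)/u) * u ^ (ν-1)
        + Real.exp (-(z/2*u) - (z/2)/u) * u ^ (-ν-1)) / 2 := by
    funext u; ring
  rw [h]
  exact (((besselAux_integrableOn (half_pos hz) (half_pos hz) (ν-1)).add
    (besselAux_integrableOn (half_pos hz) (half_pos hz) (-ν-1))).div_const 2)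

lemma besselK_eq_Ioi1 (ν : ℝ) {z : ℝ} (hz : 0 < z) :
    besselK ν z = ∫ u in Set.Ioi 1,
      Real.exp (-(z/2*u) - (z/2)/u) * ((u ^ (ν-1) + u ^ (-ν-1))/2) := by
  set g : ℝ → ℝ := fun u => Real.exp (-(z/2*u) - (z/2)/u) * ((u ^ (ν-1) + u ^ (-ν-1))/2) with hgdef
  have key := integral_comp_mul_deriv_Ioi (f := Real.exp) (f' := Real.exp) (g := g) (a := 0)
    Real.continuous_exp.continuousOn Real.tendsto_exp_atTop
    (fun x _ => (Real.hasDerivAt_exp x).hasDerivWithinAt)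
    (exp_image_Ioi ▸ ((besselG_contOn ν z).mono (fun u (hu : u ∈ Set.Ioi 1) =>
      Set.mem_Ioi.mpr (lt_trans one_pos (Set.mem_Ioi.mp hu)))))
    (exp_image_Ici ▸ (Iff.mpr integrableOn_Ici_iff_integrableOn_Ioi
      ((besselH_integrableOn ν hz).mono_set (fun u (hu : u ∈ Set.Ioi 1) => Set.mem_Ioi.mpr (lt_trans one_pos (Set.mem_Ioi.mp hu))))))
    (by
      have h : (fun x => (g ∘ Real.exp) x * Real.exp x)
          = fun t => Real.exp (-z * Real.cosh t) * Real.cosh (ν * t) := by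
        funext t
        exact (besselG_key ν z t).symm
      rw [h]
      exact besselKernel_integrableOn ν hz)
  have h0 : besselK ν z = ∫ x in Set.Ioi 0, (g ∘ Real.exp) x * Real.exp x := by
    unfold besselK
    exact setIntegral_congr_fun measurableSet_Ioi (fun t _ => besselG_key ν z t)
  rw [h0, key, Real.exp_zero]

lemma besselH_symm (ν : ℝ) (z : ℝ) {x : ℝ} (hx : 0 < x) :
    x ^ (-2:ℝ) * (Real.exp (-(z/2*x⁻¹) - (z/2)/x⁻¹) * (((x⁻¹) ^ (ν-1) + (x⁻¹) ^ (-ν-1))/2))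
      = Real.exp (-(z/2*x) - (z/2)/x) * ((x ^ (ν-1) + x ^ (-ν-1))/2) := by
  have hx0 : x ≠ 0 := ne_of_gt hx
  have harg : -(z/2*x⁻¹) - (z/2)/x⁻¹ = -(z/2*x) - (z/2)/x := by
    rw [div_eq_mul_inv (z/2) x⁻¹, inv_inv]; ring
  have h1 : (x⁻¹) ^ (ν-1) = x ^ (1-ν) := by
    rw [← Real.rpow_neg_one x, ← Real.rpow_mul (le_of_lt hx)]; ring_nf
  have h2 : (x⁻¹) ^ (-ν-1) = x ^ (ν+1) := by
    rw [← Real.rpow_neg_one x, ← Real.rpow_mul (le_of_lt hx)]; ring_nf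
  have e1 : x ^ (-2:ℝ) * x ^ (1-ν) = x ^ (-ν-1) := by
    rw [← Real.rpow_add hx]; ring_nf
  have e2 : x ^ (-2:ℝ) * x ^ (ν+1) = x ^ (ν-1) := by
    rw [← Real.rpow_add hx]; ring_nf
  rw [harg, h1, h2]
  calc x ^ (-2:ℝ) * (Real.exp (-(z/2*x) - (z/2)/x) * ((x ^ (1-ν) + x ^ (ν+1))/2))
      = Real.exp (-(z/2*x) - (z/2)/x) * ((x ^ (-2:ℝ) * x ^ (1-ν) + x ^ (-2:ℝ) * x ^ (ν+1))/2) := by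
        ring
    _ = Real.exp (-(z/2*x) - (z/2)/x) * ((x ^ (-ν-1) + x ^ (ν-1))/2) := by rw [e1, e2]
    _ = Real.exp (-(z/2*x) - (z/2)/x) * ((x ^ (ν-1) + x ^ (-ν-1))/2) := by ring

lemma besselH_halves (ν : ℝ) (z : ℝ) :
    (∫ u in Set.Ioo (0:ℝ) 1, Real.exp (-(z/2*u) - (z/2)/u) * ((u ^ (ν-1) + u ^ (-ν-1))/2))
      = ∫ u in Set.Ioi (1:ℝ), Real.exp (-(z/2*u) - (z/2)/u) * ((u ^ (ν-1) + u ^ (-ν-1))/2) := by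
  set h : ℝ → ℝ := fun u => Real.exp (-(z/2*u) - (z/2)/u) * ((u ^ (ν-1) + u ^ (-ν-1))/2)
    with hhdef
  have key := integral_comp_rpow_Ioi (fun y => (Set.Ioi (1:ℝ)).indicator h y) (p := -1)
    (by norm_num)
  have hR : (∫ y in Set.Ioi (0:ℝ), (Set.Ioi (1:ℝ)).indicator h y) = ∫ u in Set.Ioi (1:ℝ), h u := by
    rw [setIntegral_indicator measurableSet_Ioi,
      Set.inter_eq_self_of_subset_right (Set.Ioi_subset_Ioi zero_le_one)]
  have hL : (∫ x in Set.Ioi (0:ℝ),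
        (|(-1:ℝ)| * x ^ ((-1:ℝ) - 1)) • (Set.Ioi (1:ℝ)).indicator h (x ^ (-1:ℝ)))
      = ∫ x in Set.Ioi (0:ℝ), (Set.Ioo (0:ℝ) 1).indicator h x := by
    apply setIntegral_congr_fun measurableSet_Ioi
    intro x hx
    dsimp only
    have hx0 : (0:ℝ) < x := hx
    have hxinv : x ^ (-1:ℝ) = x⁻¹ := Real.rpow_neg_one x
    rw [hxinv]
    simp only [abs_neg, abs_one, one_mul, smul_eq_mul]
    by_cases hlt : x < 1
    · have hmem : x⁻¹ ∈ Set.Ioi (1:ℝ) := Set.mem_Ioi.mpr ((one_lt_inv₀ hx0).mpr hlt)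
      rw [Set.indicator_of_mem hmem, Set.indicator_of_mem (Set.mem_Ioo.mpr ⟨hx0, hlt⟩)]
      have he : (-1:ℝ) - 1 = -2 := by norm_num
      rw [he]
      simp only [hhdef]
      exact besselH_symm ν z hx0
    · have hmem : x⁻¹ ∉ Set.Ioi (1:ℝ) := by
        simp only [Set.mem_Ioi, not_lt]
        exact inv_le_one_of_one_le₀ (not_lt.mp hlt)
      rw [Set.indicator_of_notMem hmem, Set.indicator_of_notMem
        (by simp [Set.mem_Ioo, not_lt.mp hlt] : x ∉ Set.Ioo (0:ℝ) 1)]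
      rw [mul_zero]
  rw [hL, hR] at key
  rw [← key, setIntegral_indicator measurableSet_Ioo,
    Set.inter_eq_self_of_subset_right Set.Ioo_subset_Ioi_self]

lemma besselInv (ν : ℝ) (z : ℝ) :
    (∫ u in Set.Ioi (0:ℝ), Real.exp (-(z/2*u) - (z/2)/u) * u ^ (-ν-1))
      = ∫ u in Set.Ioi (0:ℝ), Real.exp (-(z/2*u) - (z/2)/u) * u ^ (ν-1) := by
  have key := integral_comp_rpow_Ioi
    (fun u => Real.exp (-(z/2*u) - (z/2)/u) * u ^ (ν-1)) (p := -1) (by norm_num)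
  rw [← key]
  apply setIntegral_congr_fun measurableSet_Ioi
  intro x hx
  have hx0 : (0:ℝ) < x := hx
  have hx0' : x ≠ 0 := ne_of_gt hx0
  have hxinv : x ^ (-1:ℝ) = x⁻¹ := Real.rpow_neg_one x
  simp only [hxinv, abs_neg, abs_one, one_mul, smul_eq_mul]
  have harg : -(z/2*x⁻¹) - (z/2)/x⁻¹ = -(z/2*x) - (z/2)/x := by
    rw [div_eq_mul_inv (z/2) x⁻¹, inv_inv]; ring
  have h1 : (x⁻¹) ^ (ν-1) = x ^ (1-ν) := by
    rw [← Real.rpow_neg_one x, ← Real.rpow_mul (le_of_lt hx0)]; ring_nf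
  have e1 : x ^ ((-1:ℝ) - 1) * x ^ (1-ν) = x ^ (-ν-1) := by
    rw [← Real.rpow_add hx0]; ring_nf
  rw [harg, h1, ← e1]
  ring

lemma besselK_halfline (ν : ℝ) {z : ℝ} (hz : 0 < z) :
    besselK ν z = (1/2) * ∫ u in Set.Ioi 0, Real.exp (-(z/2*u) - (z/2)/u) * u ^ (ν-1) := by
  set h : ℝ → ℝ := fun u => Real.exp (-(z/2*u) - (z/2)/u) * ((u ^ (ν-1) + u ^ (-ν-1))/2)
    with hhdef
  have hint : IntegrableOn h (Set.Ioi 0) := besselH_integrableOn ν hz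
  have hsplit : (∫ u in Set.Ioi (0:ℝ), h u) = 2 * ∫ u in Set.Ioi (1:ℝ), h u := by
    rw [← Set.Ioc_union_Ioi_eq_Ioi (zero_le_one (α := ℝ)),
      setIntegral_union (Set.Ioc_disjoint_Ioi le_rfl) measurableSet_Ioi
        (hint.mono_set (Set.Ioc_subset_Ioi_self))
        (hint.mono_set (Set.Ioi_subset_Ioi zero_le_one)),
      integral_Ioc_eq_integral_Ioo, besselH_halves ν z]
    ring
  have e1 : IntegrableOn (fun u : ℝ => Real.exp (-(z/2*u) - (z/2)/u) * u ^ (ν-1))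
      (Set.Ioi 0) := besselAux_integrableOn (half_pos hz) (half_pos hz) (ν-1)
  have e2 : IntegrableOn (fun u : ℝ => Real.exp (-(z/2*u) - (z/2)/u) * u ^ (-ν-1))
      (Set.Ioi 0) := besselAux_integrableOn (half_pos hz) (half_pos hz) (-ν-1)
  have hsum : (∫ u in Set.Ioi (0:ℝ), h u)
      = ∫ u in Set.Ioi (0:ℝ), Real.exp (-(z/2*u) - (z/2)/u) * u ^ (ν-1) := by
    have hfe : h = fun u => (1/2) * (Real.exp (-(z/2*u) - (z/2)/u) * u ^ (ν-1)
        + Real.exp (-(z/2*u) - (z/2)/u) * u ^ (-ν-1)) := by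
      funext u; rw [hhdef]; ring
    rw [hfe, MeasureTheory.integral_const_mul, integral_add e1 e2, besselInv ν z]
    ring
  rw [besselK_eq_Ioi1 ν hz]
  have : (∫ u in Set.Ioi (1:ℝ), h u) = (1/2) * ∫ u in Set.Ioi (0:ℝ), h u := by
    rw [hsplit]; ring
  rw [this, hsum]

lemma besselK_formula (ν : ℝ) {z : ℝ} (hz : 0 < z) :
    besselK ν z = (1/2) * (z/2) ^ (-ν)
      * ∫ s in Set.Ioi 0, Real.exp (-s - (z^2/4)/s) * s ^ (ν-1) := by
  have h2 : (0:ℝ) < z/2 := half_pos hz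
  have key := integral_comp_mul_left_Ioi
    (fun s => Real.exp (-s - (z^2/4)/s) * s ^ (ν-1)) 0 h2
  rw [mul_zero] at key
  have hcong : (∫ u in Set.Ioi (0:ℝ),
        (fun s => Real.exp (-s - (z^2/4)/s) * s ^ (ν-1)) (z/2*u))
      = (z/2) ^ (ν-1) * ∫ u in Set.Ioi (0:ℝ), Real.exp (-(z/2*u) - (z/2)/u) * u ^ (ν-1) := by
    rw [← MeasureTheory.integral_const_mul]
    apply setIntegral_congr_fun measurableSet_Ioi
    intro u hu
    have hu0 : (0:ℝ) < u := hu
    dsimp only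
    have harg : -(z/2*u) - (z^2/4)/(z/2*u) = -(z/2*u) - (z/2)/u := by
      have : (z^2/4)/(z/2*u) = (z/2)/u := by
        rw [div_mul_eq_div_div]
        congr 1
        rw [div_div_eq_mul_div, div_eq_div_iff (ne_of_gt hz) two_ne_zero]
        ring
      rw [this]
    have hpow : (z/2*u) ^ (ν-1) = (z/2) ^ (ν-1) * u ^ (ν-1) :=
      Real.mul_rpow h2.le hu0.le
    rw [harg, hpow]
    ring
  have hA : (∫ u in Set.Ioi (0:ℝ), Real.exp (-(z/2*u) - (z/2)/u) * u ^ (ν-1))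
      = (z/2) ^ (-ν) * ∫ s in Set.Ioi (0:ℝ), Real.exp (-s - (z^2/4)/s) * s ^ (ν-1) := by
    have hne : (z/2) ^ (ν-1) ≠ 0 := ne_of_gt (Real.rpow_pos_of_pos h2 _)
    have := key
    rw [hcong, smul_eq_mul] at this
    have hsolve : (∫ u in Set.Ioi (0:ℝ), Real.exp (-(z/2*u) - (z/2)/u) * u ^ (ν-1))
        = ((z/2) ^ (ν-1))⁻¹ * ((z/2)⁻¹ * ∫ s in Set.Ioi (0:ℝ),
            Real.exp (-s - (z^2/4)/s) * s ^ (ν-1)) := by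
      rw [← this, ← mul_assoc, inv_mul_cancel₀ hne, one_mul]
    rw [hsolve]
    have hce : ((z/2) ^ (ν-1))⁻¹ * (z/2)⁻¹ = (z/2) ^ (-ν) := by
      rw [← Real.rpow_neg_one (z/2), ← Real.rpow_neg h2.le, ← Real.rpow_add h2]
      ring_nf
    rw [← mul_assoc, hce]
  rw [besselK_halfline ν hz, hA]
  ring

lemma besselF_lim1 {ν : ℝ} (hν : 0 < ν) :
    Tendsto (fun c : ℝ => ∫ s in Set.Ioi (0:ℝ), Real.exp (-s - c/s) * s ^ (ν-1))
      (𝓝[>] 0) (𝓝 (Real.Gamma ν)) := by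
  rw [Real.Gamma_eq_integral hν]
  apply tendsto_integral_filter_of_dominated_convergence
    (fun s => Real.exp (-s) * s ^ (ν-1))
  · filter_upwards [self_mem_nhdsWithin] with c (hc : (0:ℝ) < c)
    apply ContinuousOn.aestronglyMeasurable _ measurableSet_Ioi
    exact (((continuousOn_id.neg).sub
      (continuousOn_const.div continuousOn_id fun s hs => ne_of_gt hs)).rexp).mul
      (continuousOn_id.rpow_const fun s hs => Or.inl (ne_of_gt hs))
  · filter_upwards [self_mem_nhdsWithin] with c (hc : (0:ℝ) < c)
    filter_upwards [ae_restrict_mem measurableSet_Ioi] with s (hs : (0:ℝ) < s)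
    rw [Real.norm_eq_abs, abs_of_nonneg (by positivity)]
    apply mul_le_mul_of_nonneg_right _ (by positivity)
    apply Real.exp_le_exp.mpr
    have : 0 ≤ c/s := by positivity
    linarith
  · exact Real.GammaIntegral_convergent hν
  · filter_upwards [ae_restrict_mem measurableSet_Ioi] with s (hs : (0:ℝ) < s)
    have hcont : Tendsto (fun c : ℝ => Real.exp (-s - c/s) * s ^ (ν-1)) (𝓝 0)
        (𝓝 (Real.exp (-s - 0/s) * s ^ (ν-1))) := by
      apply Tendsto.mul _ tendsto_const_nhds
      apply Real.continuous_exp.continuousAt.tendsto.comp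
      apply Tendsto.sub tendsto_const_nhds
      exact (continuous_id.div_const s).tendsto 0
    rw [zero_div, sub_zero] at hcont
    exact hcont.mono_left nhdsWithin_le_nhds

lemma tendsto_integral_Ioi_zero {f : ℝ → ℝ} (hf : IntegrableOn f (Set.Ioi 0)) :
    Tendsto (fun ε : ℝ => ∫ t in Set.Ioi ε, f t) (𝓝[>] 0) (𝓝 (∫ t in Set.Ioi 0, f t)) := by
  have key : Tendsto (fun ε : ℝ => ∫ t in Set.Ioi (0:ℝ), (Set.Ioi ε).indicator f t) (𝓝[>] 0)
      (𝓝 (∫ t in Set.Ioi (0:ℝ), f t)) := by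
    apply tendsto_integral_filter_of_dominated_convergence (fun t => ‖f t‖)
    · filter_upwards [self_mem_nhdsWithin] with ε (hε : (0:ℝ) < ε)
      exact hf.aestronglyMeasurable.indicator measurableSet_Ioi
    · filter_upwards [self_mem_nhdsWithin] with ε (hε : (0:ℝ) < ε)
      filter_upwards [] with t
      exact norm_indicator_le_norm_self f t
    · exact hf.norm
    · filter_upwards [ae_restrict_mem measurableSet_Ioi] with t (ht : (0:ℝ) < t)
      have hev : ∀ᶠ ε in 𝓝[>] (0:ℝ), (Set.Ioi ε).indicator f t = f t := by
        filter_upwards [(eventually_lt_nhds ht).filter_mono nhdsWithin_le_nhds] with ε hε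
        exact Set.indicator_of_mem (Set.mem_Ioi.mpr hε) f
      exact tendsto_const_nhds.congr' (hev.mono fun ε h => h.symm)
  apply key.congr'
  filter_upwards [self_mem_nhdsWithin] with ε (hε : (0:ℝ) < ε)
  rw [setIntegral_indicator measurableSet_Ioi,
    Set.inter_eq_self_of_subset_right (Set.Ioi_subset_Ioi hε.le)]

lemma oneSubExp_le {t : ℝ} (ht : 0 ≤ t) : 1 - Real.exp (-t) ≤ t := by
  have := Real.add_one_le_exp (-t)
  linarith

lemma oneSubExp_nonneg {t : ℝ} (ht : 0 ≤ t) : 0 ≤ 1 - Real.exp (-t) := by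
  have : Real.exp (-t) ≤ Real.exp 0 := Real.exp_le_exp.mpr (by linarith)
  rw [Real.exp_zero] at this
  linarith

lemma Jp_integrable {ν : ℝ} (hν0 : 0 < ν) (hν1 : ν < 1) :
    IntegrableOn (fun t : ℝ => t ^ (-ν-1) * (1 - Real.exp (-t))) (Set.Ioi 0) := by
  have hmeas : Measurable (fun t : ℝ => t ^ (-ν-1) * (1 - Real.exp (-t))) := by fun_prop
  rw [← Set.Ioc_union_Ioi_eq_Ioi (zero_le_one (α := ℝ)), integrableOn_union]
  constructor
  · have hg : IntegrableOn (fun t : ℝ => t ^ (-ν)) (Set.Ioc (0:ℝ) 1) := by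
      have := intervalIntegral.intervalIntegrable_rpow' (a := 0) (b := 1) (r := -ν) (by linarith)
      rwa [intervalIntegrable_iff_integrableOn_Ioc_of_le zero_le_one] at this
    apply hg.mono' (hmeas.aestronglyMeasurable)
    filter_upwards [ae_restrict_mem measurableSet_Ioc] with t ht
    have ht0 : (0:ℝ) < t := ht.1
    have hnn : 0 ≤ t ^ (-ν-1) * (1 - Real.exp (-t)) :=
      mul_nonneg (Real.rpow_nonneg ht0.le _) (oneSubExp_nonneg ht0.le)
    rw [Real.norm_eq_abs, abs_of_nonneg hnn]
    calc t ^ (-ν-1) * (1 - Real.exp (-t)) ≤ t ^ (-ν-1) * t :=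
          mul_le_mul_of_nonneg_left (oneSubExp_le ht0.le) (Real.rpow_nonneg ht0.le _)
      _ = t ^ (-ν) := by
          nth_rewrite 2 [← Real.rpow_one t]
          rw [← Real.rpow_add ht0]
          ring_nf
  · have hg : IntegrableOn (fun t : ℝ => t ^ (-ν-1)) (Set.Ioi (1:ℝ)) :=
      integrableOn_Ioi_rpow_of_lt (by linarith) one_pos
    apply hg.mono' (hmeas.aestronglyMeasurable)
    filter_upwards [ae_restrict_mem measurableSet_Ioi] with t (ht : (1:ℝ) < t)
    have ht0 : (0:ℝ) < t := lt_trans one_pos ht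
    have hnn : 0 ≤ t ^ (-ν-1) * (1 - Real.exp (-t)) :=
      mul_nonneg (Real.rpow_nonneg ht0.le _) (oneSubExp_nonneg ht0.le)
    rw [Real.norm_eq_abs, abs_of_nonneg hnn]
    have h1 : 1 - Real.exp (-t) ≤ 1 := by
      have := Real.exp_pos (-t); linarith
    calc t ^ (-ν-1) * (1 - Real.exp (-t)) ≤ t ^ (-ν-1) * 1 :=
          mul_le_mul_of_nonneg_left h1 (Real.rpow_nonneg ht0.le _)
      _ = t ^ (-ν-1) := mul_one _

lemma Gammaν_integrable {ν : ℝ} (hν1 : ν < 1) :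
    IntegrableOn (fun t : ℝ => Real.exp (-t) * t ^ (-ν)) (Set.Ioi 0) := by
  have h := Real.GammaIntegral_convergent (s := 1-ν) (by linarith)
  simp only [show (1:ℝ)-ν-1 = -ν from by ring] at h
  exact h

lemma Gammaν_eq {ν : ℝ} (hν1 : ν < 1) :
    Real.Gamma (1-ν) = ∫ t in Set.Ioi (0:ℝ), Real.exp (-t) * t ^ (-ν) := by
  rw [Real.Gamma_eq_integral (by linarith : (0:ℝ) < 1-ν)]
  simp only [show (1:ℝ)-ν-1 = -ν from by ring]

lemma J_eval {ν : ℝ} (hν0 : 0 < ν) (hν1 : ν < 1) :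
    (∫ t in Set.Ioi (0:ℝ), t ^ (-ν-1) * (1 - Real.exp (-t))) = Real.Gamma (1-ν) / ν := by
  set p1 : ℝ → ℝ := fun t => t ^ (-ν-1) * (1 - Real.exp (-t)) with hp1
  set p2 : ℝ → ℝ := fun t => (1/ν) * (Real.exp (-t) * t ^ (-ν)) with hp2
  have hint1 : IntegrableOn p1 (Set.Ioi 0) := Jp_integrable hν0 hν1
  have hint2 : IntegrableOn p2 (Set.Ioi 0) := (Gammaν_integrable hν1).const_mul _
  set φ : ℝ → ℝ := fun t => -(1/ν) * ((1 - Real.exp (-t)) * t ^ (-ν)) with hφ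
  have hderiv : ∀ t : ℝ, 0 < t → HasDerivAt φ (p1 t - p2 t) t := by
    intro t ht
    have he : HasDerivAt (fun t : ℝ => Real.exp (-t)) (-Real.exp (-t)) t := by
      simpa [Function.comp_def] using (Real.hasDerivAt_exp (-t)).comp t (hasDerivAt_neg t)
    have h1 : HasDerivAt (fun t : ℝ => 1 - Real.exp (-t)) (Real.exp (-t)) t := by
      simpa using he.const_sub (1:ℝ)
    have h2 : HasDerivAt (fun t : ℝ => t ^ (-ν)) (-ν * t ^ (-ν-1)) t := by
      exact Real.hasDerivAt_rpow_const (x := t) (p := -ν) (Or.inl (ne_of_gt ht))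
    have := ((h1.mul h2).const_mul (-(1/ν)))
    refine this.congr_deriv ?_
    rw [hp1, hp2]
    field_simp
    ring
  have hφtop : Tendsto φ atTop (𝓝 0) := by
    have l1 : Tendsto (fun t : ℝ => 1 - Real.exp (-t)) atTop (𝓝 (1 - 0)) :=
      tendsto_const_nhds.sub Real.tendsto_exp_neg_atTop_nhds_zero
    have l2 : Tendsto (fun t : ℝ => t ^ (-ν)) atTop (𝓝 0) := tendsto_rpow_neg_atTop hν0
    have key : Tendsto (fun t : ℝ => -(1/ν) * ((1 - Real.exp (-t)) * t ^ (-ν))) atTop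
        (𝓝 (-(1/ν) * (((1:ℝ) - 0) * 0))) := (l1.mul l2).const_mul (-(1/ν))
    rw [show (-(1/ν) * (((1:ℝ) - 0) * 0)) = 0 from by ring] at key
    exact key
  have hbound : ∀ ε : ℝ, 0 < ε → (∫ t in Set.Ioi ε, (p1 t - p2 t)) = 0 - φ ε := by
    intro ε hε
    exact integral_Ioi_of_hasDerivAt_of_tendsto
      (ContinuousAt.continuousWithinAt (hderiv ε hε).continuousAt)
      (fun t ht => hderiv t (lt_trans hε ht))
      ((hint1.mono_set (Set.Ioi_subset_Ioi hε.le)).sub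
        (hint2.mono_set (Set.Ioi_subset_Ioi hε.le)))
      hφtop
  have T1 : Tendsto (fun ε : ℝ => ∫ t in Set.Ioi ε, (p1 t - p2 t)) (𝓝[>] 0)
      (𝓝 ((∫ t in Set.Ioi (0:ℝ), p1 t) - ∫ t in Set.Ioi (0:ℝ), p2 t)) := by
    have := tendsto_integral_Ioi_zero (f := fun t => p1 t - p2 t) (hint1.sub hint2)
    rw [integral_sub hint1 hint2] at this
    exact this
  have T2 : Tendsto (fun ε : ℝ => ∫ t in Set.Ioi ε, (p1 t - p2 t)) (𝓝[>] 0) (𝓝 0) := by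
    have heq : ∀ᶠ ε in 𝓝[>] (0:ℝ), (0:ℝ) - φ ε = ∫ t in Set.Ioi ε, (p1 t - p2 t) := by
      filter_upwards [self_mem_nhdsWithin] with ε (hε : (0:ℝ) < ε)
      exact (hbound ε hε).symm
    have hsq : Tendsto (fun ε : ℝ => (0:ℝ) - φ ε) (𝓝[>] 0) (𝓝 0) := by
      have hnn : ∀ᶠ ε in 𝓝[>] (0:ℝ), 0 ≤ 0 - φ ε := by
        filter_upwards [self_mem_nhdsWithin] with ε (hε : (0:ℝ) < ε)
        have h1 : 0 ≤ 1 - Real.exp (-ε) := oneSubExp_nonneg hε.le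
        have h2 : 0 ≤ ε ^ (-ν) := Real.rpow_nonneg hε.le _
        rw [hφ]
        have : 0 ≤ (1/ν) := by positivity
        simp only [zero_sub, neg_mul, neg_neg]
        positivity
      have hub : ∀ᶠ ε in 𝓝[>] (0:ℝ), 0 - φ ε ≤ (1/ν) * ε ^ (1-ν) := by
        filter_upwards [self_mem_nhdsWithin] with ε (hε : (0:ℝ) < ε)
        rw [hφ]
        simp only [zero_sub, neg_mul, neg_neg]
        apply mul_le_mul_of_nonneg_left _ (by positivity)
        calc (1 - Real.exp (-ε)) * ε ^ (-ν) ≤ ε * ε ^ (-ν) :=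
              mul_le_mul_of_nonneg_right (oneSubExp_le hε.le) (Real.rpow_nonneg hε.le _)
          _ = ε ^ (1-ν) := by
              nth_rewrite 1 [← Real.rpow_one ε]
              rw [← Real.rpow_add hε]
              ring_nf
      have hlim : Tendsto (fun ε : ℝ => (1/ν) * ε ^ (1-ν)) (𝓝[>] 0) (𝓝 0) := by
        have hct := (Real.continuousAt_rpow_const 0 (1-ν) (Or.inr (by linarith))).tendsto
        rw [Real.zero_rpow (by linarith : (1:ℝ)-ν ≠ 0)] at hct
        have := (hct.mono_left (nhdsWithin_le_nhds (s := Set.Ioi (0:ℝ)))).const_mul (1/ν)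
        simpa using this
      exact squeeze_zero' hnn hub hlim
    exact hsq.congr' heq
  have huniq := tendsto_nhds_unique T1 T2
  have hP2 : (∫ t in Set.Ioi (0:ℝ), p2 t) = (1/ν) * Real.Gamma (1-ν) := by
    rw [hp2, MeasureTheory.integral_const_mul, ← Gammaν_eq hν1]
  have hres : (∫ t in Set.Ioi (0:ℝ), p1 t) = (1/ν) * Real.Gamma (1-ν) := by
    rw [← hP2]
    linarith [huniq]
  rw [hres]
  ring

lemma J2_eq (ν : ℝ) :
    (∫ u in Set.Ioi (0:ℝ), u ^ (ν-1) * (1 - Real.exp (-(1/u))))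
      = ∫ t in Set.Ioi (0:ℝ), t ^ (-ν-1) * (1 - Real.exp (-t)) := by
  have key := integral_comp_rpow_Ioi
    (fun t => t ^ (-ν-1) * (1 - Real.exp (-t))) (p := -1) (by norm_num)
  rw [← key]
  apply setIntegral_congr_fun measurableSet_Ioi
  intro x hx
  have hx0 : (0:ℝ) < x := hx
  dsimp only
  have hxinv : x ^ (-1:ℝ) = x⁻¹ := Real.rpow_neg_one x
  rw [hxinv]
  simp only [abs_neg, abs_one, one_mul, smul_eq_mul]
  have h1 : (x⁻¹) ^ (-ν-1) = x ^ (ν+1) := by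
    rw [← Real.rpow_neg_one x, ← Real.rpow_mul (le_of_lt hx0)]; ring_nf
  have e1 : x ^ ((-1:ℝ)-1) * x ^ (ν+1) = x ^ (ν-1) := by
    rw [← Real.rpow_add hx0]; ring_nf
  rw [h1, inv_eq_one_div x]
  rw [← e1]
  ring

lemma w_integrable {ν : ℝ} (hν0 : 0 < ν) (hν1 : ν < 1) :
    IntegrableOn (fun u : ℝ => u ^ (ν-1) * (1 - Real.exp (-(1/u)))) (Set.Ioi 0) := by
  have key := (integrableOn_Ioi_comp_rpow_iff
    (fun t : ℝ => t ^ (-ν-1) * (1 - Real.exp (-t))) (p := (-1:ℝ)) (by norm_num)).mpr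
    (Jp_integrable hν0 hν1)
  apply key.congr_fun _ measurableSet_Ioi
  intro x hx
  have hx0 : (0:ℝ) < x := hx
  dsimp only
  have hxinv : x ^ (-1:ℝ) = x⁻¹ := Real.rpow_neg_one x
  rw [hxinv]
  simp only [abs_neg, abs_one, one_mul, smul_eq_mul]
  have h1 : (x⁻¹) ^ (-ν-1) = x ^ (ν+1) := by
    rw [← Real.rpow_neg_one x, ← Real.rpow_mul (le_of_lt hx0)]; ring_nf
  have e1 : x ^ ((-1:ℝ)-1) * x ^ (ν+1) = x ^ (ν-1) := by
    rw [← Real.rpow_add hx0]; ring_nf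
  rw [h1, inv_eq_one_div x, ← e1]
  ring

lemma besselF_sub {ν : ℝ} (hν0 : 0 < ν) {c : ℝ} (hc : 0 < c) :
    (∫ s in Set.Ioi (0:ℝ), Real.exp (-s - c/s) * s ^ (ν-1)) - Real.Gamma ν
      = c ^ ν * ∫ u in Set.Ioi (0:ℝ),
          (Real.exp (-(c*u) - 1/u) - Real.exp (-(c*u))) * u ^ (ν-1) := by
  have hI1 : IntegrableOn (fun s : ℝ => Real.exp (-s - c/s) * s ^ (ν-1)) (Set.Ioi 0) := by
    have := besselAux_integrableOn (b := 1) one_pos hc (ν-1)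
    simpa using this
  have hI2 : IntegrableOn (fun s : ℝ => Real.exp (-s) * s ^ (ν-1)) (Set.Ioi 0) :=
    Real.GammaIntegral_convergent hν0
  have hdiff : (∫ s in Set.Ioi (0:ℝ), Real.exp (-s - c/s) * s ^ (ν-1)) - Real.Gamma ν
      = ∫ s in Set.Ioi (0:ℝ), (Real.exp (-s - c/s) - Real.exp (-s)) * s ^ (ν-1) := by
    rw [Real.Gamma_eq_integral hν0]
    rw [show (fun s : ℝ => (Real.exp (-s - c/s) - Real.exp (-s)) * s ^ (ν-1))
        = fun s : ℝ => Real.exp (-s - c/s) * s ^ (ν-1) - Real.exp (-s) * s ^ (ν-1) from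
        funext fun s => by ring]
    rw [integral_sub hI1 hI2]
  have key := integral_comp_mul_left_Ioi
    (fun s => (Real.exp (-s - c/s) - Real.exp (-s)) * s ^ (ν-1)) 0 hc
  rw [mul_zero] at key
  have hcong : (∫ u in Set.Ioi (0:ℝ),
        (fun s => (Real.exp (-s - c/s) - Real.exp (-s)) * s ^ (ν-1)) (c*u))
      = c ^ (ν-1) * ∫ u in Set.Ioi (0:ℝ),
          (Real.exp (-(c*u) - 1/u) - Real.exp (-(c*u))) * u ^ (ν-1) := by
    rw [← MeasureTheory.integral_const_mul]
    apply setIntegral_congr_fun measurableSet_Ioi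
    intro u hu
    have hu0 : (0:ℝ) < u := hu
    dsimp only
    have harg : c/(c*u) = 1/u := by
      rw [div_mul_eq_div_div, div_self (ne_of_gt hc)]
    have hpow : (c*u) ^ (ν-1) = c ^ (ν-1) * u ^ (ν-1) := Real.mul_rpow hc.le hu0.le
    rw [harg, hpow]
    ring
  rw [hdiff]
  have hg : (∫ s in Set.Ioi (0:ℝ), (Real.exp (-s - c/s) - Real.exp (-s)) * s ^ (ν-1))
      = c * (c ^ (ν-1) * ∫ u in Set.Ioi (0:ℝ),
          (Real.exp (-(c*u) - 1/u) - Real.exp (-(c*u))) * u ^ (ν-1)) := by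
    rw [← hcong, key, smul_eq_mul, ← mul_assoc, mul_inv_cancel₀ (ne_of_gt hc), one_mul]
  rw [hg, ← mul_assoc]
  congr 1
  nth_rewrite 1 [← Real.rpow_one c]
  rw [← Real.rpow_add hc]
  ring_nf

lemma G_lim {ν : ℝ} (hν0 : 0 < ν) (hν1 : ν < 1) :
    Tendsto (fun c : ℝ => ∫ u in Set.Ioi (0:ℝ),
        (Real.exp (-(c*u) - 1/u) - Real.exp (-(c*u))) * u ^ (ν-1)) (𝓝[>] 0)
      (𝓝 (∫ u in Set.Ioi (0:ℝ), (Real.exp (-(1/u)) - 1) * u ^ (ν-1))) := by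
  apply tendsto_integral_filter_of_dominated_convergence
    (fun u => u ^ (ν-1) * (1 - Real.exp (-(1/u))))
  · filter_upwards [self_mem_nhdsWithin] with c (hc : (0:ℝ) < c)
    have : Measurable (fun u : ℝ =>
        (Real.exp (-(c*u) - 1/u) - Real.exp (-(c*u))) * u ^ (ν-1)) := by fun_prop
    exact this.aestronglyMeasurable
  · filter_upwards [self_mem_nhdsWithin] with c (hc : (0:ℝ) < c)
    filter_upwards [ae_restrict_mem measurableSet_Ioi] with u (hu : (0:ℝ) < u)
    have h1 : Real.exp (-(c*u) - 1/u) - Real.exp (-(c*u))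
        = -(Real.exp (-(c*u)) * (1 - Real.exp (-(1/u)))) := by
      rw [show -(c*u) - 1/u = -(c*u) + -(1/u) from by ring, Real.exp_add]
      ring
    rw [Real.norm_eq_abs, h1, abs_mul, abs_neg]
    have h2 : 0 ≤ 1 - Real.exp (-(1/u)) := oneSubExp_nonneg (by positivity)
    rw [abs_of_nonneg (mul_nonneg (Real.exp_pos _).le h2), abs_of_nonneg
      (Real.rpow_nonneg hu.le _)]
    have h3 : Real.exp (-(c*u)) ≤ 1 := by
      rw [← Real.exp_zero]
      exact Real.exp_le_exp.mpr (by nlinarith)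
    calc Real.exp (-(c*u)) * (1 - Real.exp (-(1/u))) * u ^ (ν-1)
        ≤ 1 * (1 - Real.exp (-(1/u))) * u ^ (ν-1) := by
          apply mul_le_mul_of_nonneg_right _ (Real.rpow_nonneg hu.le _)
          exact mul_le_mul_of_nonneg_right h3 h2
      _ = u ^ (ν-1) * (1 - Real.exp (-(1/u))) := by ring
  · exact w_integrable hν0 hν1
  · filter_upwards [ae_restrict_mem measurableSet_Ioi] with u (hu : (0:ℝ) < u)
    have hcont : Continuous (fun c : ℝ =>
        (Real.exp (-(c*u) - 1/u) - Real.exp (-(c*u))) * u ^ (ν-1)) := by fun_prop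
    have h0 : (Real.exp (-((0:ℝ)*u) - 1/u) - Real.exp (-((0:ℝ)*u))) * u ^ (ν-1)
        = (Real.exp (-(1/u)) - 1) * u ^ (ν-1) := by norm_num
    exact h0 ▸ ((hcont.tendsto 0).mono_left nhdsWithin_le_nhds)

lemma sq_map_lim {a : ℝ} (ha : 0 < a) :
    Tendsto (fun x : ℝ => a * x^2) (𝓝[>] 0) (𝓝[>] 0) := by
  rw [tendsto_nhdsWithin_iff]
  constructor
  · have : Continuous (fun x : ℝ => a * x^2) := by continuity
    have := (this.tendsto 0).mono_left (nhdsWithin_le_nhds (s := Set.Ioi (0:ℝ)))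
    simpa using this
  · filter_upwards [self_mem_nhdsWithin] with x (hx : (0:ℝ) < x)
    exact Set.mem_Ioi.mpr (by positivity)

lemma besselF_lim2 {ν : ℝ} (hν0 : 0 < ν) (hν1 : ν < 1) {a : ℝ} (ha : 0 < a) :
    Tendsto (fun x : ℝ => x ^ (-(2*ν))
        * ((∫ s in Set.Ioi (0:ℝ), Real.exp (-s - (a*x^2)/s) * s ^ (ν-1)) - Real.Gamma ν))
      (𝓝[>] 0) (𝓝 (-(a ^ ν * (Real.Gamma (1-ν) / ν)))) := by
  have hJ : (∫ u in Set.Ioi (0:ℝ), (Real.exp (-(1/u)) - 1) * u ^ (ν-1))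
      = -(Real.Gamma (1-ν) / ν) := by
    have h1 : (fun u : ℝ => (Real.exp (-(1/u)) - 1) * u ^ (ν-1))
        = fun u : ℝ => -(u ^ (ν-1) * (1 - Real.exp (-(1/u)))) := by
      funext u; ring
    rw [h1, integral_neg, J2_eq ν, J_eval hν0 hν1]
  have hmain : Tendsto (fun x : ℝ => a ^ ν * ∫ u in Set.Ioi (0:ℝ),
        (Real.exp (-(a*x^2*u) - 1/u) - Real.exp (-(a*x^2*u))) * u ^ (ν-1)) (𝓝[>] 0)
      (𝓝 (-(a ^ ν * (Real.Gamma (1-ν) / ν)))) := by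
    have h := ((G_lim hν0 hν1).comp (sq_map_lim ha)).const_mul (a ^ ν)
    rw [hJ, show a ^ ν * -(Real.Gamma (1-ν) / ν) = -(a ^ ν * (Real.Gamma (1-ν) / ν)) from by
      ring] at h
    simpa [Function.comp] using h
  apply hmain.congr'
  filter_upwards [self_mem_nhdsWithin] with x (hx : (0:ℝ) < x)
  have hc : (0:ℝ) < a * x^2 := by positivity
  rw [besselF_sub hν0 hc]
  have hpow : (a*x^2) ^ ν = a ^ ν * x ^ (2*ν) := by
    rw [Real.mul_rpow ha.le (by positivity), ← Real.rpow_natCast x 2,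
      ← Real.rpow_mul hx.le]
    norm_num
  rw [hpow]
  have hx2 : x ^ (-(2*ν)) * (a ^ ν * x ^ (2*ν)) = a ^ ν := by
    rw [mul_comm (a ^ ν) _, ← mul_assoc, ← Real.rpow_add hx]
    norm_num
  rw [← mul_assoc, hx2]

/-- for `γ < 0` and `E = (2^{1+α} Γ(ν) γ / Γ(−ν))^{2/(1+α)}` with
`ν = (1+α)/2`, the eigenfunction `u(x) = √x K_ν(x√E)` satisfies the boundary
condition `u₁ = γ u₀` characterising the extension `A^{[γ]}_{α,R}(0)`, with
nontrivial boundary value `u₀ ≠ 0`; hence `−E` is its ground-state energy. -/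
theorem ground_state_boundary_condition_IR (α γ : ℝ) (hα : α ∈ Set.Ico (0 : ℝ) 1)
    (hγ : γ < 0) :
    let ν : ℝ := (1 + α) / 2
    let E : ℝ := ((2 : ℝ) ^ (1 + α) * Real.Gamma ν * γ / Real.Gamma (-ν)) ^ (2 / (1 + α))
    let u : ℝ → ℝ := fun x => Real.sqrt x * besselK ν (x * Real.sqrt E)
    0 < E ∧
    ∃ u₀ u₁ : ℝ,
      Tendsto (fun x : ℝ => x ^ (α / 2) * u x) (𝓝[>] 0) (𝓝 u₀) ∧
      Tendsto (fun x : ℝ => x ^ (-(1 + α / 2)) * (u x - u₀ * x ^ (-(α / 2))))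
        (𝓝[>] 0) (𝓝 u₁) ∧
      u₀ ≠ 0 ∧ u₁ = γ * u₀ := by
  intro ν E u
  obtain ⟨hα0, hα1⟩ := hα
  have hν : ν = (1+α)/2 := rfl
  have hν0 : 0 < ν := by rw [hν]; linarith
  have hν1 : ν < 1 := by rw [hν]; linarith
  have hΓν : 0 < Real.Gamma ν := Real.Gamma_pos_of_pos hν0
  have hΓ1ν : 0 < Real.Gamma (1-ν) := Real.Gamma_pos_of_pos (by linarith)
  have hΓrec : Real.Gamma (1-ν) = -ν * Real.Gamma (-ν) := by
    have := Real.Gamma_add_one (s := -ν) (by simpa using ne_of_gt hν0)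
    rwa [show -ν + 1 = 1 - ν from by ring] at this
  have hΓmν : Real.Gamma (-ν) < 0 := by nlinarith
  have h2p : (0:ℝ) < (2:ℝ) ^ (1+α) := Real.rpow_pos_of_pos two_pos _
  set B : ℝ := (2 : ℝ) ^ (1 + α) * Real.Gamma ν * γ / Real.Gamma (-ν) with hB
  have hBpos : 0 < B := by
    rw [hB]
    apply div_pos_of_neg_of_neg _ hΓmν
    have : 0 < (2:ℝ) ^ (1+α) * Real.Gamma ν := mul_pos h2p hΓν
    nlinarith
  have hE : E = B ^ (2/(1+α)) := rfl
  have hEpos : 0 < E := by rw [hE]; exact Real.rpow_pos_of_pos hBpos _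
  have hc : 0 < Real.sqrt E := Real.sqrt_pos.mpr hEpos
  set a : ℝ := E/4 with ha'
  have ha : 0 < a := by rw [ha']; linarith
  set C : ℝ := (1/2) * (Real.sqrt E/2) ^ (-ν) with hC
  have hCpos : 0 < C := by
    rw [hC]
    have := Real.rpow_pos_of_pos (half_pos hc) (-ν)
    linarith
  set F : ℝ → ℝ := fun c => ∫ s in Set.Ioi (0:ℝ), Real.exp (-s - c/s) * s ^ (ν-1) with hF
  -- pointwise description of u
  have hux : ∀ x : ℝ, 0 < x → u x = C * (x ^ (-(α/2)) * F (a*x^2)) := by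
    intro x hx
    have hz : 0 < x * Real.sqrt E := mul_pos hx hc
    have hform := besselK_formula ν hz
    have harg : (x * Real.sqrt E)^2/4 = a*x^2 := by
      rw [mul_pow, Real.sq_sqrt hEpos.le, ha']
      ring
    have hpow : (x * Real.sqrt E/2) ^ (-ν) = x ^ (-ν) * (Real.sqrt E/2) ^ (-ν) := by
      rw [show x * Real.sqrt E/2 = x * (Real.sqrt E/2) from by ring,
        Real.mul_rpow hx.le (by positivity)]
    have hsq : Real.sqrt x = x ^ ((1:ℝ)/2) := Real.sqrt_eq_rpow x
    have hxe : x ^ ((1:ℝ)/2) * x ^ (-ν) = x ^ (-(α/2)) := by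
      rw [← Real.rpow_add hx, hν]
      ring_nf
    show Real.sqrt x * besselK ν (x * Real.sqrt E) = _
    rw [hform, harg, hpow, hsq, hC, hF]
    dsimp only
    rw [← hxe]
    ring
  set u₀ : ℝ := C * Real.Gamma ν with hu₀
  set u₁ : ℝ := C * (-(a ^ ν * (Real.Gamma (1-ν) / ν))) with hu₁
  have hF1 : Tendsto (fun x : ℝ => F (a*x^2)) (𝓝[>] 0) (𝓝 (Real.Gamma ν)) := by
    exact (besselF_lim1 hν0).comp (sq_map_lim ha)
  refine ⟨hEpos, u₀, u₁, ?_, ?_, ?_, ?_⟩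
  · -- first limit
    have h := hF1.const_mul C
    apply h.congr'
    filter_upwards [self_mem_nhdsWithin] with x (hx : (0:ℝ) < x)
    rw [hux x hx]
    have hxa : x ^ (α/2) * x ^ (-(α/2)) = 1 := by
      rw [← Real.rpow_add hx]
      norm_num
    calc C * F (a*x^2) = (x ^ (α/2) * x ^ (-(α/2))) * (C * F (a*x^2)) := by
          rw [hxa]; ring
      _ = x ^ (α/2) * (C * (x ^ (-(α/2)) * F (a*x^2))) := by ring
  · -- second limit
    have h := (besselF_lim2 hν0 hν1 ha).const_mul C
    apply h.congr'
    filter_upwards [self_mem_nhdsWithin] with x (hx : (0:ℝ) < x)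
    rw [hux x hx]
    have hxa : x ^ (-(1 + α/2)) * x ^ (-(α/2)) = x ^ (-(2*ν)) := by
      rw [← Real.rpow_add hx, hν]
      ring_nf
    calc C * (x ^ (-(2*ν)) * (F (a*x^2) - Real.Gamma ν))
        = (x ^ (-(1 + α/2)) * x ^ (-(α/2))) * (C * (F (a*x^2) - Real.Gamma ν)) := by
          rw [hxa]; ring
      _ = x ^ (-(1 + α/2)) * (C * (x ^ (-(α/2)) * F (a*x^2)) - u₀ * x ^ (-(α/2))) := by
          rw [hu₀]; ring
  · exact ne_of_gt (mul_pos hCpos hΓν)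
  · -- boundary relation u₁ = γ u₀
    have hGdiv : Real.Gamma (1-ν) / ν = -Real.Gamma (-ν) := by
      rw [hΓrec]
      field_simp
    have hEν : E ^ ν = B := by
      rw [hE, ← Real.rpow_mul hBpos.le]
      rw [show 2/(1+α) * ν = 1 from by rw [hν]; field_simp, Real.rpow_one]
    have h4ν : (4:ℝ) ^ ν = (2:ℝ) ^ (1+α) := by
      rw [show (4:ℝ) = (2:ℝ) ^ (2:ℝ) from by
          rw [show (2:ℝ) ^ (2:ℝ) = (2:ℝ) ^ (2:ℕ) from Real.rpow_natCast 2 2]; norm_num,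
        ← Real.rpow_mul (by norm_num : (0:ℝ) ≤ 2)]
      congr 1
      rw [hν]; ring
    have haν : a ^ ν = B / (2:ℝ) ^ (1+α) := by
      rw [ha', Real.div_rpow hEpos.le (by norm_num), hEν, h4ν]
    have hkey : a ^ ν * Real.Gamma (-ν) = γ * Real.Gamma ν := by
      rw [haν, hB]
      field_simp [ne_of_gt h2p, ne_of_lt hΓmν]
    rw [hu₁, hu₀, hGdiv]
    rw [show -(a ^ ν * -Real.Gamma (-ν)) = a ^ ν * Real.Gamma (-ν) from by ring, hkey]
    ring
end

section
/- Let a ∈ ℂ and γ ∈ ℝ, and let g₀⁻, g₁⁻, g₀⁺, g₁⁺ be complex numbers satisfying the type-II_a boundary conditions g₀⁺ = a·g₀⁻ and g₁⁻ + conj(a)·g₁⁺ = γ·g₀⁻. Then −Im( conj(g₀⁻)·g₁⁻ ) = Im( conj(g₀⁺)·g₁⁺ ). (This expresses the conservation of the probability current across the Grushin singularity: the left and right limiting currents J^± = ±2(1+α)·Im(conj(g₀^±)·g₁^±) coincide.) -/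
/-- conservation of the probability current across the Grushin
singularity for the type-`II_a` boundary conditions: if `g₀⁺ = a g₀⁻` and
`g₁⁻ + conj(a) g₁⁺ = γ g₀⁻` with `γ ∈ ℝ`, then
`−Im(conj(g₀⁻) g₁⁻) = Im(conj(g₀⁺) g₁⁺)`. -/
theorem current_conservation_IIa (a : ℂ) (γ : ℝ) (g0m g1m g0p g1p : ℂ)
    (h0 : g0p = a * g0m) (h1 : g1m + (starRingEnd ℂ a) * g1p = (γ : ℂ) * g0m) :
    -((starRingEnd ℂ g0m * g1m).im) = ((starRingEnd ℂ g0p * g1p).im) := by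
  have hm : g1m = (γ : ℂ) * g0m - (starRingEnd ℂ a) * g1p := by linear_combination h1
  subst h0 hm
  simp [Complex.ext_iff, Complex.mul_im, Complex.mul_re]
  ring
end

section
/- For every α ∈ (0,1), the infimum over b > 0 of the function b ↦ (1 + b²(1+α)²)·b^{−2α/(1+α)} equals (1+α)^{(1+3α)/(1+α)} · α^{−α/(1+α)}, and it is attained at b = √α/(1+α). -/
/-- for `α ∈ (0,1)`, the infimum over `b > 0` of
`b ↦ (1 + b²(1+α)²)·b^{−2α/(1+α)}` equals `(1+α)^{(1+3α)/(1+α)} α^{−α/(1+α)}`,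
attained at `b = √α/(1+α)`. -/
theorem variational_minimisation (α : ℝ) (hα : α ∈ Set.Ioo (0 : ℝ) 1) :
    let f : ℝ → ℝ := fun b => (1 + b ^ 2 * (1 + α) ^ 2) * b ^ (-(2 * α / (1 + α)))
    let m : ℝ := (1 + α) ^ ((1 + 3 * α) / (1 + α)) * α ^ (-(α / (1 + α)))
    IsLeast (f '' Set.Ioi 0) m ∧ f (Real.sqrt α / (1 + α)) = m := by
  obtain ⟨hα0, hα1⟩ := hα
  intro f m
  have h1α : (0:ℝ) < 1 + α := by linarith
  have hb0 : (0:ℝ) < Real.sqrt α / (1 + α) := div_pos (Real.sqrt_pos.mpr hα0) h1α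
  -- equality at the minimizer
  have heq : f (Real.sqrt α / (1 + α)) = m := by
    show (1 + (Real.sqrt α / (1 + α)) ^ 2 * (1 + α) ^ 2) *
        (Real.sqrt α / (1 + α)) ^ (-(2 * α / (1 + α))) = m
    have h1 : (Real.sqrt α / (1 + α)) ^ 2 * (1 + α) ^ 2 = α := by
      rw [div_pow, Real.sq_sqrt hα0.le]
      field_simp
    rw [h1]
    have h2 : (Real.sqrt α / (1 + α)) ^ (-(2 * α / (1 + α)))
        = α ^ (-(α / (1 + α))) * (1 + α) ^ (2 * α / (1 + α)) := by
      rw [Real.div_rpow (Real.sqrt_nonneg _) h1α.le, Real.sqrt_eq_rpow,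
        ← Real.rpow_mul hα0.le, Real.rpow_neg h1α.le, div_eq_mul_inv, inv_inv]
      congr 2
      ring
    rw [h2, ← mul_assoc, mul_comm (1 + α) _, mul_assoc,
      ← Real.rpow_one_add' (by positivity) (by
        intro h
        have : (1:ℝ) + 2 * α / (1 + α) = 0 := by linarith [h]
        nlinarith [div_pos (by nlinarith : (0:ℝ) < 2 * α) h1α])]
    have h3 : (1:ℝ) + 2 * α / (1 + α) = (1 + 3 * α) / (1 + α) := by
      field_simp; ring
    rw [h3, mul_comm]
  refine ⟨⟨⟨Real.sqrt α / (1 + α), hb0, heq⟩, ?_⟩, heq⟩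
  rintro y ⟨b, hb, rfl⟩
  have hb : (0:ℝ) < b := hb
  -- weighted AM-GM
  have hw : 1 / (1 + α) + α / (1 + α) = 1 := by field_simp
  have hp2 : (0:ℝ) ≤ (1 + α) ^ 3 / α * b ^ 2 := by positivity
  have hgm := Real.geom_mean_le_arith_mean2_weighted
    (by positivity) (by positivity) (le_of_lt h1α) hp2 hw
  have harith : 1 / (1 + α) * (1 + α) + α / (1 + α) * ((1 + α) ^ 3 / α * b ^ 2)
      = 1 + b ^ 2 * (1 + α) ^ 2 := by
    field_simp
  have hgeom : (1 + α) ^ (1 / (1 + α)) * ((1 + α) ^ 3 / α * b ^ 2) ^ (α / (1 + α))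
      = m * b ^ (2 * α / (1 + α)) := by
    rw [Real.mul_rpow (by positivity) (by positivity),
      Real.div_rpow (by positivity) hα0.le]
    have hb2 : (b ^ 2 : ℝ) ^ (α / (1 + α)) = b ^ (2 * α / (1 + α)) := by
      rw [← Real.rpow_natCast b 2, ← Real.rpow_mul hb.le]
      norm_num
      ring_nf
    have hc3 : ((1 + α) ^ 3 : ℝ) ^ (α / (1 + α)) = (1 + α) ^ (3 * α / (1 + α)) := by
      rw [← Real.rpow_natCast (1 + α) 3, ← Real.rpow_mul h1α.le]
      norm_num; ring_nf
    have hexp : 1 / (1 + α) + 3 * α / (1 + α) = (1 + 3 * α) / (1 + α) := by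
      field_simp
    rw [hb2, hc3, show (1 + α) ^ (3 * α / (1 + α)) / α ^ (α / (1 + α)) =
        (1 + α) ^ (3 * α / (1 + α)) * α ^ (-(α / (1 + α))) from by
          rw [Real.rpow_neg hα0.le, div_eq_mul_inv],
      ← mul_assoc, ← mul_assoc, ← Real.rpow_add h1α, hexp]
  rw [harith, hgeom] at hgm
  -- conclude
  have hpos : (0:ℝ) < b ^ (-(2 * α / (1 + α))) := Real.rpow_pos_of_pos hb _
  have hcancel : b ^ (2 * α / (1 + α)) * b ^ (-(2 * α / (1 + α))) = 1 := by
    rw [← Real.rpow_add hb]; simp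
  calc m = m * (b ^ (2 * α / (1 + α)) * b ^ (-(2 * α / (1 + α)))) := by rw [hcancel, mul_one]
    _ = m * b ^ (2 * α / (1 + α)) * b ^ (-(2 * α / (1 + α))) := by ring
    _ ≤ (1 + b ^ 2 * (1 + α) ^ 2) * b ^ (-(2 * α / (1 + α))) :=
        mul_le_mul_of_nonneg_right hgm hpos.le
end

section
/- Let α ∈ [0,1) and k ∈ ℝ. For every continuously differentiable function g : ℝ → ℂ with compact support contained in (0,∞), one has the quadratic-form lower bound ∫₀^∞ ( |g'(x)|² + ( k²·x^{2α} + α(2+α)/(4x²) )·|g(x)|² ) dx ≥ (1+α)·((2+α)/4)^{α/(1+α)}·|k|^{2/(1+α)} · ∫₀^∞ |g(x)|² dx. (This is the lower semi-bound of the minimal fibre operator A_α(k) = −d²/dx² + k²|x|^{2α} + α(2+α)/(4x²).) -/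
open MeasureTheory Real

private lemma comp_lin (α L1 L2 L3 L4 L5 L6 : ℝ) (hα : 0 < α) (h1 : (0:ℝ) < 1 + α)
    (hlog : L6 + L4 ≤ 2 * L1) :
    L1 + (α / (1 + α)) * (L6 - L5) + (2 / (1 + α)) * L2
      ≤ (1 / (1 + α)) * (L1 + 2 * L2 + 2 * α * L3)
        + (α / (1 + α)) * (3 * L1 - L4 - L5 - 2 * L3) := by
  have key : (1 / (1 + α)) * (L1 + 2 * L2 + 2 * α * L3)
        + (α / (1 + α)) * (3 * L1 - L4 - L5 - 2 * L3)
        - (L1 + (α / (1 + α)) * (L6 - L5) + (2 / (1 + α)) * L2)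
      = (α / (1 + α)) * (2 * L1 - L6 - L4) := by
    field_simp
    ring
  nlinarith [mul_nonneg (div_nonneg hα.le h1.le) (by linarith : (0:ℝ) ≤ 2 * L1 - L6 - L4)]

private lemma ptwise (α k x : ℝ) (hα0 : 0 ≤ α) (hα1 : α < 1) (hx : 0 < x) :
    (1 + α) * ((2 + α) / 4) ^ (α / (1 + α)) * |k| ^ (2 / (1 + α))
      ≤ k ^ 2 * x ^ (2 * α) + (1 + α) ^ 2 / (4 * x ^ 2) := by
  have h1 : (0:ℝ) < 1 + α := by linarith
  have hx2 : (0:ℝ) < 4 * x ^ 2 := by positivity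
  have hxr : (0:ℝ) < x ^ (2 * α) := Real.rpow_pos_of_pos hx _
  rcases eq_or_lt_of_le hα0 with h0 | h0
  · -- α = 0
    rw [← h0]
    norm_num
    positivity
  rcases eq_or_ne k 0 with hk | hk
  · subst hk
    rw [abs_zero, Real.zero_rpow (ne_of_gt (div_pos two_pos h1)), mul_zero]
    positivity
  have hkabs : (0:ℝ) < |k| := abs_pos.mpr hk
  have hw : 1 / (1 + α) + α / (1 + α) = 1 := by field_simp
  set p₁ : ℝ := (1 + α) * (k ^ 2 * x ^ (2 * α)) with hp₁
  set p₂ : ℝ := ((1 + α) / α) * ((1 + α) ^ 2 / (4 * x ^ 2)) with hp₂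
  have hp₁0 : 0 < p₁ := by positivity
  have hp₂0 : 0 < p₂ := by positivity
  have geo := Real.geom_mean_le_arith_mean2_weighted
    (by positivity : (0:ℝ) ≤ 1/(1+α)) (by positivity : (0:ℝ) ≤ α/(1+α)) hp₁0.le hp₂0.le hw
  have harith : 1/(1+α) * p₁ + α/(1+α) * p₂ = k ^ 2 * x ^ (2 * α) + (1 + α) ^ 2 / (4 * x ^ 2) := by
    rw [hp₁, hp₂]
    field_simp
  rw [harith] at geo
  refine le_trans ?_ geo
  have hCpos : 0 < (1 + α) * ((2 + α) / 4) ^ (α/(1+α)) * |k| ^ (2/(1+α)) := by positivity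
  have hXpos : 0 < p₁ ^ (1/(1+α)) * p₂ ^ (α/(1+α)) := by positivity
  rw [← Real.log_le_log_iff hCpos hXpos]
  have hk2 : k ^ 2 = |k| ^ 2 := (sq_abs k).symm
  have h4 : (0:ℝ) < 4 := by norm_num
  have hL : Real.log ((1 + α) * ((2 + α) / 4) ^ (α/(1+α)) * |k| ^ (2/(1+α)))
      = Real.log (1+α) + (α/(1+α)) * (Real.log (2+α) - Real.log 4)
        + (2/(1+α)) * Real.log |k| := by
    rw [Real.log_mul (by positivity) (by positivity),
      Real.log_mul (by positivity) (by positivity),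
      Real.log_rpow (by positivity), Real.log_rpow hkabs,
      Real.log_div (by positivity) (by positivity)]
  have hR : Real.log (p₁ ^ (1/(1+α)) * p₂ ^ (α/(1+α)))
      = (1/(1+α)) * (Real.log (1+α) + 2 * Real.log |k| + 2 * α * Real.log x)
        + (α/(1+α)) * (3 * Real.log (1+α) - Real.log α - Real.log 4 - 2 * Real.log x) := by
    rw [Real.log_mul (by positivity) (by positivity), Real.log_rpow hp₁0, Real.log_rpow hp₂0,
      hp₁, hp₂, Real.log_mul (by positivity) (by positivity),
      Real.log_mul (by positivity) (by positivity), hk2, Real.log_pow,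
      Real.log_rpow hx,
      Real.log_mul (by positivity) (by positivity),
      Real.log_div (by positivity) (by positivity),
      Real.log_div (by positivity) (by positivity),
      Real.log_mul (by positivity) (by positivity),
      Real.log_pow, Real.log_pow]
    push_cast
    ring
  rw [hL, hR]
  have hlog : Real.log (2 + α) + Real.log α ≤ 2 * Real.log (1 + α) := by
    have e1 : Real.log ((1+α)^2) = 2 * Real.log (1+α) := by
      rw [Real.log_pow]; push_cast; ring
    rw [← Real.log_mul (by positivity) (by positivity), ← e1]
    exact Real.log_le_log (by positivity) (by nlinarith)
  exact comp_lin α _ _ _ _ _ _ h0 h1 hlog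

private lemma norm_sq_complex (z : ℂ) : ‖z‖ ^ 2 = z.re ^ 2 + z.im ^ 2 := by
  rw [Complex.sq_norm, Complex.normSq_apply]; ring

/-- lower semi-bound for the quadratic form of the minimal fibre
operator `A_α(k) = −d²/dx² + k² x^{2α} + α(2+α)/(4x²)` on smooth functions
compactly supported in `(0,∞)`. -/
theorem fibre_operator_lower_bound (α k : ℝ) (hα : α ∈ Set.Ico (0 : ℝ) 1)
    (g : ℝ → ℂ) (hg : ContDiff ℝ 1 g) (hsupp : HasCompactSupport g)
    (hsupp' : tsupport g ⊆ Set.Ioi 0) :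
    (∫ x in Set.Ioi (0 : ℝ),
        (‖deriv g x‖ ^ 2
          + (k ^ 2 * x ^ (2 * α) + α * (2 + α) / (4 * x ^ 2)) * ‖g x‖ ^ 2))
      ≥ (1 + α) * ((2 + α) / 4) ^ (α / (1 + α)) * |k| ^ (2 / (1 + α))
        * ∫ x in Set.Ioi (0 : ℝ), ‖g x‖ ^ 2 := by
  obtain ⟨hα0, hα1⟩ := hα
  set C : ℝ := (1 + α) * ((2 + α) / 4) ^ (α / (1 + α)) * |k| ^ (2 / (1 + α)) with hCdef
  -- the compact support sits in an interval [a, b] ⊆ (0, ∞)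
  set K : Set ℝ := tsupport g ∪ {1} with hKdef
  have hKc : IsCompact K := hsupp.union isCompact_singleton
  have hKne : K.Nonempty := ⟨1, Or.inr rfl⟩
  have hKpos : K ⊆ Set.Ioi 0 := by
    intro y hy
    rcases hy with hy | hy
    · exact hsupp' hy
    · simp only [Set.mem_singleton_iff] at hy; simp [hy]
  set a : ℝ := sInf K with hadef
  set b : ℝ := sSup K with hbdef
  have haK : a ∈ K := hKc.sInf_mem hKne
  have hbK : b ∈ K := hKc.sSup_mem hKne
  have ha0 : 0 < a := hKpos haK
  have hab : a ≤ b := csInf_le_csSup hKne hKc.bddBelow hKc.bddAbove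
  have hsuppab : tsupport g ⊆ Set.Icc a b := fun y hy =>
    ⟨csInf_le hKc.bddBelow (Or.inl hy), le_csSup hKc.bddAbove (Or.inl hy)⟩
  set a' : ℝ := a / 2 with ha'def
  set b' : ℝ := b + 1 with hb'def
  have ha'0 : 0 < a' := by positivity
  have hab' : a' ≤ b' := by simp only [ha'def, hb'def]; linarith
  have hsub : Set.Icc a b ⊆ Set.Ioc a' b' := fun y hy =>
    ⟨by simp only [ha'def]; linarith [hy.1], by simp only [hb'def]; linarith [hy.2]⟩
  -- vanishing outside [a, b]
  have hg0 : ∀ x : ℝ, x ∉ Set.Icc a b → g x = 0 ∧ deriv g x = 0 := by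
    intro x hx
    have hxs : x ∉ tsupport g := fun h => hx (hsuppab h)
    refine ⟨image_eq_zero_of_notMem_tsupport hxs, ?_⟩
    by_contra h
    exact hxs (support_deriv_subset h)
  -- abbreviations
  set f : ℝ → ℝ := fun x => ‖deriv g x‖ ^ 2
      + (k ^ 2 * x ^ (2 * α) + α * (2 + α) / (4 * x ^ 2)) * ‖g x‖ ^ 2 with hfdef
  set F : ℝ → ℝ := fun x => ‖g x‖ ^ 2 with hFdef
  have hf0 : ∀ x : ℝ, x ∉ Set.Icc a b → f x = 0 := by
    intro x hx
    obtain ⟨h1, h2⟩ := hg0 x hx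
    simp [hfdef, h1, h2]
  have hF0 : ∀ x : ℝ, x ∉ Set.Icc a b → F x = 0 := by
    intro x hx
    simp [hFdef, (hg0 x hx).1]
  -- convert the set integrals to interval integrals
  have hIoi : ∀ u : ℝ → ℝ, (∀ x : ℝ, x ∉ Set.Icc a b → u x = 0) →
      (∫ x in Set.Ioi (0:ℝ), u x) = ∫ x in a'..b', u x := by
    intro u hu
    have h1 : (∫ x in Set.Ioi (0:ℝ), u x) = ∫ x, u x := by
      apply setIntegral_eq_integral_of_forall_compl_eq_zero
      intro x hx
      apply hu
      intro hmem
      exact hx (lt_of_lt_of_le ha0 hmem.1)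
    have h2 : (∫ x in Set.Ioc a' b', u x) = ∫ x, u x := by
      apply setIntegral_eq_integral_of_forall_compl_eq_zero
      intro x hx
      exact hu x (fun hmem => hx (hsub hmem))
    rw [h1, ← h2, intervalIntegral.integral_of_le hab']
  -- derivative of F
  have hgd : ∀ x : ℝ, HasDerivAt g (deriv g x) x :=
    fun x => (hg.differentiable one_ne_zero x).hasDerivAt
  set F' : ℝ → ℝ := fun x =>
    2 * ((g x).re * (deriv g x).re + (g x).im * (deriv g x).im) with hF'def
  have hFd : ∀ x : ℝ, HasDerivAt F (F' x) x := by
    intro x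
    have hre : HasDerivAt (fun y => (g y).re) ((deriv g x).re) x :=
      (Complex.reCLM.hasFDerivAt.comp_hasDerivAt x (hgd x))
    have him : HasDerivAt (fun y => (g y).im) ((deriv g x).im) x :=
      (Complex.imCLM.hasFDerivAt.comp_hasDerivAt x (hgd x))
    have : HasDerivAt (fun y => ((g y).re) ^ 2 + ((g y).im) ^ 2)
        (2 * (g x).re ^ 1 * (deriv g x).re + 2 * (g x).im ^ 1 * (deriv g x).im) x := by
      exact (hre.pow 2).add (him.pow 2)
    have heq : F = fun y => ((g y).re) ^ 2 + ((g y).im) ^ 2 := by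
      rw [hFdef]; funext y; exact norm_sq_complex (g y)
    rw [heq]
    convert this using 1
    simp [hF'def]; ring
  -- continuity facts
  have hgc : Continuous g := hg.continuous
  have hgc' : Continuous (deriv g) := hg.continuous_deriv le_rfl
  have hFc : Continuous F := by
    simp only [hFdef]; exact (hgc.norm.pow 2)
  have hF'c : Continuous F' := by
    simp only [hF'def]
    exact continuous_const.mul
      (((Complex.continuous_re.comp hgc).mul (Complex.continuous_re.comp hgc')).add
        ((Complex.continuous_im.comp hgc).mul (Complex.continuous_im.comp hgc')))
  have hIcc : Set.uIcc a' b' = Set.Icc a' b' := Set.uIcc_of_le hab'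
  have hpos : ∀ x ∈ Set.Icc a' b', 0 < x := fun x hx => lt_of_lt_of_le ha'0 hx.1
  -- FTC for F x / x
  have hH : ∀ x ∈ Set.uIcc a' b',
      HasDerivAt (fun y => F y / y) (F' x / x - F x / x ^ 2) x := by
    intro x hx
    rw [hIcc] at hx
    have hx0 : x ≠ 0 := (hpos x hx).ne'
    have := (hFd x).div (hasDerivAt_id x) hx0
    refine this.congr_deriv ?_
    simp only [id, mul_one]
    rw [sub_div, pow_two, mul_div_mul_right _ _ hx0]
  have hcont1 : ContinuousOn (fun x => F' x / x - F x / x ^ 2) (Set.uIcc a' b') := by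
    rw [hIcc]
    apply ContinuousOn.sub
    · exact (hF'c.continuousOn).div continuousOn_id (fun x hx => (hpos x hx).ne')
    · exact (hFc.continuousOn).div (continuousOn_pow 2) (fun x hx => pow_ne_zero 2 (hpos x hx).ne')
  have hFTC : (∫ x in a'..b', (F' x / x - F x / x ^ 2)) = 0 := by
    rw [intervalIntegral.integral_eq_sub_of_hasDerivAt hH
      (hcont1.intervalIntegrable)]
    have hb'n : b' ∉ Set.Icc a b := fun h => by
      simp only [hb'def] at h; linarith [h.2]
    have ha'n : a' ∉ Set.Icc a b := fun h => by
      simp only [ha'def] at h; linarith [h.1]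
    rw [hF0 b' hb'n, hF0 a' ha'n]
    simp
  -- continuity of f on the interval
  have hcontf : ContinuousOn f (Set.uIcc a' b') := by
    rw [hIcc]
    simp only [hfdef]
    apply ContinuousOn.add
    · exact (hgc'.norm.pow 2).continuousOn
    · apply ContinuousOn.mul
      · apply ContinuousOn.add
        · apply ContinuousOn.mul continuousOn_const
          intro x hx
          exact (Real.continuousAt_rpow_const x (2 * α)
            (Or.inl (hpos x hx).ne')).continuousWithinAt
        · exact continuousOn_const.div
            (continuousOn_const.mul (continuousOn_pow 2))
            (fun x hx => by have h := hpos x hx; positivity)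
      · exact (hgc.norm.pow 2).continuousOn
  have hcontF : ContinuousOn F (Set.uIcc a' b') := hFc.continuousOn
  -- pointwise inequality
  have hptw : ∀ x ∈ Set.Icc a' b',
      (1/2) * (F' x / x - F x / x ^ 2) ≤ f x - C * F x := by
    intro x hx
    have hx0 : 0 < x := hpos x hx
    have hx0' : x ≠ 0 := hx0.ne'
    have hkey := ptwise α k x hα0 hα1 hx0
    have hV : k ^ 2 * x ^ (2*α) + (1 + α) ^ 2 / (4 * x ^ 2)
        = (k ^ 2 * x ^ (2*α) + α * (2 + α) / (4 * x ^ 2)) + 1 / (4 * x ^ 2) := by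
      field_simp
      ring
    rw [hV] at hkey
    simp only [hfdef, hFdef, hF'def, norm_sq_complex]
    set P := (g x).re; set Q := (g x).im
    set A := (deriv g x).re; set B := (deriv g x).im
    set V : ℝ := k ^ 2 * x ^ (2*α) + α * (2 + α) / (4 * x ^ 2) with hVdef
    have hsq : (0:ℝ) ≤ (A - P / (2*x)) ^ 2 + (B - Q / (2*x)) ^ 2 := by positivity
    have hPQ : (0:ℝ) ≤ P ^ 2 + Q ^ 2 := by positivity
    have hprod := mul_nonneg (sub_nonneg.mpr hkey) hPQ
    have hx2 : x ^ 2 > 0 := by positivity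
    have e1 : (A - P / (2*x)) ^ 2 = A ^ 2 - A * P / x + P ^ 2 / (4 * x ^ 2) := by
      field_simp; ring
    have e2 : (B - Q / (2*x)) ^ 2 = B ^ 2 - B * Q / x + Q ^ 2 / (4 * x ^ 2) := by
      field_simp; ring
    rw [e1, e2] at hsq
    have e3 : (V + 1 / (4 * x ^ 2) - C) * (P ^ 2 + Q ^ 2)
        = V * (P ^ 2 + Q ^ 2) + (P ^ 2 + Q ^ 2) / (4 * x ^ 2) - C * (P ^ 2 + Q ^ 2) := by
      field_simp
    rw [e3] at hprod
    have egoal : (1/2) * (2 * (P * A + Q * B) / x - (P ^ 2 + Q ^ 2) / x ^ 2)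
        = (P * A + Q * B) / x - (P ^ 2 + Q ^ 2) / (2 * x ^ 2) := by
      field_simp
    rw [egoal]
    have e4 : (P ^ 2 + Q ^ 2) / (2 * x ^ 2)
        = (P ^ 2 + Q ^ 2) / (4 * x ^ 2) + (P ^ 2 + Q ^ 2) / (4 * x ^ 2) := by
      field_simp; ring
    have e5 : (P * A + Q * B) / x = A * P / x + B * Q / x := by ring
    have e6 : (P ^ 2 + Q ^ 2) / (4 * x ^ 2) = P ^ 2 / (4 * x ^ 2) + Q ^ 2 / (4 * x ^ 2) := by
      ring
    linarith [hsq, hprod]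
  -- put everything together over the interval
  have hintf : IntervalIntegrable f volume a' b' := hcontf.intervalIntegrable
  have hintF : IntervalIntegrable F volume a' b' := hcontF.intervalIntegrable
  have hintCF : IntervalIntegrable (fun x => f x - C * F x) volume a' b' :=
    hintf.sub (hintF.const_mul C)
  have hint1 : IntervalIntegrable (fun x => (1/2) * (F' x / x - F x / x ^ 2)) volume a' b' :=
    (hcont1.intervalIntegrable).const_mul _
  have hmono : (∫ x in a'..b', (1/2) * (F' x / x - F x / x ^ 2))
      ≤ ∫ x in a'..b', (f x - C * F x) := by
    apply intervalIntegral.integral_mono_on hab' hint1 hintCF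
    exact hptw
  have hleft : (∫ x in a'..b', (1/2) * (F' x / x - F x / x ^ 2)) = 0 := by
    rw [intervalIntegral.integral_const_mul, hFTC, mul_zero]
  have hright : (∫ x in a'..b', (f x - C * F x))
      = (∫ x in a'..b', f x) - C * ∫ x in a'..b', F x := by
    rw [intervalIntegral.integral_sub hintf (hintF.const_mul C),
      intervalIntegral.integral_const_mul]
  rw [hleft, hright] at hmono
  have hfI := hIoi f hf0
  have hFI := hIoi F hF0
  rw [ge_iff_le]
  calc C * ∫ x in Set.Ioi (0:ℝ), F x = C * ∫ x in a'..b', F x := by rw [hFI]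
    _ ≤ ∫ x in a'..b', f x := by linarith
    _ = ∫ x in Set.Ioi (0:ℝ), f x := hfI.symm
end

section
/- Let ι be a type, let (H i)_{i∈ι} be complex Hilbert spaces, and for each i let S i : H i → H i be a bounded self-adjoint operator, with a uniform bound: there exists C ≥ 0 such that ‖S i‖ ≤ C for all i. Let T be a bounded linear operator on the ℓ²-direct sum ⊕_{i∈ι} H i (the space lp H 2) acting fibrewise, i.e. (T ψ) i = S i (ψ i) for every ψ and every i. Then the spectrum of T equals the closure of the union of the spectra of the fibre operators: σ(T) = closure( ⋃_{i∈ι} σ(S i) ). -/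
open scoped ENNReal

private lemma memℓp_fibred_aux {ι : Type*} {H : ι → Type*}
    [∀ i, NormedAddCommGroup (H i)] [∀ i, InnerProductSpace ℂ (H i)]
    (B : ∀ i, H i →L[ℂ] H i) (M : ℝ) (hM : 0 ≤ M) (hB : ∀ i, ‖B i‖ ≤ M)
    (ψ : lp H 2) : Memℓp (fun i => B i ((ψ : ∀ i, H i) i)) 2 := by
  have h2 : (0:ℝ) < (2 : ℝ≥0∞).toReal := by norm_num
  apply memℓp_gen
  have hs : Summable fun i => M ^ (2:ℝ≥0∞).toReal * ‖(ψ : ∀ i, H i) i‖ ^ (2:ℝ≥0∞).toReal :=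
    ((lp.memℓp ψ).summable h2).mul_left _
  refine Summable.of_nonneg_of_le (fun i => Real.rpow_nonneg (norm_nonneg _) _)
    (fun i => ?_) hs
  calc ‖B i ((ψ : ∀ i, H i) i)‖ ^ (2:ℝ≥0∞).toReal
      ≤ (M * ‖(ψ : ∀ i, H i) i‖) ^ (2:ℝ≥0∞).toReal := by
        apply Real.rpow_le_rpow (norm_nonneg _) _ h2.le
        exact ((B i).le_opNorm _).trans
          (mul_le_mul_of_nonneg_right (hB i) (norm_nonneg _))
    _ = M ^ (2:ℝ≥0∞).toReal * ‖(ψ : ∀ i, H i) i‖ ^ (2:ℝ≥0∞).toReal :=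
        Real.mul_rpow hM (norm_nonneg _)

set_option maxHeartbeats 2000000 in
/-- the spectrum of a fibred bounded self-adjoint operator on an
`ℓ²`-direct sum of Hilbert spaces is the closure of the union of the spectra of
the fibre operators. -/
theorem spectrum_of_fibred_operator {ι : Type*} (H : ι → Type*)
    [∀ i, NormedAddCommGroup (H i)] [∀ i, InnerProductSpace ℂ (H i)]
    [∀ i, CompleteSpace (H i)]
    (S : ∀ i, H i →L[ℂ] H i) (hsa : ∀ i, IsSelfAdjoint (S i))
    (C : ℝ) (hC : 0 ≤ C) (hbd : ∀ i, ‖S i‖ ≤ C)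
    (T : lp H 2 →L[ℂ] lp H 2)
    (hT : ∀ (ψ : lp H 2) (i : ι), (T ψ : ∀ i, H i) i = S i ((ψ : ∀ i, H i) i)) :
    spectrum ℂ T = closure (⋃ i, spectrum ℂ (S i)) := by
  classical
  -- componentwise action of `algebraMap z - T`
  have hcomp : ∀ (z : ℂ) (ψ : lp H 2) (i : ι),
      ((algebraMap ℂ (lp H 2 →L[ℂ] lp H 2) z - T) ψ : ∀ i, H i) i
        = (algebraMap ℂ (H i →L[ℂ] H i) z - S i) ((ψ : ∀ i, H i) i) := by
    intro z ψ i
    simp only [ContinuousLinearMap.sub_apply, Algebra.algebraMap_eq_smul_one,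
      ContinuousLinearMap.smul_apply, ContinuousLinearMap.one_apply]
    rw [lp.coeFn_sub, Pi.sub_apply, lp.coeFn_smul, Pi.smul_apply, hT]
  refine Set.Subset.antisymm ?_ ?_
  · -- σ(T) ⊆ closure(⋃ σ(S i))
    intro z hz
    by_contra hzc
    rw [Metric.mem_closure_iff] at hzc
    push_neg at hzc
    obtain ⟨δ, hδ, hsep⟩ := hzc
    have hzi : ∀ i, z ∉ spectrum ℂ (S i) := by
      intro i hmem
      have := hsep z (Set.mem_iUnion.mpr ⟨i, hmem⟩)
      simp at this
      exact absurd this (not_le.mpr hδ)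
    have hu : ∀ i, IsUnit (algebraMap ℂ (H i →L[ℂ] H i) z - S i) :=
      fun i => spectrum.notMem_iff.mp (hzi i)
    set u : ∀ i, (H i →L[ℂ] H i)ˣ := fun i => (hu i).unit with hu_def
    have hval : ∀ i, (↑(u i) : H i →L[ℂ] H i) = algebraMap ℂ (H i →L[ℂ] H i) z - S i :=
      fun i => (hu i).unit_spec
    -- star-normality of `algebraMap z - S i` and its inverse
    have hnormal : ∀ i, IsStarNormal (↑(u i)⁻¹ : H i →L[ℂ] H i) := by
      intro i
      have hA : IsStarNormal (↑(u i) : H i →L[ℂ] H i) := by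
        constructor
        rw [hval i, star_sub, ← algebraMap_star_comm, (hsa i).star_eq]
        exact Commute.sub_left (Algebra.commute_algebraMap_left _ _)
          (Commute.sub_right ((Algebra.commute_algebraMap_left z (S i)).symm)
            (Commute.refl (S i)))
      constructor
      have h := hA.star_comm_self
      rw [← Units.coe_star] at h
      rw [← Units.coe_star_inv]
      exact (h.units_inv_right).units_inv_left
    -- uniform norm bound on the inverses
    have hnorm : ∀ i, ‖(↑(u i)⁻¹ : H i →L[ℂ] H i)‖ ≤ δ⁻¹ := by
      intro i
      haveI := hnormal i
      have hb := IsStarNormal.spectralRadius_eq_nnnorm (↑(u i)⁻¹ : H i →L[ℂ] H i)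
      have hsup : spectralRadius ℂ (↑(u i)⁻¹ : H i →L[ℂ] H i) ≤ ENNReal.ofReal δ⁻¹ := by
        refine iSup₂_le fun k hk => ?_
        have hk0 : k ≠ 0 := by
          rintro rfl
          exact spectrum.zero_notMem ℂ ((u i)⁻¹).isUnit hk
        have hinv := (spectrum.inv_mem_iff (r := Units.mk0 k hk0) (a := (u i)⁻¹)).mp hk
        have hinv' : k⁻¹ ∈ spectrum ℂ (↑(u i) : H i →L[ℂ] H i) := by
          simpa using hinv
        rw [hval i, ← spectrum.singleton_sub_eq] at hinv'
        obtain ⟨w₁, hw₁, w₂, hw₂, hw⟩ := Set.mem_sub.mp hinv'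
        rw [Set.mem_singleton_iff] at hw₁
        rw [hw₁] at hw
        have hd : δ ≤ dist z w₂ := hsep w₂ (Set.mem_iUnion.mpr ⟨i, hw₂⟩)
        have hkval : ‖k‖⁻¹ = dist z w₂ := by
          rw [dist_eq_norm, hw, norm_inv]
        have hkle : ‖k‖ ≤ δ⁻¹ := by
          have h1 : δ ≤ ‖k‖⁻¹ := by rw [hkval]; exact hd
          calc ‖k‖ = (‖k‖⁻¹)⁻¹ := (inv_inv _).symm
            _ ≤ δ⁻¹ := by
              apply inv_anti₀ hδ h1
        calc (‖k‖₊ : ℝ≥0∞) = ENNReal.ofReal ‖k‖ := (ofReal_norm k).symm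
          _ ≤ ENNReal.ofReal δ⁻¹ := ENNReal.ofReal_le_ofReal hkle
      rw [hb, show ((‖(↑(u i)⁻¹ : H i →L[ℂ] H i)‖₊ : ℝ≥0∞)) = ENNReal.ofReal ‖(↑(u i)⁻¹ : H i →L[ℂ] H i)‖ from (ofReal_norm _).symm] at hsup
      exact (ENNReal.ofReal_le_ofReal_iff (by positivity)).mp hsup
    -- build the fibrewise inverse and deduce invertibility of `algebraMap z - T`
    have hmem : ∀ ψ : lp H 2,
        Memℓp (fun i => (↑(u i)⁻¹ : H i →L[ℂ] H i) ((ψ : ∀ i, H i) i)) 2 :=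
      fun ψ => memℓp_fibred_aux _ δ⁻¹ (inv_nonneg.mpr hδ.le) hnorm ψ
    have hleft : ∀ i (x : H i),
        (↑(u i)⁻¹ : H i →L[ℂ] H i) ((↑(u i) : H i →L[ℂ] H i) x) = x := by
      intro i x
      have h := ContinuousLinearMap.ext_iff.mp (u i).inv_mul x
      rwa [ContinuousLinearMap.mul_apply, ContinuousLinearMap.one_apply] at h
    have hright : ∀ i (x : H i),
        (↑(u i) : H i →L[ℂ] H i) ((↑(u i)⁻¹ : H i →L[ℂ] H i) x) = x := by
      intro i x
      have h := ContinuousLinearMap.ext_iff.mp (u i).mul_inv x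
      rwa [ContinuousLinearMap.mul_apply, ContinuousLinearMap.one_apply] at h
    have hbij : Function.Bijective (algebraMap ℂ (lp H 2 →L[ℂ] lp H 2) z - T) := by
      constructor
      · intro ψ φ h
        apply lp.ext
        funext i
        have h' := congrArg (fun χ : lp H 2 => (χ : ∀ i, H i) i) h
        simp only [hcomp] at h'
        rw [← hval i] at h'
        have := congrArg (fun x => (↑(u i)⁻¹ : H i →L[ℂ] H i) x) h'
        simpa [hleft] using this
      · intro φ
        refine ⟨⟨fun i => (↑(u i)⁻¹ : H i →L[ℂ] H i) ((φ : ∀ i, H i) i), hmem φ⟩, ?_⟩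
        apply lp.ext
        funext i
        rw [hcomp, ← hval i]
        exact hright i _
    exact (spectrum.notMem_iff.mpr
      (ContinuousLinearMap.isUnit_iff_bijective.mpr hbij)) hz
  · -- closure(⋃ σ(S i)) ⊆ σ(T)
    refine closure_minimal (Set.iUnion_subset fun i μ hμ => ?_) (spectrum.isClosed (𝕜 := ℂ) (A := lp H 2 →L[ℂ] lp H 2) T)
    by_contra hμT
    have hu : IsUnit (algebraMap ℂ (lp H 2 →L[ℂ] lp H 2) μ - T) :=
      spectrum.notMem_iff.mp hμT
    set A := algebraMap ℂ (lp H 2 →L[ℂ] lp H 2) μ - T with hA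
    have hAval : (↑hu.unit : lp H 2 →L[ℂ] lp H 2) = A := hu.unit_spec
    have hRA : ∀ w : lp H 2, (↑hu.unit⁻¹ : lp H 2 →L[ℂ] lp H 2) (A w) = w := by
      intro w
      have h := ContinuousLinearMap.ext_iff.mp hu.unit.inv_mul w
      rwa [ContinuousLinearMap.mul_apply, ContinuousLinearMap.one_apply, hAval] at h
    have hAinj : Function.Injective A := Function.LeftInverse.injective hRA
    have hAR : ∀ w : lp H 2, A ((↑hu.unit⁻¹ : lp H 2 →L[ℂ] lp H 2) w) = w := by
      intro w
      have h := ContinuousLinearMap.ext_iff.mp hu.unit.mul_inv w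
      rwa [ContinuousLinearMap.mul_apply, ContinuousLinearMap.one_apply, hAval] at h
    set J : H i → lp H 2 := fun x => lp.single 2 i x with hJ
    have hJ_self : ∀ x : H i, (J x : ∀ j, H j) i = x := fun x => lp.single_apply_self 2 i x
    have hJ_ne : ∀ (x : H i) (j : ι), j ≠ i → (J x : ∀ j, H j) j = 0 :=
      fun x j hj => lp.single_apply_ne 2 i x hj
    set Ai := algebraMap ℂ (H i →L[ℂ] H i) μ - S i with hAi
    -- A intertwines with Ai through J
    have hAJ : ∀ x : H i, A (J x) = J (Ai x) := by
      intro x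
      apply lp.ext
      funext j
      rw [hA, hcomp]
      by_cases hji : j = i
      · subst hji
        rw [hJ_self, hJ_self]
      · rw [hJ_ne x j hji, hJ_ne (Ai x) j hji, map_zero]
    have hJinj : Function.Injective J := by
      intro x y h
      have := congrArg (fun χ : lp H 2 => (χ : ∀ j, H j) i) h
      simpa [hJ_self] using this
    have hbij : Function.Bijective Ai := by
      constructor
      · intro x y h
        apply hJinj
        apply hAinj
        rw [hAJ, hAJ, h]
      · intro y
        set ψ := (↑hu.unit⁻¹ : lp H 2 →L[ℂ] lp H 2) (J y) with hψ
        have hAψ : A ψ = J y := hAR (J y)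
        -- ψ is supported at i
        have hsupp : ψ = J ((ψ : ∀ j, H j) i) := by
          have hker : A (ψ - J ((ψ : ∀ j, H j) i)) = 0 := by
            apply lp.ext
            funext j
            rw [hA, hcomp]
            by_cases hji : j = i
            · subst hji
              rw [lp.coeFn_sub, Pi.sub_apply, hJ_self, sub_self, map_zero]
              rfl
            · rw [lp.coeFn_sub, Pi.sub_apply, hJ_ne _ j hji, sub_zero, ← hcomp, ← hA,
                hAψ, hJ_ne y j hji]
              rfl
          have h0 : A (ψ - J ((ψ : ∀ j, H j) i)) = A 0 := by rw [hker, map_zero]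
          have := hAinj h0
          rwa [sub_eq_zero] at this
        refine ⟨(ψ : ∀ j, H j) i, ?_⟩
        have : (A ψ : ∀ j, H j) i = y := by rw [hAψ, hJ_self]
        rw [hA, hcomp, ← hAi] at this
        exact this
    exact spectrum.mem_iff.mp hμ (ContinuousLinearMap.isUnit_iff_bijective.mpr hbij)
end
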